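/- arXiv:1911.01301 — 6 statements merged into one kernel-verified Lean document; each statement's English description precedes it below -/
import Mathlib

section
/- For every integer n ≥ 1 there exist constants C(n,r) ∈ (0,∞) for r = 0,…,n, depending only on n and r, with C(n,0) = 1/(n!)² and C(n,n) = 1/n!, such that for every type α, every finite subset S of α and every symmetric kernel h : α^n → ℝ, the square of the U-statistic F of order n with kernel h satisfies F² = Σ_{r=0}^{n} C(n,r) · Σ_{(y_0,…,y_{n−1},z_0,…,z_{n−r−1}) ∈ S^{2n−r}_{≠}} h(y_0,…,y_{n−1}) · h(y_0,…,y_{r−1}, z_0,…,z_{n−r−1}). -/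
open Finset

/-- The finite set of `m`-tuples of pairwise distinct elements of `S`, i.e. injective
functions `Fin m → α` with all values in `S`. -/
noncomputable def distinctTuples {α : Type*} (S : Finset α) (m : ℕ) :
    Finset (Fin m → α) := by
  classical exact (Fintype.piFinset fun _ => S).filter Function.Injective

/-- Extension of an `m`-tuple to a function `ℕ → α`, using the default value `a₀`
beyond position `m − 1`. -/
noncomputable def extNat {α : Type*} (m : ℕ) (a₀ : α) (y : Fin m → α) : ℕ → α :=
  fun x => if h : x < m then y ⟨x, h⟩ else a₀

/-- The `m`-tuples of pairwise distinct elements of `S`, encoded as functions `ℕ → α`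
(equal to `a₀` from position `m` on), so that coordinates can be addressed by natural
numbers. -/
noncomputable def distinctSeqs {α : Type*} (S : Finset α) (m : ℕ) (a₀ : α) :
    Finset (ℕ → α) := by
  classical exact (distinctTuples S m).image (extNat m a₀)

/-- The `U`-statistic of order `n` over the finite set `S` with kernel `h`:
`F = (1/n!) · Σ_{(y_0,…,y_{n−1}) ∈ S^n_{≠}} h(y_0,…,y_{n−1})`. -/
noncomputable def Ustat {α : Type*} (S : Finset α) (n : ℕ)
    (h : (Fin n → α) → ℝ) : ℝ :=
  ((n.factorial : ℝ))⁻¹ * ∑ y ∈ distinctTuples S n, h y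

lemma mem_distinctTuples {α : Type*} {S : Finset α} {m : ℕ} {y : Fin m → α} :
    y ∈ distinctTuples S m ↔ (∀ i, y i ∈ S) ∧ Function.Injective y := by
  classical
  simp [distinctTuples, Fintype.mem_piFinset]

lemma card_distinctTuples {α : Type*} {Y : Finset α} {m : ℕ} (hY : Y.card = m) :
    (distinctTuples Y m).card = m.factorial := by
  classical
  have e : {y // y ∈ distinctTuples Y m} ≃ (Fin m ↪ {x // x ∈ Y}) :=
    { toFun := fun y => ⟨fun i => ⟨y.1 i, (mem_distinctTuples.1 y.2).1 i⟩,
        fun i j hij => (mem_distinctTuples.1 y.2).2 (congrArg Subtype.val hij)⟩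
      invFun := fun f => ⟨fun i => (f i : α), mem_distinctTuples.2
        ⟨fun i => (f i).2, fun i j hij => f.injective (Subtype.ext hij)⟩⟩
      left_inv := fun y => rfl
      right_inv := fun f => by ext i; rfl }
  have : (distinctTuples Y m).card = Fintype.card (Fin m ↪ {x // x ∈ Y}) := by
    rw [← Fintype.card_coe]; exact Fintype.card_congr e
  rw [this, Fintype.card_embedding_eq, Fintype.card_coe, Fintype.card_fin, hY,
    Nat.descFactorial_self]

lemma exists_perm_comp {α : Type*} {Y : Finset α} {m : ℕ} (hY : Y.card = m)
    {y y' : Fin m → α} (hy : y ∈ distinctTuples Y m) (hy' : y' ∈ distinctTuples Y m) :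
    ∃ σ : Equiv.Perm (Fin m), y' = y ∘ σ := by
  classical
  obtain ⟨hmem, hinj⟩ := mem_distinctTuples.1 hy
  obtain ⟨hmem', hinj'⟩ := mem_distinctTuples.1 hy'
  set f : Fin m → {x // x ∈ Y} := fun i => ⟨y i, hmem i⟩ with hf
  set f' : Fin m → {x // x ∈ Y} := fun i => ⟨y' i, hmem' i⟩ with hf'
  have hb : Function.Bijective f :=
    (Fintype.bijective_iff_injective_and_card f).2
      ⟨fun i j hij => hinj (congrArg Subtype.val hij), by simp [Fintype.card_coe, hY]⟩
  have hb' : Function.Bijective f' :=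
    (Fintype.bijective_iff_injective_and_card f').2
      ⟨fun i j hij => hinj' (congrArg Subtype.val hij), by simp [Fintype.card_coe, hY]⟩
  refine ⟨(Equiv.ofBijective f' hb').trans (Equiv.ofBijective f hb).symm, ?_⟩
  funext i
  have : (Equiv.ofBijective f hb) ((Equiv.ofBijective f hb).symm (f' i)) = f' i :=
    Equiv.apply_symm_apply _ _
  have h2 : f ((Equiv.ofBijective f hb).symm (f' i)) = f' i := this
  simpa [hf, hf', Subtype.ext_iff] using (congrArg Subtype.val h2).symm

noncomputable def symFn {α : Type*} (n : ℕ) (h : (Fin n → α) → ℝ) (Y : Finset α) : ℝ :=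
  ((n.factorial : ℝ))⁻¹ * ∑ y ∈ distinctTuples Y n, h y

lemma symFn_eq {α : Type*} {n : ℕ} {h : (Fin n → α) → ℝ}
    (hsym : ∀ (σ : Equiv.Perm (Fin n)) (y : Fin n → α), h (y ∘ σ) = h y)
    {Y : Finset α} (hY : Y.card = n) {y : Fin n → α} (hy : y ∈ distinctTuples Y n) :
    symFn n h Y = h y := by
  classical
  have hconst : ∀ y' ∈ distinctTuples Y n, h y' = h y := by
    intro y' hy'
    obtain ⟨σ, hσ⟩ := exists_perm_comp hY hy hy'
    rw [hσ, hsym]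
  rw [symFn, Finset.sum_congr rfl hconst, Finset.sum_const, card_distinctTuples hY,
    nsmul_eq_mul, ← mul_assoc, inv_mul_cancel₀ (by exact_mod_cast n.factorial_ne_zero),
    one_mul]

lemma filter_image_eq {α : Type*} [DecidableEq α] {S Y : Finset α} {n : ℕ}
    (hYS : Y ⊆ S) (hY : Y.card = n) :
    (distinctTuples S n).filter (fun y => Finset.image y Finset.univ = Y)
      = distinctTuples Y n := by
  classical
  ext y
  simp only [Finset.mem_filter, mem_distinctTuples]
  constructor
  · rintro ⟨⟨hmem, hinj⟩, him⟩
    exact ⟨fun i => him ▸ Finset.mem_image_of_mem y (Finset.mem_univ i), hinj⟩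
  · rintro ⟨hmem, hinj⟩
    refine ⟨⟨fun i => hYS (hmem i), hinj⟩, ?_⟩
    apply Finset.eq_of_subset_of_card_le
    · intro x hx
      obtain ⟨i, _, rfl⟩ := Finset.mem_image.1 hx
      exact hmem i
    · rw [Finset.card_image_of_injective _ hinj, Finset.card_univ, Fintype.card_fin, hY]

lemma sum_dT_partition {α : Type*} (S : Finset α) (n : ℕ) (f : (Fin n → α) → ℝ) :
    ∑ y ∈ distinctTuples S n, f y
      = ∑ Y ∈ S.powersetCard n, ∑ y ∈ distinctTuples Y n, f y := by
  classical
  have hmaps : ∀ y ∈ distinctTuples S n,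
      Finset.image y Finset.univ ∈ S.powersetCard n := by
    intro y hy
    obtain ⟨hmem, hinj⟩ := mem_distinctTuples.1 hy
    rw [Finset.mem_powersetCard]
    constructor
    · intro x hx
      obtain ⟨i, _, rfl⟩ := Finset.mem_image.1 hx
      exact hmem i
    · rw [Finset.card_image_of_injective _ hinj, Finset.card_univ, Fintype.card_fin]
  rw [← Finset.sum_fiberwise_of_maps_to hmaps f]
  refine Finset.sum_congr rfl fun Y hY => ?_
  rw [Finset.mem_powersetCard] at hY
  rw [filter_image_eq hY.1 hY.2]

noncomputable def Ustat' {α : Type*} (S : Finset α) (n : ℕ)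
    (h : (Fin n → α) → ℝ) : ℝ :=
  ((n.factorial : ℝ))⁻¹ * ∑ y ∈ distinctTuples S n, h y

lemma Ustat'_eq {α : Type*} (S : Finset α) (n : ℕ) (h : (Fin n → α) → ℝ) :
    Ustat' S n h = ∑ Y ∈ S.powersetCard n, symFn n h Y := by
  classical
  rw [Ustat', sum_dT_partition, Finset.mul_sum]
  rfl

def emb1 {n r : ℕ} (hr : r ≤ n) : Fin n → Fin (2 * n - r) :=
  fun i => ⟨i, by have := i.isLt; omega⟩

def emb2 {n r : ℕ} (hr : r ≤ n) : Fin n → Fin (2 * n - r) :=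
  fun i => if h : (i : ℕ) < r then ⟨i, by have := i.isLt; omega⟩
           else ⟨n + ((i : ℕ) - r), by have := i.isLt; omega⟩

lemma emb1_injective {n r : ℕ} (hr : r ≤ n) : Function.Injective (emb1 hr) := by
  intro i j hij
  apply Fin.ext
  simpa [emb1, Fin.ext_iff] using hij

lemma emb2_injective {n r : ℕ} (hr : r ≤ n) : Function.Injective (emb2 hr) := by
  intro i j hij
  have hv := congrArg Fin.val hij
  have hi := i.isLt; have hj := j.isLt
  simp only [emb2, apply_dite Fin.val] at hv
  split_ifs at hv <;> (apply Fin.ext; omega)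

lemma extNat_injective {α : Type*} {m : ℕ} (a₀ : α) :
    Function.Injective (extNat m a₀) := by
  intro y y' hyy
  funext i
  have := congrFun hyy (i : ℕ)
  simpa [extNat, i.isLt] using this

lemma seq_sum_eq {α : Type*} (S : Finset α) (a₀ : α) {n r : ℕ} (hr : r ≤ n)
    (h : (Fin n → α) → ℝ) :
    ∑ v ∈ distinctSeqs S (2 * n - r) a₀,
        h (fun i => v (i : ℕ)) *
        h (fun i => if (i : ℕ) < r then v (i : ℕ) else v (n + ((i : ℕ) - r)))
      = ∑ w ∈ distinctTuples S (2 * n - r),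
          h (w ∘ emb1 hr) * h (w ∘ emb2 hr) := by
  classical
  rw [distinctSeqs, Finset.sum_image (fun x _ y _ hxy => extNat_injective a₀ hxy)]
  refine Finset.sum_congr rfl fun w hw => ?_
  congr 1
  · congr 1; funext i
    have hi : (i : ℕ) < 2 * n - r := by have := i.isLt; omega
    simp [extNat, emb1, hi]
  · congr 1; funext i
    by_cases hir : (i : ℕ) < r
    · have hi : (i : ℕ) < 2 * n - r := by have := i.isLt; omega
      simp [extNat, emb2, hir, hi]
    · have hi : n + ((i : ℕ) - r) < 2 * n - r := by have := i.isLt; omega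
      simp [extNat, emb2, hir, hi]

lemma comp_mem_image {α : Type*} [DecidableEq α] {M n : ℕ} {w : Fin M → α}
    (hwi : Function.Injective w) {e : Fin n → Fin M} (he : Function.Injective e) :
    w ∘ e ∈ distinctTuples (Finset.image (w ∘ e) Finset.univ) n :=
  mem_distinctTuples.2 ⟨fun i => Finset.mem_image_of_mem _ (Finset.mem_univ i),
    hwi.comp he⟩

lemma inter_card_eq {α : Type*} [DecidableEq α] {S : Finset α} {n r : ℕ} (hr : r ≤ n)
    {w : Fin (2 * n - r) → α} (hw : w ∈ distinctTuples S (2 * n - r)) :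
    ((Finset.image (w ∘ emb1 hr) Finset.univ) ∩
      (Finset.image (w ∘ emb2 hr) Finset.univ)).card = r := by
  have hinj := (mem_distinctTuples.1 hw).2
  have key : (Finset.image (w ∘ emb1 hr) Finset.univ) ∩
      (Finset.image (w ∘ emb2 hr) Finset.univ)
      = Finset.image (fun k : Fin r => w ⟨(k : ℕ), by have := k.isLt; omega⟩)
          Finset.univ := by
    ext x
    simp only [Finset.mem_inter, Finset.mem_image, Finset.mem_univ, true_and,
      Function.comp]
    constructor
    · rintro ⟨⟨i, hi⟩, ⟨j, hj⟩⟩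
      have hij : emb1 hr i = emb2 hr j := hinj (hi.trans hj.symm)
      have hv := congrArg Fin.val hij
      by_cases hjr : (j : ℕ) < r
      · refine ⟨⟨(j : ℕ), hjr⟩, ?_⟩
        rw [← hj]
        congr 1
        simp only [emb2, dif_pos hjr]
      · exfalso
        simp only [emb1, emb2, dif_neg hjr] at hv
        have := i.isLt
        omega
    · rintro ⟨k, hk⟩
      have hkr := k.isLt
      refine ⟨⟨⟨(k : ℕ), by omega⟩, ?_⟩, ⟨⟨(k : ℕ), by omega⟩, ?_⟩⟩
      · rw [← hk]; rfl
      · rw [← hk]; congr 1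
        simp only [emb2]
        rw [dif_pos (by simpa using hkr)]
  rw [key, Finset.card_image_of_injective _ ?_, Finset.card_univ, Fintype.card_fin]
  intro a b hab
  have := congrArg Fin.val (hinj hab)
  exact Fin.ext this

def patch {α : Type*} {n r : ℕ} (hr : r ≤ n) (a : Fin r → α) (b c : Fin (n - r) → α) :
    Fin (2 * n - r) → α := fun i =>
  if h1 : (i : ℕ) < r then a ⟨i, h1⟩
  else if h2 : (i : ℕ) < n then b ⟨(i : ℕ) - r, by omega⟩
  else c ⟨(i : ℕ) - n, by have := i.isLt; omega⟩

lemma patch_lo {α : Type*} {n r : ℕ} (hr : r ≤ n) (a : Fin r → α) (b c : Fin (n - r) → α)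
    {i : Fin (2 * n - r)} (h1 : (i : ℕ) < r) : patch hr a b c i = a ⟨i, h1⟩ :=
  dif_pos h1

lemma patch_mid {α : Type*} {n r : ℕ} (hr : r ≤ n) (a : Fin r → α) (b c : Fin (n - r) → α)
    {i : Fin (2 * n - r)} (h1 : ¬ (i : ℕ) < r) (h2 : (i : ℕ) < n) :
    patch hr a b c i = b ⟨(i : ℕ) - r, by omega⟩ := by
  rw [patch, dif_neg h1, dif_pos h2]

lemma patch_hi {α : Type*} {n r : ℕ} (hr : r ≤ n) (a : Fin r → α) (b c : Fin (n - r) → α)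
    {i : Fin (2 * n - r)} (h2 : ¬ (i : ℕ) < n) :
    patch hr a b c i = c ⟨(i : ℕ) - n, by have := i.isLt; omega⟩ := by
  have h1 : ¬ (i : ℕ) < r := by omega
  rw [patch, dif_neg h1, dif_neg h2]

lemma fiber_card {α : Type*} [DecidableEq α] {S : Finset α} {n r : ℕ} (hr : r ≤ n)
    {Y Z : Finset α} (hYS : Y ⊆ S) (hZS : Z ⊆ S)
    (hY : Y.card = n) (hZ : Z.card = n) (hYZ : (Y ∩ Z).card = r) :
    ((distinctTuples S (2 * n - r)).filter
        (fun w => (Finset.image (w ∘ emb1 hr) Finset.univ,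
          Finset.image (w ∘ emb2 hr) Finset.univ) = (Y, Z))).card
      = r.factorial * ((n - r).factorial * (n - r).factorial) := by
  classical
  have hYZ1 : (Y \ Z).card = n - r := by
    rw [← Finset.sdiff_inter_self_left, Finset.card_sdiff_of_subset Finset.inter_subset_left,
      hY, hYZ]
  have hYZ2 : (Z \ Y).card = n - r := by
    rw [← Finset.sdiff_inter_self_left, Finset.card_sdiff_of_subset Finset.inter_subset_left,
      hZ, Finset.inter_comm, hYZ]
  have hmain :
      ((distinctTuples S (2 * n - r)).filter
        (fun w => (Finset.image (w ∘ emb1 hr) Finset.univ,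
          Finset.image (w ∘ emb2 hr) Finset.univ) = (Y, Z))).card
      = ((distinctTuples (Y ∩ Z) r) ×ˢ
          ((distinctTuples (Y \ Z) (n - r)) ×ˢ (distinctTuples (Z \ Y) (n - r)))).card := by
    refine Finset.card_bij'
      (fun w _ => (fun k : Fin r => w ⟨(k : ℕ), by have := k.isLt; omega⟩,
        (fun k : Fin (n - r) => w ⟨r + (k : ℕ), by have := k.isLt; omega⟩,
         fun k : Fin (n - r) => w ⟨n + (k : ℕ), by have := k.isLt; omega⟩)))
      (fun p _ => patch hr p.1 p.2.1 p.2.2) ?_ ?_ ?_ ?_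
    · -- forward maps to P
      intro w hw
      rw [Finset.mem_filter] at hw
      obtain ⟨hw1, heq⟩ := hw
      have hinj := (mem_distinctTuples.1 hw1).2
      have him1 : Finset.image (w ∘ emb1 hr) Finset.univ = Y := (Prod.mk.injEq _ _ _ _ ▸ heq).1
      have him2 : Finset.image (w ∘ emb2 hr) Finset.univ = Z := (Prod.mk.injEq _ _ _ _ ▸ heq).2
      have wY : ∀ (k : ℕ) (hk : k < n) (hk' : k < 2 * n - r), w ⟨k, hk'⟩ ∈ Y := by
        intro k hk hk'
        rw [← him1]
        exact Finset.mem_image_of_mem _ (Finset.mem_univ (⟨k, hk⟩ : Fin n))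
      have wZlo : ∀ (k : ℕ) (hk : k < r) (hk' : k < 2 * n - r), w ⟨k, hk'⟩ ∈ Z := by
        intro k hk hk'
        rw [← him2]
        have : (w ∘ emb2 hr) ⟨k, by omega⟩ = w ⟨k, hk'⟩ := by
          simp only [Function.comp, emb2, dif_pos hk]
        rw [← this]
        exact Finset.mem_image_of_mem _ (Finset.mem_univ _)
      have wZhi : ∀ (k : ℕ) (hk : k < n - r) (hk' : n + k < 2 * n - r),
          w ⟨n + k, hk'⟩ ∈ Z := by
        intro k hk hk'
        rw [← him2]
        have : (w ∘ emb2 hr) ⟨r + k, by omega⟩ = w ⟨n + k, hk'⟩ := by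
          simp only [Function.comp, emb2]
          rw [dif_neg (by omega)]
          congr 1
          apply Fin.ext
          simp
        rw [← this]
        exact Finset.mem_image_of_mem _ (Finset.mem_univ _)
      have wnZ : ∀ (k : ℕ) (hk1 : r ≤ k) (hk2 : k < n) (hk' : k < 2 * n - r),
          w ⟨k, hk'⟩ ∉ Z := by
        intro k hk1 hk2 hk' hmem
        rw [← him2] at hmem
        obtain ⟨j, _, hj⟩ := Finset.mem_image.1 hmem
        have := congrArg Fin.val (hinj hj)
        simp only [Function.comp, emb2, apply_dite Fin.val] at this ⊢
        split_ifs at this <;> omega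
      have wnY : ∀ (k : ℕ) (hk : k < n - r) (hk' : n + k < 2 * n - r),
          w ⟨n + k, hk'⟩ ∉ Y := by
        intro k hk hk' hmem
        rw [← him1] at hmem
        obtain ⟨j, _, hj⟩ := Finset.mem_image.1 hmem
        have := congrArg Fin.val (hinj hj)
        simp only [Function.comp, emb1] at this
        have := j.isLt
        omega
      rw [Finset.mem_product, Finset.mem_product]
      refine ⟨?_, ?_, ?_⟩
      · refine mem_distinctTuples.2 ⟨fun k => ?_, fun i j hij => ?_⟩
        · exact Finset.mem_inter.2 ⟨wY _ (by have := k.isLt; omega) _,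
            wZlo _ k.isLt _⟩
        · have := congrArg Fin.val (hinj hij)
          exact Fin.ext (by simpa using this)
      · refine mem_distinctTuples.2 ⟨fun k => ?_, fun i j hij => ?_⟩
        · exact Finset.mem_sdiff.2 ⟨wY _ (by have := k.isLt; omega) _,
            wnZ _ (by omega) (by have := k.isLt; omega) _⟩
        · have := congrArg Fin.val (hinj hij)
          exact Fin.ext (by simpa using this)
      · refine mem_distinctTuples.2 ⟨fun k => ?_, fun i j hij => ?_⟩
        · exact Finset.mem_sdiff.2 ⟨wZhi _ k.isLt _, wnY _ k.isLt _⟩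
        · have := congrArg Fin.val (hinj hij)
          exact Fin.ext (by simpa using this)
    · -- backward maps to fiber
      intro p hp
      rw [Finset.mem_product, Finset.mem_product] at hp
      obtain ⟨ha, hb, hc⟩ := hp
      obtain ⟨haM, haI⟩ := mem_distinctTuples.1 ha
      obtain ⟨hbM, hbI⟩ := mem_distinctTuples.1 hb
      obtain ⟨hcM, hcI⟩ := mem_distinctTuples.1 hc
      set a := p.1; set b := p.2.1; set c := p.2.2
      have dAB : ∀ {x : α}, x ∈ Y ∩ Z → x ∈ Y \ Z → False := fun hx h2 =>
        (Finset.mem_sdiff.1 h2).2 (Finset.mem_inter.1 hx).2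
      have dAC : ∀ {x : α}, x ∈ Y ∩ Z → x ∈ Z \ Y → False := fun hx h2 =>
        (Finset.mem_sdiff.1 h2).2 (Finset.mem_inter.1 hx).1
      have dBC : ∀ {x : α}, x ∈ Y \ Z → x ∈ Z \ Y → False := fun hx h2 =>
        (Finset.mem_sdiff.1 h2).2 (Finset.mem_sdiff.1 hx).1
      have hpinj : Function.Injective (patch hr a b c) := by
        intro i j hij
        by_cases hi1 : (i : ℕ) < r <;> by_cases hj1 : (j : ℕ) < r
        · rw [patch_lo hr a b c hi1, patch_lo hr a b c hj1] at hij
          exact Fin.ext (by simpa using congrArg Fin.val (haI hij))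
        · by_cases hj2 : (j : ℕ) < n
          · rw [patch_lo hr a b c hi1, patch_mid hr a b c hj1 hj2] at hij
            exact (dAB (haM _) (by rw [hij]; exact hbM _)).elim
          · rw [patch_lo hr a b c hi1, patch_hi hr a b c hj2] at hij
            exact (dAC (haM _) (by rw [hij]; exact hcM _)).elim
        · by_cases hi2 : (i : ℕ) < n
          · rw [patch_mid hr a b c hi1 hi2, patch_lo hr a b c hj1] at hij
            exact (dAB (haM _) (by rw [← hij]; exact hbM _)).elim
          · rw [patch_hi hr a b c hi2, patch_lo hr a b c hj1] at hij
            exact (dAC (haM _) (by rw [← hij]; exact hcM _)).elim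
        · by_cases hi2 : (i : ℕ) < n <;> by_cases hj2 : (j : ℕ) < n
          · rw [patch_mid hr a b c hi1 hi2, patch_mid hr a b c hj1 hj2] at hij
            have := congrArg Fin.val (hbI hij)
            exact Fin.ext (by simp at this; omega)
          · rw [patch_mid hr a b c hi1 hi2, patch_hi hr a b c hj2] at hij
            exact (dBC (hbM _) (by rw [hij]; exact hcM _)).elim
          · rw [patch_hi hr a b c hi2, patch_mid hr a b c hj1 hj2] at hij
            exact (dBC (hbM _) (by rw [← hij]; exact hcM _)).elim
          · rw [patch_hi hr a b c hi2, patch_hi hr a b c hj2] at hij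
            have := congrArg Fin.val (hcI hij)
            have hi := i.isLt; have hj := j.isLt
            exact Fin.ext (by simp at this; omega)
      have hYmem : ∀ i : Fin n, patch hr a b c (emb1 hr i) ∈ Y := by
        intro i
        by_cases hi1 : (i : ℕ) < r
        · rw [show emb1 hr i = ⟨(i : ℕ), by have := i.isLt; omega⟩ from rfl,
            patch_lo hr a b c hi1]
          exact (Finset.mem_inter.1 (haM _)).1
        · rw [show emb1 hr i = ⟨(i : ℕ), by have := i.isLt; omega⟩ from rfl,
            patch_mid hr a b c hi1 i.isLt]
          exact (Finset.mem_sdiff.1 (hbM _)).1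
      have hZmem : ∀ i : Fin n, patch hr a b c (emb2 hr i) ∈ Z := by
        intro i
        by_cases hi1 : (i : ℕ) < r
        · rw [show emb2 hr i = ⟨(i : ℕ), by have := i.isLt; omega⟩ from dif_pos hi1,
            patch_lo hr a b c hi1]
          exact (Finset.mem_inter.1 (haM _)).2
        · rw [show emb2 hr i = ⟨n + ((i : ℕ) - r), by have := i.isLt; omega⟩ from
            dif_neg hi1, patch_hi hr a b c (Nat.not_lt.2 (Nat.le_add_right _ _))]
          exact (Finset.mem_sdiff.1 (hcM _)).1
      rw [Finset.mem_filter]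
      constructor
      · refine mem_distinctTuples.2 ⟨fun i => ?_, hpinj⟩
        by_cases hi1 : (i : ℕ) < r
        · rw [patch_lo hr a b c hi1]; exact hYS (Finset.mem_inter.1 (haM _)).1
        · by_cases hi2 : (i : ℕ) < n
          · rw [patch_mid hr a b c hi1 hi2]; exact hYS (Finset.mem_sdiff.1 (hbM _)).1
          · rw [patch_hi hr a b c hi2]; exact hZS (Finset.mem_sdiff.1 (hcM _)).1
      · rw [Prod.mk.injEq]
        constructor
        · apply Finset.eq_of_subset_of_card_le
          · intro x hx
            obtain ⟨i, _, rfl⟩ := Finset.mem_image.1 hx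
            exact hYmem i
          · rw [Finset.card_image_of_injective _ (hpinj.comp (emb1_injective hr)),
              Finset.card_univ, Fintype.card_fin, hY]
        · apply Finset.eq_of_subset_of_card_le
          · intro x hx
            obtain ⟨i, _, rfl⟩ := Finset.mem_image.1 hx
            exact hZmem i
          · rw [Finset.card_image_of_injective _ (hpinj.comp (emb2_injective hr)),
              Finset.card_univ, Fintype.card_fin, hZ]
    · -- left inverse : patch of the pieces of w gives back w
      intro w hw
      dsimp only
      funext i
      by_cases hi1 : (i : ℕ) < r
      · rw [patch_lo hr _ _ _ hi1]
      · by_cases hi2 : (i : ℕ) < n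
        · rw [patch_mid hr _ _ _ hi1 hi2]
          exact congrArg w (Fin.ext (by simp; omega))
        · rw [patch_hi hr _ _ _ hi2]
          exact congrArg w (Fin.ext (by simp; omega))
    · -- right inverse
      intro p hp
      refine Prod.ext ?_ (Prod.ext ?_ ?_)
      · funext k
        show patch hr p.1 p.2.1 p.2.2 ⟨(k : ℕ), by have := k.isLt; omega⟩ = p.1 k
        rw [patch_lo hr _ _ _ (by simpa using k.isLt)]
      · funext k
        have hk := k.isLt
        show patch hr p.1 p.2.1 p.2.2 ⟨r + (k : ℕ), by omega⟩ = p.2.1 k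
        rw [patch_mid hr _ _ _ (by simp <;> omega) (by simp <;> omega)]
        exact congrArg p.2.1 (Fin.ext (by simp))
      · funext k
        have hk := k.isLt
        show patch hr p.1 p.2.1 p.2.2 ⟨n + (k : ℕ), by omega⟩ = p.2.2 k
        rw [patch_hi hr _ _ _ (by simp <;> omega)]
        exact congrArg p.2.2 (Fin.ext (by simp))
  rw [hmain, Finset.card_product, Finset.card_product, card_distinctTuples hYZ,
    card_distinctTuples hYZ1, card_distinctTuples hYZ2]

lemma stepC {α : Type*} [DecidableEq α] {S : Finset α} {n r : ℕ} (hr : r ≤ n)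
    {h : (Fin n → α) → ℝ}
    (hsym : ∀ (σ : Equiv.Perm (Fin n)) (y : Fin n → α), h (y ∘ σ) = h y) :
    ∑ w ∈ distinctTuples S (2 * n - r), h (w ∘ emb1 hr) * h (w ∘ emb2 hr)
      = ∑ p ∈ ((S.powersetCard n ×ˢ S.powersetCard n).filter
          (fun p => (p.1 ∩ p.2).card = r)),
          ((r.factorial * ((n - r).factorial * (n - r).factorial) : ℕ) : ℝ) *
            (symFn n h p.1 * symFn n h p.2) := by
  classical
  have hmaps : ∀ w ∈ distinctTuples S (2 * n - r),
      (Finset.image (w ∘ emb1 hr) Finset.univ, Finset.image (w ∘ emb2 hr) Finset.univ)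
        ∈ (S.powersetCard n ×ˢ S.powersetCard n).filter
            (fun p => (p.1 ∩ p.2).card = r) := by
    intro w hw
    obtain ⟨hmem, hinj⟩ := mem_distinctTuples.1 hw
    rw [Finset.mem_filter, Finset.mem_product]
    refine ⟨⟨?_, ?_⟩, inter_card_eq hr hw⟩
    · rw [Finset.mem_powersetCard]
      refine ⟨fun x hx => ?_, ?_⟩
      · obtain ⟨i, _, rfl⟩ := Finset.mem_image.1 hx; exact hmem _
      · rw [Finset.card_image_of_injective _ (hinj.comp (emb1_injective hr)),
          Finset.card_univ, Fintype.card_fin]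
    · rw [Finset.mem_powersetCard]
      refine ⟨fun x hx => ?_, ?_⟩
      · obtain ⟨i, _, rfl⟩ := Finset.mem_image.1 hx; exact hmem _
      · rw [Finset.card_image_of_injective _ (hinj.comp (emb2_injective hr)),
          Finset.card_univ, Fintype.card_fin]
  rw [← Finset.sum_fiberwise_of_maps_to hmaps
    (fun w => h (w ∘ emb1 hr) * h (w ∘ emb2 hr))]
  refine Finset.sum_congr rfl fun p hp => ?_
  obtain ⟨Y, Z⟩ := p
  rw [Finset.mem_filter, Finset.mem_product] at hp
  obtain ⟨⟨hp1, hp2⟩, hpr⟩ := hp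
  rw [Finset.mem_powersetCard] at hp1 hp2
  have hval : ∀ w ∈ (distinctTuples S (2 * n - r)).filter
      (fun w => (Finset.image (w ∘ emb1 hr) Finset.univ,
        Finset.image (w ∘ emb2 hr) Finset.univ) = (Y, Z)),
      h (w ∘ emb1 hr) * h (w ∘ emb2 hr) = symFn n h Y * symFn n h Z := by
    intro w hw
    rw [Finset.mem_filter] at hw
    obtain ⟨hw1, heq⟩ := hw
    have hinj := (mem_distinctTuples.1 hw1).2
    have him1 : Finset.image (w ∘ emb1 hr) Finset.univ = Y :=
      congrArg Prod.fst heq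
    have him2 : Finset.image (w ∘ emb2 hr) Finset.univ = Z :=
      congrArg Prod.snd heq
    have h1 : w ∘ emb1 hr ∈ distinctTuples Y n := by
      have := comp_mem_image hinj (emb1_injective hr); rwa [him1] at this
    have h2 : w ∘ emb2 hr ∈ distinctTuples Z n := by
      have := comp_mem_image hinj (emb2_injective hr); rwa [him2] at this
    rw [symFn_eq hsym hp1.2 h1, symFn_eq hsym hp2.2 h2]
  rw [Finset.sum_congr rfl hval, Finset.sum_const,
    fiber_card hr hp1.1 hp2.1 hp1.2 hp2.2 hpr, nsmul_eq_mul]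

lemma Ustat'_sq {α : Type*} [DecidableEq α] (S : Finset α) (n : ℕ)
    (h : (Fin n → α) → ℝ) :
    (Ustat' S n h) ^ 2 = ∑ p ∈ S.powersetCard n ×ˢ S.powersetCard n,
      symFn n h p.1 * symFn n h p.2 := by
  rw [Ustat'_eq, sq, Finset.sum_mul_sum, ← Finset.sum_product']

theorem stmt0eq (n : ℕ) {α : Type*} (S : Finset α) (a₀ : α) (h : (Fin n → α) → ℝ)
    (hsym : ∀ (σ : Equiv.Perm (Fin n)) (y : Fin n → α), h (y ∘ σ) = h y) :
    (Ustat' S n h) ^ 2 =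
      ∑ r ∈ Finset.range (n + 1), (((r.factorial *
          ((n - r).factorial * (n - r).factorial) : ℕ) : ℝ))⁻¹ *
        ∑ v ∈ distinctSeqs S (2 * n - r) a₀,
          h (fun i => v (i : ℕ)) *
          h (fun i => if (i : ℕ) < r then v (i : ℕ)
                      else v (n + ((i : ℕ) - r))) := by
  classical
  rw [Ustat'_sq]
  have hmapsR : ∀ p ∈ S.powersetCard n ×ˢ S.powersetCard n,
      (p.1 ∩ p.2).card ∈ Finset.range (n + 1) := by
    intro p hp
    rw [Finset.mem_product] at hp
    rw [Finset.mem_range]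
    refine Nat.lt_succ_of_le (le_trans (Finset.card_le_card Finset.inter_subset_left) ?_)
    rw [(Finset.mem_powersetCard.1 hp.1).2]
  rw [← Finset.sum_fiberwise_of_maps_to hmapsR (fun p => symFn n h p.1 * symFn n h p.2)]
  refine Finset.sum_congr rfl fun r hr => ?_
  have hrn : r ≤ n := Nat.lt_succ_iff.1 (Finset.mem_range.1 hr)
  have h0 : ((r.factorial * ((n - r).factorial * (n - r).factorial) : ℕ) : ℝ) ≠ 0 := by
    have : 0 < (r.factorial * ((n - r).factorial * (n - r).factorial) : ℕ) :=
      Nat.mul_pos r.factorial_pos (Nat.mul_pos (n - r).factorial_pos (n - r).factorial_pos)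
    exact_mod_cast this.ne'
  rw [seq_sum_eq S a₀ hrn h, stepC hrn hsym, Finset.mul_sum]
  refine Finset.sum_congr rfl fun p hp => ?_
  rw [← mul_assoc, inv_mul_cancel₀ h0, one_mul]

/-- For every `n ≥ 1` there exist constants `C(n,r) ∈ (0,∞)`,
`r = 0,…,n`, with `C(n,0) = 1/(n!)²` and `C(n,n) = 1/n!`, such that for every type `α`,
every finite `S ⊆ α` and every symmetric kernel `h : α^n → ℝ`, the square of the
`U`-statistic `F` of order `n` with kernel `h` satisfies
`F² = Σ_{r=0}^{n} C(n,r) · Σ_{(y,z) ∈ S^{2n−r}_{≠}} h(y_0,…,y_{n−1}) ·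
h(y_0,…,y_{r−1}, z_0,…,z_{n−r−1})`.
In a tuple `v ∈ S^{2n−r}_{≠}` the coordinates `y_i = v i` (for `i < n`) and
`z_j = v (n + j)` (for `j < n − r`). -/
theorem stmt0 (n : ℕ) (hn : 1 ≤ n) :
    ∃ C : ℕ → ℝ,
      (∀ r, r ≤ n → 0 < C r) ∧
      C 0 = ((n.factorial : ℝ) ^ 2)⁻¹ ∧
      C n = (n.factorial : ℝ)⁻¹ ∧
      ∀ (α : Type*) (S : Finset α) (a₀ : α) (h : (Fin n → α) → ℝ),
        (∀ (σ : Equiv.Perm (Fin n)) (y : Fin n → α), h (y ∘ σ) = h y) →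
        (Ustat S n h) ^ 2 =
          ∑ r ∈ Finset.range (n + 1), C r *
            ∑ v ∈ distinctSeqs S (2 * n - r) a₀,
              h (fun i => v (i : ℕ)) *
              h (fun i => if (i : ℕ) < r then v (i : ℕ)
                          else v (n + ((i : ℕ) - r))) := by
  refine ⟨fun r => (((r.factorial * ((n - r).factorial * (n - r).factorial) : ℕ) : ℝ))⁻¹,
    ?_, ?_, ?_, fun α S a₀ h hs => stmt0eq n S a₀ h hs⟩
  · intro r hr
    have h0 : 0 < (r.factorial * ((n - r).factorial * (n - r).factorial) : ℕ) :=
      Nat.mul_pos r.factorial_pos (Nat.mul_pos (n - r).factorial_pos (n - r).factorial_pos)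
    exact inv_pos.2 (by exact_mod_cast h0)
  · show ((Nat.factorial 0 * ((n - 0).factorial * (n - 0).factorial) : ℕ) : ℝ)⁻¹ = _
    congr 1
    rw [Nat.sub_zero, Nat.factorial_zero, one_mul, sq]
    push_cast
    ring
  · show ((Nat.factorial n * ((n - n).factorial * (n - n).factorial) : ℕ) : ℝ)⁻¹ = _
    rw [Nat.sub_self, Nat.factorial_zero, one_mul, mul_one]
end

section
/- For all integers d ≥ 1 and k ≥ 1, ∫_{(B)^k} h_1(y_1,…,y_k) dy_1 ⋯ dy_k = (k + 1)^d, where B := [−1,1]^d ⊂ ℝ^d. -/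
open MeasureTheory

open Classical in
/-- The indicator of a proposition, as a real number. -/
noncomputable def ind (p : Prop) : ℝ := if p then 1 else 0

section Aux

open Set
open scoped ENNReal

noncomputable section

variable {k : ℕ}

def TA (A : Finset (Fin k)) : Set (Fin k → ℝ) :=
  {x | ∀ i, if i ∈ A then x i ∈ Ico (0:ℝ) 1 else x i ∈ Icc (0:ℝ) 1} ∩
  {x | ∀ i ∈ A, ∀ j ∉ A, x j ≤ x i}

def SA (A : Finset (Fin k)) : Set (Fin k → ℝ) :=
  {x | ∀ i, if i ∈ A then x i ∈ Ico (-1:ℝ) 0 else x i ∈ Icc (0:ℝ) 1} ∩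
  {x | ∀ i ∈ A, ∀ j ∉ A, x j ≤ x i + 1}

lemma measurableSet_TA (A : Finset (Fin k)) : MeasurableSet (TA A) := by
  apply MeasurableSet.inter
  · simp only [Set.setOf_forall]
    apply MeasurableSet.iInter; intro i
    by_cases h : i ∈ A <;> simp only [h, if_true, if_false]
    · exact (measurable_pi_apply i) measurableSet_Ico
    · exact (measurable_pi_apply i) measurableSet_Icc
  · simp only [Set.setOf_forall]
    apply MeasurableSet.iInter; intro i
    apply MeasurableSet.iInter; intro hi
    apply MeasurableSet.iInter; intro j
    apply MeasurableSet.iInter; intro hj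
    exact measurableSet_le (measurable_pi_apply j) (measurable_pi_apply i)

lemma measurableSet_SA (A : Finset (Fin k)) : MeasurableSet (SA A) := by
  apply MeasurableSet.inter
  · simp only [Set.setOf_forall]
    apply MeasurableSet.iInter; intro i
    by_cases h : i ∈ A <;> simp only [h, if_true, if_false]
    · exact (measurable_pi_apply i) measurableSet_Ico
    · exact (measurable_pi_apply i) measurableSet_Icc
  · simp only [Set.setOf_forall]
    apply MeasurableSet.iInter; intro i
    apply MeasurableSet.iInter; intro hi
    apply MeasurableSet.iInter; intro j
    apply MeasurableSet.iInter; intro hj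
    exact measurableSet_le (measurable_pi_apply j)
      ((measurable_pi_apply i).add_const 1)

lemma vol_SA_eq_TA (A : Finset (Fin k)) : volume (SA A) = volume (TA A) := by
  classical
  have hS : SA A = (fun x : Fin k → ℝ => x + fun i => if i ∈ A then (1:ℝ) else 0) ⁻¹' TA A := by
    ext x
    simp only [SA, TA, mem_preimage, mem_inter_iff, mem_setOf_eq, Pi.add_apply]
    constructor
    · rintro ⟨h1, h2⟩
      refine ⟨fun i => ?_, fun i hi j hj => ?_⟩
      · have := h1 i
        by_cases h : i ∈ A <;> simp only [h, if_true, if_false] at this ⊢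
        · exact ⟨by linarith [this.1], by linarith [this.2]⟩
        · exact ⟨by linarith [this.1], by linarith [this.2]⟩
      · have := h2 i hi j hj
        simp only [hi, if_true, if_neg hj]
        linarith
    · rintro ⟨h1, h2⟩
      refine ⟨fun i => ?_, fun i hi j hj => ?_⟩
      · have := h1 i
        by_cases h : i ∈ A <;> simp only [h, if_true, if_false] at this ⊢
        · exact ⟨by linarith [this.1], by linarith [this.2]⟩
        · exact ⟨by linarith [this.1], by linarith [this.2]⟩
      · have := h2 i hi j hj
        simp only [hi, if_true, if_neg hj] at this
        linarith
  rw [hS]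
  rw [show (fun x : Fin k → ℝ => x + fun i => if i ∈ A then (1:ℝ) else 0)
      = (fun x : Fin k → ℝ => (fun i => if i ∈ A then (1:ℝ) else 0) + x) by
    funext x; exact add_comm _ _]
  exact measure_preimage_add volume _ (TA A)

lemma S1_eq_iUnion :
    {x : Fin k → ℝ | (∀ i, x i ∈ Icc (-1:ℝ) 1) ∧ ∀ i j, |x j - x i| ≤ 1}
      = ⋃ A : Finset (Fin k), SA A := by
  classical
  ext x
  simp only [mem_setOf_eq, mem_iUnion, SA, mem_inter_iff]
  constructor
  · rintro ⟨h1, h2⟩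
    refine ⟨Finset.univ.filter (fun i => x i < 0), ?_, ?_⟩
    · intro i
      simp only [Finset.mem_filter, Finset.mem_univ, true_and]
      by_cases h : x i < 0 <;> simp only [h, if_true, if_false]
      · exact ⟨(h1 i).1, h⟩
      · exact ⟨not_lt.1 h, (h1 i).2⟩
    · intro i hi j hj
      simp only [Finset.mem_filter, Finset.mem_univ, true_and] at hi hj
      have := (abs_le.1 (h2 i j)).2
      linarith
  · rintro ⟨A, hA1, hA2⟩
    have hco : ∀ i, (i ∈ A → x i ∈ Ico (-1:ℝ) 0) ∧ (i ∉ A → x i ∈ Icc (0:ℝ) 1) := by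
      intro i
      have h := hA1 i
      exact ⟨fun hi => by simpa [hi] using h, fun hi => by simpa [hi] using h⟩
    constructor
    · intro i
      by_cases h : i ∈ A
      · have := (hco i).1 h; exact ⟨this.1, le_trans this.2.le one_pos.le⟩
      · have := (hco i).2 h; exact ⟨le_trans (by norm_num) this.1, this.2⟩
    · intro i j
      rw [abs_le]
      by_cases hi : i ∈ A <;> by_cases hj : j ∈ A
      · have h1 := (hco i).1 hi; have h2 := (hco j).1 hj
        constructor <;> [linarith [h1.2, h2.1]; linarith [h1.1, h2.2]]
      · have h1 := (hco i).1 hi; have h2 := (hco j).2 hj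
        have := hA2 i hi j hj
        constructor <;> [linarith [h1.2, h2.1]; linarith]
      · have h1 := (hco i).2 hi; have h2 := (hco j).1 hj
        have := hA2 j hj i hi
        constructor <;> [linarith; linarith [h1.1, h2.2]]
      · have h1 := (hco i).2 hi; have h2 := (hco j).2 hj
        constructor <;> [linarith [h1.2, h2.1]; linarith [h1.1, h2.2]]

lemma SA_disjoint : Pairwise (Function.onFun Disjoint (SA (k := k))) := by
  intro A B hAB
  rw [Function.onFun, Set.disjoint_left]
  intro x hxA hxB
  apply hAB
  ext i
  have h1 := hxA.1 i
  have h2 := hxB.1 i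
  constructor
  · intro hi
    by_contra hiB
    simp only [hi, if_true] at h1
    simp only [hiB, if_false] at h2
    exact absurd (lt_of_lt_of_le h1.2 h2.1) (lt_irrefl _)
  · intro hi
    by_contra hiA
    simp only [hi, if_true] at h2
    simp only [hiA, if_false] at h1
    exact absurd (lt_of_lt_of_le h2.2 h1.1) (lt_irrefl _)

lemma vol_diag {i j : Fin k} (hij : i ≠ j) : volume {x : Fin k → ℝ | x i = x j} = 0 := by
  have hset : {x : Fin k → ℝ | x i = x j} =
      (LinearMap.ker ((LinearMap.proj i : (Fin k → ℝ) →ₗ[ℝ] ℝ) - LinearMap.proj j) :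
        Submodule ℝ (Fin k → ℝ)) := by
    ext x
    simp [LinearMap.mem_ker, sub_eq_zero, eq_comm]
  rw [hset]
  apply Measure.addHaar_submodule
  intro h
  have hx : Pi.single i (1:ℝ) ∈ LinearMap.ker
      ((LinearMap.proj i : (Fin k → ℝ) →ₗ[ℝ] ℝ) - LinearMap.proj j) := by
    rw [h]; trivial
  simp only [LinearMap.mem_ker, LinearMap.sub_apply, LinearMap.proj_apply,
    Pi.single_eq_same, Pi.single_eq_of_ne hij.symm, sub_zero] at hx
  exact one_ne_zero hx

lemma vol_hyper (i : Fin k) : volume {x : Fin k → ℝ | x i = 1} = 0 := by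
  rw [volume_pi]
  exact MeasureTheory.Measure.pi_hyperplane _ i 1

lemma exists_valid (f : Fin k → ℝ) :
    ∀ m ≤ k, ∃ A : Finset (Fin k), (∀ i ∈ A, ∀ j ∉ A, f j ≤ f i) ∧ A.card = m := by
  intro m
  induction m with
  | zero => intro _; exact ⟨∅, by simp⟩
  | succ m ih =>
    intro hm
    obtain ⟨A, hA, hcard⟩ := ih (Nat.le_of_succ_le hm)
    have hAc : Aᶜ.Nonempty := by
      rw [← Finset.card_pos, Finset.card_compl, hcard, Fintype.card_fin]
      omega
    obtain ⟨i₀, hi₀, hmax⟩ := Finset.exists_max_image Aᶜ f hAc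
    refine ⟨insert i₀ A, ?_, ?_⟩
    · intro i hi j hj
      rcases Finset.mem_insert.1 hi with rfl | hiA
      · exact hmax j (Finset.mem_compl.2 fun h => hj (Finset.mem_insert_of_mem h))
      · exact hA i hiA j (fun h => hj (Finset.mem_insert_of_mem h))
    · rw [Finset.card_insert_of_notMem (by simpa using hi₀), hcard]

lemma count_valid {f : Fin k → ℝ} (hf : Function.Injective f) :
    (Finset.univ.filter (fun A : Finset (Fin k) =>
      ∀ i ∈ A, ∀ j ∉ A, f j ≤ f i)).card = k + 1 := by
  classical
  rw [show k + 1 = (Finset.range (k+1)).card by simp]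
  apply Finset.card_bij (fun A _ => A.card)
  · intro A hA
    simp only [Finset.mem_range, Nat.lt_succ_iff]
    simpa using Finset.card_le_univ A
  · intro A hA B hB hcard
    simp only [Finset.mem_filter] at hA hB
    by_contra hne
    have h1 : (A \ B).Nonempty := by
      rw [Finset.sdiff_nonempty]
      intro hsub
      exact hne (Finset.eq_of_subset_of_card_le hsub (le_of_eq hcard.symm))
    have h2 : (B \ A).Nonempty := by
      rw [Finset.sdiff_nonempty]
      intro hsub
      exact hne (Finset.eq_of_subset_of_card_le hsub (le_of_eq hcard)).symm
    obtain ⟨i, hi⟩ := h1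
    obtain ⟨j, hj⟩ := h2
    rw [Finset.mem_sdiff] at hi hj
    have e1 := hA.2 i hi.1 j hj.2
    have e2 := hB.2 j hj.1 i hi.2
    have : i = j := hf (le_antisymm e2 e1)
    exact hj.2 (this ▸ hi.1)
  · intro m hm
    obtain ⟨A, hA, hcard⟩ := exists_valid f m (Nat.lt_succ_iff.1 (Finset.mem_range.1 hm))
    exact ⟨A, Finset.mem_filter.2 ⟨Finset.mem_univ _, hA⟩, hcard⟩

lemma mem_TA_iff {x : Fin k → ℝ} (hx : ∀ i, x i ∈ Ico (0:ℝ) 1) (A : Finset (Fin k)) :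
    x ∈ TA A ↔ ∀ i ∈ A, ∀ j ∉ A, x j ≤ x i := by
  constructor
  · exact fun h => h.2
  · intro h
    refine ⟨fun i => ?_, h⟩
    by_cases hi : i ∈ A <;> simp only [mem_setOf_eq, hi, if_true, if_false]
    · exact hx i
    · exact ⟨(hx i).1, (hx i).2.le⟩

lemma sum_TA : ∑ A : Finset (Fin k), volume (TA A) = (k + 1 : ℝ≥0∞) := by
  classical
  have hmeas : ∀ A : Finset (Fin k),
      Measurable ((TA A).indicator (fun _ => (1:ℝ≥0∞))) :=
    fun A => measurable_const.indicator (measurableSet_TA A)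
  have h1 : ∀ A : Finset (Fin k),
      volume (TA A) = ∫⁻ x, (TA A).indicator (fun _ => (1:ℝ≥0∞)) x := by
    intro A
    rw [lintegral_indicator_const (measurableSet_TA A), one_mul]
  simp_rw [h1]
  rw [← lintegral_finset_sum _ (fun A _ => hmeas A)]
  have hN : volume {x : Fin k → ℝ | ¬(Function.Injective x ∧ ∀ i, x i ≠ 1)} = 0 := by
    have hsub : {x : Fin k → ℝ | ¬(Function.Injective x ∧ ∀ i, x i ≠ 1)} ⊆
      (⋃ p : Fin k × Fin k, {x : Fin k → ℝ | p.1 ≠ p.2 ∧ x p.1 = x p.2}) ∪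
        ⋃ i : Fin k, {x : Fin k → ℝ | x i = 1} := by
      intro x hx
      simp only [mem_setOf_eq, not_and_or, not_forall, not_ne_iff] at hx
      rcases hx with hinj | ⟨i, hi⟩
      · rw [Function.not_injective_iff] at hinj
        obtain ⟨a, b, hab, hne⟩ := hinj
        exact Or.inl (mem_iUnion.2 ⟨(a, b), hne, hab⟩)
      · exact Or.inr (mem_iUnion.2 ⟨i, hi⟩)
    apply measure_mono_null hsub
    apply measure_union_null
    · apply measure_iUnion_null
      intro p
      by_cases h : p.1 = p.2
      · convert measure_empty (μ := (volume : Measure (Fin k → ℝ)))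
        ext x; simp [h]
      · exact measure_mono_null (fun x hx => hx.2) (vol_diag h)
    · exact measure_iUnion_null fun i => vol_hyper i
  have hae : ∀ᵐ x : Fin k → ℝ, Function.Injective x ∧ ∀ i, x i ≠ 1 := by
    rw [MeasureTheory.ae_iff]
    exact hN
  have hcongr : (∫⁻ x, ∑ A : Finset (Fin k), (TA A).indicator (fun _ => (1:ℝ≥0∞)) x)
      = ∫⁻ x, (univ.pi fun _ : Fin k => Ico (0:ℝ) 1).indicator
          (fun _ => (k + 1 : ℝ≥0∞)) x := by
    apply lintegral_congr_ae
    filter_upwards [hae] with x hx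
    obtain ⟨hinj, hne1⟩ := hx
    by_cases hbox : x ∈ univ.pi fun _ : Fin k => Ico (0:ℝ) 1
    · have hx' : ∀ i, x i ∈ Ico (0:ℝ) 1 := fun i => hbox i (mem_univ i)
      rw [indicator_of_mem hbox]
      have heach : ∀ A : Finset (Fin k), (TA A).indicator (fun _ => (1:ℝ≥0∞)) x
          = if (∀ i ∈ A, ∀ j ∉ A, x j ≤ x i) then 1 else 0 := by
        intro A
        rw [indicator_apply]
        exact if_congr (mem_TA_iff hx' A) rfl rfl
      simp_rw [heach]
      rw [Finset.sum_boole, count_valid hinj]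
      push_cast
      ring
    · rw [indicator_of_notMem hbox]
      have heach : ∀ A : Finset (Fin k), (TA A).indicator (fun _ => (1:ℝ≥0∞)) x = 0 := by
        intro A
        apply indicator_of_notMem
        intro hxT
        apply hbox
        intro i _
        have h := hxT.1 i
        by_cases hi : i ∈ A
        · simpa [hi] using h
        · simp only [mem_setOf_eq, hi, if_false] at h
          exact ⟨h.1, lt_of_le_of_ne h.2 (hne1 i)⟩
      simp [heach]
  rw [hcongr, lintegral_indicator_const (MeasurableSet.univ_pi fun _ => measurableSet_Ico),
    volume_pi_pi]
  simp [Real.volume_Ico]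

def S1set (k : ℕ) : Set (Fin k → ℝ) :=
  {x | ∀ i, x i ∈ Icc (-1:ℝ) 1} ∩ {x | ∀ i j, |x j - x i| ≤ 1}

lemma vol_S1 (k : ℕ) : volume (S1set k) = (k + 1 : ℝ≥0∞) := by
  have h : S1set k
      = {x : Fin k → ℝ | (∀ i, x i ∈ Icc (-1:ℝ) 1) ∧ ∀ i j, |x j - x i| ≤ 1} := by
    ext x; simp [S1set, mem_inter_iff, mem_setOf_eq]
  rw [h, S1_eq_iUnion, measure_iUnion SA_disjoint (fun A => measurableSet_SA A), tsum_fintype]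
  simp_rw [vol_SA_eq_TA]
  exact sum_TA

lemma measurableSet_S1set (k : ℕ) : MeasurableSet (S1set k) := by
  apply MeasurableSet.inter
  · simp only [setOf_forall]
    exact MeasurableSet.iInter fun i => (measurable_pi_apply i) measurableSet_Icc
  · simp only [setOf_forall]
    refine MeasurableSet.iInter fun i => MeasurableSet.iInter fun j => ?_
    have : Measurable fun x : Fin k → ℝ => |x j - x i| :=
      ((measurable_pi_apply j).sub (measurable_pi_apply i)).abs
    exact measurableSet_le this measurable_const

def Cset (k d : ℕ) : Set (Fin k → Fin d → ℝ) :=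
  {y | ∀ i c, y i c ∈ Icc (-1:ℝ) 1} ∩ {y | ∀ i j c, |y j c - y i c| ≤ 1}

lemma measurableSet_Cset (k d : ℕ) : MeasurableSet (Cset k d) := by
  apply MeasurableSet.inter
  · simp only [setOf_forall]
    refine MeasurableSet.iInter fun i => MeasurableSet.iInter fun c => ?_
    exact ((measurable_pi_apply c).comp (measurable_pi_apply i)) measurableSet_Icc
  · simp only [setOf_forall]
    refine MeasurableSet.iInter fun i => MeasurableSet.iInter fun j =>
      MeasurableSet.iInter fun c => ?_
    have : Measurable fun y : Fin k → Fin d → ℝ => |y j c - y i c| :=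
      (by fun_prop : Measurable fun y : Fin k → Fin d → ℝ => y j c - y i c).abs
    exact measurableSet_le this measurable_const

lemma vol_Cset (k d : ℕ) : volume (Cset k d) = ((k : ℝ≥0∞) + 1) ^ d := by
  induction d with
  | zero =>
    have h : Cset k 0 = univ := by
      ext y
      simp only [Cset, mem_inter_iff, mem_setOf_eq, mem_univ, iff_true]
      exact ⟨fun i c => c.elim0, fun i j c => c.elim0⟩
    rw [h, pow_zero]
    rw [volume_pi, Measure.pi_univ]
    simp [volume_pi, Measure.pi_univ]
  | succ d ih =>
    have mp1 : MeasurePreserving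
        (MeasurableEquiv.piFinSuccAbove (fun _ : Fin (d+1) => ℝ) 0) :=
      volume_preserving_piFinSuccAbove (fun _ : Fin (d+1) => ℝ) 0
    have mp2 : MeasurePreserving (MeasurableEquiv.arrowCongr' (Equiv.refl (Fin k))
        (MeasurableEquiv.piFinSuccAbove (fun _ : Fin (d+1) => ℝ) 0)) :=
      volume_preserving_arrowCongr' _ _ mp1
    have mp3 : MeasurePreserving
        (MeasurableEquiv.arrowProdEquivProdArrow ℝ (Fin d → ℝ) (Fin k)) :=
      volume_measurePreserving_arrowProdEquivProdArrow ℝ (Fin d → ℝ) (Fin k)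
    have mp := mp3.comp mp2
    have hpre : (⇑(MeasurableEquiv.arrowProdEquivProdArrow ℝ (Fin d → ℝ) (Fin k)) ∘
        ⇑(MeasurableEquiv.arrowCongr' (Equiv.refl (Fin k))
          (MeasurableEquiv.piFinSuccAbove (fun _ : Fin (d+1) => ℝ) 0)))
        ⁻¹' (S1set k ×ˢ Cset k d) = Cset k (d+1) := by
      ext y
      simp only [mem_preimage, Function.comp_apply, mem_prod, S1set, Cset,
        mem_inter_iff, mem_setOf_eq, MeasurableEquiv.arrowCongr',
        MeasurableEquiv.arrowProdEquivProdArrow, Equiv.arrowProdEquivProdArrow,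
        MeasurableEquiv.coe_mk, Equiv.coe_fn_mk, Equiv.arrowCongr'_apply,
        Equiv.arrowCongr_apply, Equiv.coe_refl, Equiv.refl_symm,
        MeasurableEquiv.piFinSuccAbove_apply, Function.comp_apply, id_eq,
        Fin.insertNthEquiv, Equiv.coe_fn_symm_mk, Fin.insertNth, Fin.tail,
        Fin.removeNth, Fin.zero_succAbove]
      constructor
      · rintro ⟨⟨h1, h2⟩, h3, h4⟩
        constructor
        · intro i c
          refine Fin.cases ?_ ?_ c
          · exact h1 i
          · exact fun c' => h3 i c'
        · intro i j c
          refine Fin.cases ?_ ?_ c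
          · exact h2 i j
          · exact fun c' => h4 i j c'
      · rintro ⟨h1, h2⟩
        exact ⟨⟨fun i => h1 i 0, fun i j => h2 i j 0⟩,
          ⟨fun i c => h1 i c.succ, fun i j c => h2 i j c.succ⟩⟩
    have hms : MeasurableSet (S1set k ×ˢ Cset k d) :=
      (measurableSet_S1set k).prod (measurableSet_Cset k d)
    have hkey := mp.measure_preimage hms.nullMeasurableSet
    rw [hpre] at hkey
    rw [hkey]
    rw [show (volume : Measure ((Fin k → ℝ) × (Fin k → Fin d → ℝ)))
        = (volume : Measure (Fin k → ℝ)).prod volume from Measure.volume_eq_prod _ _]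
    rw [Measure.prod_prod, vol_S1 k, ih, pow_succ]
    ring

end

end Aux

/-- For all integers `d ≥ 1` and `k ≥ 1`,
`∫_{(B)^k} h_1(y_1,…,y_k) dy_1 ⋯ dy_k = (k + 1)^d`, where `B = [−1,1]^d ⊂ ℝ^d`.
Here `ℝ^d` is modelled as `Fin d → ℝ` with the sup (`ℓ^∞`) norm, and
`h_1(y_1,…,y_k)` is the indicator that all pairwise `ℓ^∞` distances are at most `1`. -/
theorem stmt4 (d k : ℕ) (hd : 1 ≤ d) (hk : 1 ≤ k) :
    (∫ y in (Set.univ.pi fun _ : Fin k =>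
        (Set.univ.pi fun _ : Fin d => Set.Icc (-1 : ℝ) 1)),
      ind (∀ i j : Fin k, ‖y j - y i‖ ≤ 1))
      = ((k : ℝ) + 1) ^ d := by
  classical
  set C : Set (Fin k → Fin d → ℝ) := {y | ∀ i j : Fin k, ‖y j - y i‖ ≤ 1} with hC
  have hCmeas : MeasurableSet C := by
    simp only [hC, Set.setOf_forall]
    refine MeasurableSet.iInter fun i => MeasurableSet.iInter fun j => ?_
    exact measurableSet_le ((measurable_pi_apply j).sub (measurable_pi_apply i)).norm
      measurable_const
  set P : Set (Fin k → Fin d → ℝ) := Set.univ.pi fun _ : Fin k =>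
    (Set.univ.pi fun _ : Fin d => Set.Icc (-1 : ℝ) 1) with hP
  have hfun : ∀ y : Fin k → Fin d → ℝ,
      ind (∀ i j : Fin k, ‖y j - y i‖ ≤ 1) = C.indicator (fun _ => (1:ℝ)) y := by
    intro y
    simp [ind, Set.indicator_apply, hC, Set.mem_setOf_eq]
  have h1 : (∫ y in P, ind (∀ i j : Fin k, ‖y j - y i‖ ≤ 1))
      = ∫ y in P, C.indicator (fun _ => (1:ℝ)) y := by
    exact integral_congr_ae (Filter.Eventually.of_forall fun y => hfun y)
  rw [h1, MeasureTheory.setIntegral_indicator hCmeas, MeasureTheory.setIntegral_const]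
  have hPC : P ∩ C = Cset k d := by
    ext y
    simp only [hP, hC, Set.mem_inter_iff, Set.mem_pi, Set.mem_univ, true_implies,
      Set.mem_setOf_eq, Cset, Set.mem_inter_iff, Set.mem_setOf_eq]
    constructor
    · rintro ⟨hy1, hy2⟩
      refine ⟨fun i c => hy1 i c, fun i j c => ?_⟩
      have := (pi_norm_le_iff_of_nonneg (zero_le_one)).1 (hy2 i j) c
      simpa [Real.norm_eq_abs] using this
    · rintro ⟨hy1, hy2⟩
      refine ⟨fun i c => hy1 i c, fun i j => ?_⟩
      rw [pi_norm_le_iff_of_nonneg (zero_le_one)]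
      intro c
      simpa [Real.norm_eq_abs] using hy2 i j c
  rw [hPC, measureReal_def, vol_Cset k d]
  rw [smul_eq_mul, mul_one]
  rw [ENNReal.toReal_pow]
  congr 1
end

section
/- Let k > r ≥ 1 be integers and let y_1,…,y_r ∈ [−1,1] be real numbers. Set y_max := max{0, y_1,…,y_r} and y_min := min{0, y_1,…,y_r}, and assume y_max − y_min ≤ 1. Then ∫_{[−1+y_max, 1+y_min]^{k−r}} 1{max_i z_i − min_i z_i ≤ 1} dz_1 ⋯ dz_{k−r} = 1 + (k − r)·(1 − (y_max − y_min)). -/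
open MeasureTheory

noncomputable section

def boxA (n : ℕ) (a b : ℝ) : Set (Fin n → ℝ) :=
  (Set.univ.pi fun _ => Set.Icc a b) ∩ {z | ∀ i j, z i - z j ≤ 1}

lemma measurableSet_boxA (n : ℕ) (a b : ℝ) : MeasurableSet (boxA n a b) := by
  apply (MeasurableSet.univ_pi fun _ => measurableSet_Icc).inter
  have : {z : Fin n → ℝ | ∀ i j, z i - z j ≤ 1} = ⋂ i, ⋂ j, {z | z i - z j ≤ 1} := by
    ext z; simp
  rw [this]
  exact .iInter fun i => .iInter fun j =>
    measurableSet_le ((measurable_pi_apply i).sub (measurable_pi_apply j)) measurable_const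

lemma section_boxA (n : ℕ) (a b t : ℝ) :
    {z : Fin n → ℝ | Fin.cons t z ∈ boxA (n+1) a b}
      = if t ∈ Set.Icc a b then boxA n (max a (t-1)) (min b (t+1)) else ∅ := by
  by_cases ht : t ∈ Set.Icc a b
  · rw [if_pos ht]
    have hta := ht.1
    have htb := ht.2
    ext z
    simp only [boxA, Set.mem_setOf_eq, Set.mem_inter_iff, Set.mem_pi,
      Set.mem_univ, forall_true_left, Set.mem_Icc, Fin.forall_fin_succ, Fin.cons_succ,
      Fin.cons_zero, max_le_iff, le_min_iff]
    constructor
    · rintro ⟨⟨-, hbox⟩, ⟨-, hd0⟩, hd⟩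
      exact ⟨fun j => ⟨⟨(hbox j).1, by linarith [hd0 j]⟩, (hbox j).2,
          by linarith [(hd j).1]⟩, fun i j => (hd i).2 j⟩
    · rintro ⟨hbox, hd⟩
      exact ⟨⟨⟨hta, htb⟩, fun j => ⟨(hbox j).1.1, (hbox j).2.1⟩⟩,
        ⟨by linarith, fun j => by linarith [(hbox j).1.2]⟩,
        fun i => ⟨by linarith [(hbox i).2.2], fun j => hd i j⟩⟩
  · rw [if_neg ht]
    simp only [Set.eq_empty_iff_forall_notMem, Set.mem_setOf_eq, boxA,
      Set.mem_inter_iff, Set.mem_pi, Set.mem_univ, forall_true_left]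
    rintro z ⟨hbox, -⟩
    exact ht (by simpa using hbox 0)

lemma volume_boxA_succ (n : ℕ) (a b : ℝ) :
    volume (boxA (n+1) a b)
      = ∫⁻ t in Set.Icc a b, volume (boxA n (max a (t-1)) (min b (t+1))) := by
  have mp := (volume_preserving_piFinSuccAbove (fun _ : Fin (n+1) => ℝ) 0).symm
  rw [← mp.measure_preimage_equiv (boxA (n+1) a b), Measure.volume_eq_prod]
  rw [Measure.prod_apply (((MeasurableEquiv.piFinSuccAbove (fun _ => ℝ) 0).symm).measurable
    (measurableSet_boxA _ a b))]
  have hpre : ∀ t : ℝ, (Prod.mk t ⁻¹'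
      ((MeasurableEquiv.piFinSuccAbove (fun _ : Fin (n+1) => ℝ) 0).symm ⁻¹' boxA (n+1) a b))
      = {z : Fin n → ℝ | Fin.cons t z ∈ boxA (n+1) a b} := by
    intro t
    ext z
    simp [MeasurableEquiv.piFinSuccAbove_symm_apply, Fin.insertNth_zero', Fin.consEquiv_apply, Fin.consEquiv]
  simp_rw [hpre, section_boxA, apply_ite volume, measure_empty]
  rw [← lintegral_indicator measurableSet_Icc]
  congr 1
  ext t
  rw [Set.indicator_apply]

lemma boxA_len_ge (a b t : ℝ) (h1 : 1 ≤ b - a) (ht : t ∈ Set.Icc a b) :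
    1 ≤ min b (t+1) - max a (t-1) := by
  obtain ⟨hta, htb⟩ := ht
  rcases le_total t (a+1) with h | h
  · rw [max_eq_left (by linarith)]
    rcases min_cases b (t+1) with ⟨hm, _⟩ | ⟨hm, _⟩ <;> rw [hm] <;> linarith
  · rw [max_eq_right (by linarith)]
    rcases min_cases b (t+1) with ⟨hm, _⟩ | ⟨hm, _⟩ <;> rw [hm] <;> linarith

lemma volume_boxA_big : ∀ n : ℕ, ∀ a b : ℝ, 1 ≤ b - a → b - a ≤ 2 →
    volume (boxA n a b) = ENNReal.ofReal (1 + n * (b - a - 1)) := by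
  intro n
  induction n with
  | zero =>
    intro a b h1 h2
    have hU : boxA 0 a b = Set.univ := by
      ext z; simp [boxA]
    rw [hU]
    simp [volume_pi, Measure.pi_univ]
  | succ n ih =>
    intro a b h1 h2
    rw [volume_boxA_succ]
    set f : ℝ → ℝ := fun t => 1 + n * (min b (t+1) - max a (t-1) - 1) with hf
    have hsec : ∀ᵐ t ∂volume, t ∈ Set.Icc a b →
        volume (boxA n (max a (t-1)) (min b (t+1))) = ENNReal.ofReal (f t) := by
      refine ae_of_all _ fun t ht => ?_
      refine ih _ _ (boxA_len_ge a b t h1 ht) ?_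
      have h1' : t - 1 ≤ max a (t-1) := le_max_right _ _
      have h2' : min b (t+1) ≤ t + 1 := min_le_right _ _
      linarith
    rw [setLIntegral_congr_fun_ae measurableSet_Icc hsec]
    have hfc : Continuous f := by
      apply continuous_const.add
      apply continuous_const.mul
      exact ((continuous_const.min (continuous_id.add continuous_const)).sub
        (continuous_const.max (continuous_id.sub continuous_const))).sub continuous_const
    have hab : a ≤ b := by linarith
    have hint : IntegrableOn f (Set.Icc a b) := hfc.integrableOn_Icc
    have hnn : 0 ≤ᵐ[volume.restrict (Set.Icc a b)] f := by
      filter_upwards [ae_restrict_mem measurableSet_Icc] with t ht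
      have := boxA_len_ge a b t h1 ht
      have hn : (0:ℝ) ≤ n := Nat.cast_nonneg n
      have : (0:ℝ) ≤ n * (min b (t+1) - max a (t-1) - 1) := by
        apply mul_nonneg hn; linarith
      show (0:ℝ) ≤ 1 + (n:ℝ) * (min b (t+1) - max a (t-1) - 1)
      linarith
    rw [← ofReal_integral_eq_lintegral_ofReal hint hnn]
    congr 1
    rw [integral_Icc_eq_integral_Ioc, ← intervalIntegral.integral_of_le hab]
    have hab1 : a ≤ b - 1 := by linarith
    have hba1 : b - 1 ≤ a + 1 := by linarith
    have ha1b : a + 1 ≤ b := by linarith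
    have hI : ∀ x y : ℝ, IntervalIntegrable f volume x y := fun x y =>
      hfc.intervalIntegrable x y
    rw [← intervalIntegral.integral_add_adjacent_intervals (hI a (b-1)) (hI (b-1) b),
        ← intervalIntegral.integral_add_adjacent_intervals (hI (b-1) (a+1)) (hI (a+1) b)]
    have i1 : ∫ t in a..(b-1), f t = (b-1) + (n:ℝ)/2*(b-1-a)^2 - (a + (n:ℝ)/2*(a-a)^2) := by
      rw [intervalIntegral.integral_congr (g := fun t => 1 + (n:ℝ)*(t-a))
        (by intro t ht
            rw [Set.uIcc_of_le hab1] at ht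
            have hm1 : max a (t-1) = a := max_eq_left (by linarith [ht.1, ht.2])
            have hm2 : min b (t+1) = t+1 := min_eq_right (by linarith [ht.2])
            show 1 + (n:ℝ) * (min b (t+1) - max a (t-1) - 1) = 1 + (n:ℝ)*(t-a)
            rw [hm1, hm2]; ring)]
      apply intervalIntegral.integral_eq_sub_of_hasDerivAt
        (f := fun t => t + (n:ℝ)/2*(t-a)^2)
      · intro x hx
        have h := (((hasDerivAt_id x).sub_const a).pow 2).const_mul ((n:ℝ)/2)
        have h3 := (hasDerivAt_id' x).add h
        have h4 : HasDerivAt (fun t => t + (n:ℝ)/2*(t-a)^2)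
            (1 + (n:ℝ)/2*(2*(x-a)^1*1)) x := by simpa [Pi.add_def] using h3
        exact h4.congr_deriv (by ring)
      · apply Continuous.intervalIntegrable
        fun_prop
    have i2 : ∫ t in (b-1)..(a+1), f t = ((a+1) - (b-1)) * (1 + (n:ℝ)*(b-a-1)) := by
      rw [intervalIntegral.integral_congr (g := fun _ => 1 + (n:ℝ)*(b-a-1))
        (by intro t ht
            rw [Set.uIcc_of_le hba1] at ht
            have hm1 : max a (t-1) = a := max_eq_left (by linarith [ht.2])
            have hm2 : min b (t+1) = b := min_eq_left (by linarith [ht.1])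
            show 1 + (n:ℝ) * (min b (t+1) - max a (t-1) - 1) = 1 + (n:ℝ)*(b-a-1)
            rw [hm1, hm2])]
      rw [intervalIntegral.integral_const, smul_eq_mul]
    have i3 : ∫ t in (a+1)..b, f t = (b - (n:ℝ)/2*(b-b)^2) - ((a+1) - (n:ℝ)/2*(b-(a+1))^2) := by
      rw [intervalIntegral.integral_congr (g := fun t => 1 + (n:ℝ)*(b-t))
        (by intro t ht
            rw [Set.uIcc_of_le ha1b] at ht
            have hm1 : max a (t-1) = t-1 := max_eq_right (by linarith [ht.1])
            have hm2 : min b (t+1) = b := min_eq_left (by linarith [ht.1])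
            show 1 + (n:ℝ) * (min b (t+1) - max a (t-1) - 1) = 1 + (n:ℝ)*(b-t)
            rw [hm1, hm2]; ring)]
      apply intervalIntegral.integral_eq_sub_of_hasDerivAt
        (f := fun t => t - (n:ℝ)/2*(b-t)^2)
      · intro x hx
        have h := (((hasDerivAt_const x b).sub (hasDerivAt_id x)).pow 2).const_mul ((n:ℝ)/2)
        have h4 : HasDerivAt (fun t => t - (n:ℝ)/2*(b-t)^2)
            (1 - (n:ℝ)/2*(2*(b-x)^1*(0-1))) x := by
          simpa [Pi.sub_def] using (hasDerivAt_id' x).sub h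
        exact h4.congr_deriv (by ring)
      · apply Continuous.intervalIntegrable
        fun_prop
    rw [i1, i2, i3]
    push_cast
    ring

lemma measurableSet_diam (n : ℕ) : MeasurableSet {z : Fin n → ℝ | ∀ i j, z i - z j ≤ 1} := by
  have : {z : Fin n → ℝ | ∀ i j, z i - z j ≤ 1} = ⋂ i, ⋂ j, {z | z i - z j ≤ 1} := by
    ext z; simp
  rw [this]
  exact .iInter fun i => .iInter fun j =>
    measurableSet_le ((measurable_pi_apply i).sub (measurable_pi_apply j)) measurable_const

end

/-- Let `k > r ≥ 1` be integers and `y_1,…,y_r ∈ [−1,1]`.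
With `y_max := max{0, y_1,…,y_r}`, `y_min := min{0, y_1,…,y_r}` and assuming
`y_max − y_min ≤ 1`, one has
`∫_{[−1+y_max, 1+y_min]^{k−r}} 1{max_i z_i − min_i z_i ≤ 1} dz = 1 + (k−r)·(1 − (y_max − y_min))`.
The diameter condition is expressed as `∀ i j, z i − z j ≤ 1`. -/
theorem stmt5 (k r : ℕ) (hr : 1 ≤ r) (hrk : r < k) (y : Fin r → ℝ)
    (hy : ∀ i, y i ∈ Set.Icc (-1 : ℝ) 1)
    (ymax ymin : ℝ)
    (hmax : ymax = max 0 (Finset.univ.sup' ⟨⟨0, hr⟩, Finset.mem_univ _⟩ y))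
    (hmin : ymin = min 0 (Finset.univ.inf' ⟨⟨0, hr⟩, Finset.mem_univ _⟩ y))
    (hgap : ymax - ymin ≤ 1) :
    (∫ z in (Set.univ.pi fun _ : Fin (k - r) => Set.Icc (-1 + ymax) (1 + ymin)),
      ind (∀ i j : Fin (k - r), z i - z j ≤ 1))
      = 1 + ((k : ℝ) - (r : ℝ)) * (1 - (ymax - ymin)) := by
  have hymax : 0 ≤ ymax := by rw [hmax]; exact le_max_left _ _
  have hymin : ymin ≤ 0 := by rw [hmin]; exact min_le_left _ _
  set n := k - r with hn
  set a : ℝ := -1 + ymax with ha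
  set b : ℝ := 1 + ymin with hb
  have h1 : 1 ≤ b - a := by rw [ha, hb]; linarith
  have h2 : b - a ≤ 2 := by rw [ha, hb]; linarith
  have hstep : (∫ z in (Set.univ.pi fun _ : Fin n => Set.Icc a b),
      ind (∀ i j : Fin n, z i - z j ≤ 1))
      = ∫ z in (Set.univ.pi fun _ : Fin n => Set.Icc a b),
        Set.indicator {w : Fin n → ℝ | ∀ i j, w i - w j ≤ 1} (fun _ => (1:ℝ)) z := by
    apply integral_congr_ae
    refine ae_of_all _ fun z => ?_
    unfold ind
    beta_reduce
    by_cases h : ∀ i j : Fin n, z i - z j ≤ 1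
    · rw [if_pos h, Set.indicator_of_mem (show z ∈ {w : Fin n → ℝ | ∀ i j, w i - w j ≤ 1} from h)]
    · rw [if_neg h, Set.indicator_of_notMem (show z ∉ {w : Fin n → ℝ | ∀ i j, w i - w j ≤ 1} from h)]
  rw [hstep, setIntegral_indicator (measurableSet_diam n), setIntegral_const, smul_eq_mul,
    mul_one]
  have hbox : ((Set.univ.pi fun _ : Fin n => Set.Icc a b)
      ∩ {w : Fin n → ℝ | ∀ i j, w i - w j ≤ 1}) = boxA n a b := rfl
  rw [hbox, measureReal_def, volume_boxA_big n a b h1 h2, ENNReal.toReal_ofReal (by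
    have : (0:ℝ) ≤ (n:ℝ) * (b - a - 1) := mul_nonneg (Nat.cast_nonneg n) (by linarith)
    linarith)]
  rw [hn, Nat.cast_sub hrk.le, ha, hb]
  ring
end

section
/- For all integers d ≥ 1, k ≥ 1 and every real δ ∈ (0, 1/4), the Lebesgue integral I := ∫_{W^{k+1}} h_δ(y_0,…,y_k) dy_0 ⋯ dy_k satisfies (1 − 2δ)^d · δ^{dk} · (k+1)^d ≤ I ≤ δ^{dk} · (k+1)^d. -/
open MeasureTheory

open Set ENNReal


noncomputable def swapE (n d : ℕ) : (Fin n → Fin d → ℝ) ≃ᵐ (Fin d → Fin n → ℝ) where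
  toEquiv := Equiv.piComm fun _ _ => ℝ
  measurable_toFun := measurable_pi_lambda _ fun c => measurable_pi_lambda _ fun j =>
    (measurable_pi_apply c).comp (measurable_pi_apply j)
  measurable_invFun := measurable_pi_lambda _ fun j => measurable_pi_lambda _ fun c =>
    (measurable_pi_apply j).comp (measurable_pi_apply c)

lemma swapE_apply (n d : ℕ) (y : Fin n → Fin d → ℝ) (c : Fin d) (j : Fin n) :
    swapE n d y c j = y j c := rfl

noncomputable def boxSpanning (n : ℕ) :
    (volume : Measure (Fin n → ℝ)).FiniteSpanningSetsIn
      (pi univ '' pi univ fun _ : Fin n => { s : Set ℝ | MeasurableSet s }) where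
  set := fun m => univ.pi fun _ : Fin n => Icc (-(m : ℝ)) m
  set_mem := fun m => Set.mem_image_of_mem _ fun _ _ => Set.mem_setOf_eq ▸ (measurableSet_Icc : MeasurableSet (Icc _ _))
  finite := fun m => by
    rw [volume_pi_pi]
    exact ENNReal.prod_lt_top fun _ _ => by
      rw [Real.volume_Icc]; exact ENNReal.ofReal_lt_top
  spanning := by
    apply Set.eq_univ_of_forall
    intro x
    obtain ⟨m, hm⟩ := exists_nat_ge (∑ j, |x j|)
    refine Set.mem_iUnion.2 ⟨m, fun j _ => ?_⟩
    have h1 : |x j| ≤ (m : ℝ) :=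
      le_trans (Finset.single_le_sum (fun i _ => abs_nonneg (x i)) (Finset.mem_univ j)) hm
    exact abs_le.mp h1

lemma swap_mp (n d : ℕ) : MeasurePreserving (swapE n d) volume volume := by
  refine ⟨(swapE n d).measurable, ?_⟩
  have hvol : (volume : Measure (Fin d → Fin n → ℝ)) = Measure.pi fun _ => volume := volume_pi
  rw [hvol]
  refine (Measure.pi_eq_generateFrom (fun _ => generateFrom_pi) (fun _ => isPiSystem_pi)
    (fun _ => boxSpanning n) ?_).symm
  intro s hs
  choose t ht hst using hs
  have htm : ∀ c j, MeasurableSet (t c j) := fun c j => ht c j (Set.mem_univ j)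
  have hsm : ∀ c, MeasurableSet (s c) := fun c => by
    rw [← hst c]; exact MeasurableSet.univ_pi fun j => htm c j
  rw [Measure.map_apply (swapE n d).measurable (MeasurableSet.univ_pi hsm)]
  have hpre : (swapE n d) ⁻¹' (univ.pi s) = univ.pi fun j => univ.pi fun c => t c j := by
    ext y
    simp only [Set.mem_preimage, Set.mem_univ_pi]
    constructor
    · intro h j c
      have h2 := h c
      rw [← hst c, Set.mem_univ_pi] at h2
      exact h2 j
    · intro h c
      rw [← hst c, Set.mem_univ_pi]
      exact fun j => h j c
  rw [hpre, volume_pi, Measure.pi_pi]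
  calc (∏ j, (volume : Measure (Fin d → ℝ)) (univ.pi fun c => t c j))
      = ∏ j, ∏ c, volume (t c j) := Finset.prod_congr rfl fun j _ => volume_pi_pi _
    _ = ∏ c, ∏ j, volume (t c j) := Finset.prod_comm
    _ = ∏ c, (volume : Measure (Fin n → ℝ)) (s c) :=
        Finset.prod_congr rfl fun c _ => by rw [← hst c, volume_pi_pi]

lemma vol_prism (n : ℕ) (i : Fin (n + 1)) (s : Set ℝ) (hs : MeasurableSet s)
    (t : ℝ → Set ℝ) (htm : MeasurableSet {p : ℝ × ℝ | p.2 ∈ t p.1}) (c : ℝ≥0∞)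
    (hc : ∀ u, volume (t u) = c) :
    volume {x : Fin (n + 1) → ℝ | x i ∈ s ∧ ∀ j, j ≠ i → x j ∈ t (x i)}
      = volume s * c ^ n := by
  classical
  obtain ⟨p, hp⟩ : ∃ p : Fin (n + 1) → Prop, p = fun j => j = i := ⟨_, rfl⟩
  haveI : DecidablePred p := fun j => decidable_of_iff (j = i) (by rw [hp])
  have hpq : ∀ j, p j ↔ j = i := fun j => by rw [hp]
  set e := MeasurableEquiv.piEquivPiSubtypeProd (fun _ : Fin (n + 1) => ℝ) p with he
  obtain ⟨q0, hq0i⟩ : ∃ q : Subtype p, q.1 = i := ⟨⟨i, (hpq i).2 rfl⟩, rfl⟩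
  have hq0 : ∀ q : Subtype p, q = q0 :=
    fun q => Subtype.ext (((hpq q.1).1 q.2).trans hq0i.symm)
  set S : Set ((Subtype p → ℝ) × ({ j // ¬ p j } → ℝ)) :=
    {z | z.1 q0 ∈ s ∧ ∀ j, z.2 j ∈ t (z.1 q0)} with hS
  have hScap : S = ((fun z : (Subtype p → ℝ) × ({ j // ¬ p j } → ℝ) => z.1 q0) ⁻¹' s) ∩
      ⋂ j, (fun z : (Subtype p → ℝ) × ({ j // ¬ p j } → ℝ) => (z.1 q0, z.2 j)) ⁻¹'
        {p : ℝ × ℝ | p.2 ∈ t p.1} := by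
    ext z; simp [hS]
  have hm1 : Measurable fun z : (Subtype p → ℝ) × ({ j // ¬ p j } → ℝ) => z.1 q0 :=
    (measurable_pi_apply q0).comp measurable_fst
  have hSm : MeasurableSet S := by
    rw [hScap]
    exact (hm1 hs).inter (MeasurableSet.iInter fun j =>
      (hm1.prodMk ((measurable_pi_apply j).comp measurable_snd)) htm)
  have hpre : e ⁻¹' S = {x : Fin (n + 1) → ℝ | x i ∈ s ∧ ∀ j, j ≠ i → x j ∈ t (x i)} := by
    ext x
    have hmem : x ∈ e ⁻¹' S ↔ (x i ∈ s ∧ ∀ j : {j // ¬ p j}, x j.1 ∈ t (x i)) := by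
      rw [Set.mem_preimage,
        show e x = (fun q : Subtype p => x q.1, fun q : {j // ¬ p j} => x q.1) from rfl, hS]
      simp only [Set.mem_setOf_eq, hq0i]
    rw [hmem]
    simp only [Set.mem_setOf_eq]
    constructor
    · rintro ⟨h1, h2⟩
      exact ⟨h1, fun j hj => h2 ⟨j, fun hpj => hj ((hpq j).1 hpj)⟩⟩
    · rintro ⟨h1, h2⟩
      exact ⟨h1, fun j => h2 j.1 (fun hji => j.2 ((hpq j.1).2 hji))⟩
  have key := (measurePreserving_piEquivPiSubtypeProd
    (fun _ : Fin (n + 1) => (volume : Measure ℝ)) p).measure_preimage hSm.nullMeasurableSet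
  rw [hpre] at key
  rw [show (volume : Measure (Fin (n+1) → ℝ)) = Measure.pi fun _ => volume from volume_pi,
    key, Measure.prod_apply hSm]
  have hcard1 : Fintype.card (Subtype p) = 1 := Fintype.card_eq_one_iff.2 ⟨q0, hq0⟩
  have hsec : ∀ u : Subtype p → ℝ,
      (Measure.pi fun _ : { j // ¬ p j } => (volume : Measure ℝ)) (Prod.mk u ⁻¹' S)
        = Set.indicator s (fun _ => c ^ n) (u q0) := by
    intro u
    by_cases hu : u q0 ∈ s
    · have : Prod.mk u ⁻¹' S = univ.pi fun _ : { j // ¬ p j } => t (u q0) := by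
        ext v; simp [hS, hu]
      rw [this, Measure.pi_pi, Set.indicator_of_mem hu]
      simp only [hc]
      rw [Finset.prod_const, Finset.card_univ]
      congr 1
      rw [Fintype.card_subtype_compl, hcard1, Fintype.card_fin]
      omega
    · have : Prod.mk u ⁻¹' S = ∅ := by
        ext v; simp [hS, hu]
      rw [this, Set.indicator_of_notMem hu]
      simp
  simp_rw [hsec]
  have hind : ∀ u : Subtype p → ℝ, Set.indicator s (fun _ => c ^ n) (u q0)
      = Set.indicator ((fun u : Subtype p → ℝ => u q0) ⁻¹' s) (fun _ => c ^ n) u := fun u => rfl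
  simp_rw [hind]
  rw [lintegral_indicator ((measurable_pi_apply q0) hs), setLIntegral_const]
  have hps : ((fun u : Subtype p → ℝ => u q0) ⁻¹' s) = univ.pi fun _ : Subtype p => s := by
    ext u
    simp only [Set.mem_preimage, Set.mem_univ_pi]
    exact ⟨fun h q => (hq0 q) ▸ h, fun h => h q0⟩
  rw [hps, Measure.pi_pi, Finset.prod_const, Finset.card_univ, hcard1, pow_one, mul_comm]

lemma measurableSet_T (m : ℕ) (δ : ℝ) :
    MeasurableSet {x : Fin m → ℝ | ∀ i j : Fin m, |x j - x i| ≤ δ} := by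
  have : {x : Fin m → ℝ | ∀ i j : Fin m, |x j - x i| ≤ δ}
      = ⋂ i, ⋂ j, {x : Fin m → ℝ | |x j - x i| ≤ δ} := by
    ext x; simp
  rw [this]
  exact MeasurableSet.iInter fun i => MeasurableSet.iInter fun j =>
    measurableSet_le ((measurable_pi_apply j).sub (measurable_pi_apply i)).abs measurable_const

lemma oneD_upper (k : ℕ) {δ : ℝ} (hδ0 : 0 < δ) :
    volume ((univ.pi fun _ : Fin (k+1) => Icc (-(1/2):ℝ) (1/2))
        ∩ {x | ∀ i j : Fin (k+1), |x j - x i| ≤ δ})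
      ≤ (k+1 : ℕ) * ENNReal.ofReal δ ^ k := by
  set A := (univ.pi fun _ : Fin (k+1) => Icc (-(1/2):ℝ) (1/2))
      ∩ {x | ∀ i j : Fin (k+1), |x j - x i| ≤ δ} with hA
  set C : Fin (k+1) → Set (Fin (k+1) → ℝ) := fun i =>
    {x | x i ∈ Icc (-(1/2):ℝ) (1/2) ∧ ∀ j, j ≠ i → x j ∈ Icc (x i) (x i + δ)} with hC
  have hsub : A ⊆ ⋃ i, C i := by
    rintro x ⟨hx1, hx2⟩
    obtain ⟨i, hi⟩ := Finite.exists_min x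
    refine Set.mem_iUnion.2 ⟨i, hx1 i (Set.mem_univ i), fun j _ => ?_⟩
    refine ⟨hi j, ?_⟩
    have h1 : x j - x i ≤ |x j - x i| := le_abs_self _
    have h2 : |x j - x i| ≤ δ := hx2 i j
    linarith
  have hCvol : ∀ i, volume (C i) = ENNReal.ofReal δ ^ k := by
    intro i
    have := vol_prism k i (Icc (-(1/2):ℝ) (1/2)) measurableSet_Icc
      (fun u => Icc u (u + δ)) ?_ (ENNReal.ofReal δ) ?_
    · rw [hC]
      rw [this, Real.volume_Icc]
      norm_num
    · have : {p : ℝ × ℝ | p.2 ∈ Icc p.1 (p.1 + δ)}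
          = {p : ℝ × ℝ | p.1 ≤ p.2} ∩ {p : ℝ × ℝ | p.2 ≤ p.1 + δ} := by
        ext q; simp [Set.mem_Icc, and_comm]
      rw [this]
      exact (measurableSet_le measurable_fst measurable_snd).inter
        (measurableSet_le measurable_snd (measurable_fst.add_const δ))
    · intro u; rw [Real.volume_Icc]; congr 1; ring
  calc volume A ≤ volume (⋃ i, C i) := measure_mono hsub
    _ ≤ ∑' i, volume (C i) := measure_iUnion_le _
    _ = ∑ i, volume (C i) := tsum_fintype _
    _ = (k+1 : ℕ) * ENNReal.ofReal δ ^ k := by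
        simp [hCvol, Finset.sum_const, Finset.card_univ]

lemma oneD_lower (k : ℕ) {δ : ℝ} (hδ0 : 0 < δ) (hδ1 : δ < 1/4) :
    (k+1 : ℕ) * (ENNReal.ofReal (1 - δ) * ENNReal.ofReal δ ^ k)
      ≤ volume ((univ.pi fun _ : Fin (k+1) => Icc (-(1/2):ℝ) (1/2))
        ∩ {x | ∀ i j : Fin (k+1), |x j - x i| ≤ δ}) := by
  set A := (univ.pi fun _ : Fin (k+1) => Icc (-(1/2):ℝ) (1/2))
      ∩ {x | ∀ i j : Fin (k+1), |x j - x i| ≤ δ} with hA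
  set B : Fin (k+1) → Set (Fin (k+1) → ℝ) := fun i =>
    {x | x i ∈ Icc (-(1/2):ℝ) (1/2 - δ) ∧ ∀ j, j ≠ i → x j ∈ Ioc (x i) (x i + δ)} with hB
  have hBm : ∀ i, MeasurableSet (B i) := by
    intro i
    have : B i = ((fun x : Fin (k+1) → ℝ => x i) ⁻¹' Icc (-(1/2):ℝ) (1/2 - δ))
        ∩ ⋂ j, ⋂ (_ : j ≠ i), ({x : Fin (k+1) → ℝ | x i < x j} ∩ {x | x j ≤ x i + δ}) := by
      ext x
      simp only [hB, Set.mem_setOf_eq, Set.mem_inter_iff, Set.mem_preimage, Set.mem_iInter,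
        Set.mem_Ioc]
    rw [this]
    exact ((measurable_pi_apply i) measurableSet_Icc).inter
      (MeasurableSet.iInter fun j => MeasurableSet.iInter fun _ =>
        (measurableSet_lt (measurable_pi_apply i) (measurable_pi_apply j)).inter
          (measurableSet_le (measurable_pi_apply j) (by fun_prop : Measurable fun x : Fin (k+1) → ℝ => x i + δ)))
  have hdisj : Pairwise (Function.onFun Disjoint B) := by
    intro i i' hne
    rw [Function.onFun, Set.disjoint_left]
    intro x hx hx'
    have h1 : x i < x i' := (hx.2 i' (Ne.symm hne)).1
    have h2 : x i' < x i := (hx'.2 i hne).1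
    linarith
  have hsub : (⋃ i, B i) ⊆ A := by
    intro x hx
    obtain ⟨i, hxi⟩ := Set.mem_iUnion.1 hx
    have hmem : ∀ j, x j ∈ Icc (x i) (x i + δ) := by
      intro j
      by_cases h : j = i
      · subst h; exact ⟨le_rfl, by linarith⟩
      · exact Set.Ioc_subset_Icc_self (hxi.2 j h)
    have hi1 : -(1/2) ≤ x i := hxi.1.1
    have hi2 : x i ≤ 1/2 - δ := hxi.1.2
    constructor
    · intro j _
      have := hmem j
      exact ⟨by linarith [this.1], by linarith [this.2]⟩
    · intro i' j'
      have h1 := hmem i'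
      have h2 := hmem j'
      rw [abs_sub_le_iff]
      constructor <;> [skip; skip] <;>
        simp only [Set.mem_Icc] at h1 h2 <;> linarith
  have hBvol : ∀ i, volume (B i) = ENNReal.ofReal (1 - δ) * ENNReal.ofReal δ ^ k := by
    intro i
    have := vol_prism k i (Icc (-(1/2):ℝ) (1/2 - δ)) measurableSet_Icc
      (fun u => Ioc u (u + δ)) ?_ (ENNReal.ofReal δ) ?_
    · rw [hB, this, Real.volume_Icc]
      congr 2
      ring
    · have : {p : ℝ × ℝ | p.2 ∈ Ioc p.1 (p.1 + δ)}
          = {p : ℝ × ℝ | p.1 < p.2} ∩ {p : ℝ × ℝ | p.2 ≤ p.1 + δ} := by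
        ext q; simp [Set.mem_Ioc]
      rw [this]
      exact (measurableSet_lt measurable_fst measurable_snd).inter
        (measurableSet_le measurable_snd (measurable_fst.add_const δ))
    · intro u; rw [Real.volume_Ioc]; congr 1; ring
  calc (k+1 : ℕ) * (ENNReal.ofReal (1 - δ) * ENNReal.ofReal δ ^ k)
      = ∑ i : Fin (k+1), volume (B i) := by
        simp [hBvol, Finset.sum_const, Finset.card_univ]
    _ = ∑' i, volume (B i) := (tsum_fintype _).symm
    _ = volume (⋃ i, B i) := (measure_iUnion hdisj hBm).symm
    _ ≤ volume A := measure_mono hsub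

/-- For all integers `d ≥ 1`, `k ≥ 1` and every `δ ∈ (0, 1/4)`, the
integral `I := ∫_{W^{k+1}} h_δ(y_0,…,y_k) dy` over `W = [−1/2,1/2]^d ⊂ ℝ^d` satisfies
`(1 − 2δ)^d · δ^{dk} · (k+1)^d ≤ I ≤ δ^{dk} · (k+1)^d`.
Here `ℝ^d` carries the `ℓ^∞` norm. -/
theorem stmt8 (d k : ℕ) (hd : 1 ≤ d) (hk : 1 ≤ k) (δ : ℝ) (hδ : δ ∈ Set.Ioo (0 : ℝ) (1/4)) :
    (1 - 2 * δ) ^ d * δ ^ (d * k) * ((k : ℝ) + 1) ^ d ≤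
      (∫ y in (Set.univ.pi fun _ : Fin (k + 1) =>
          (Set.univ.pi fun _ : Fin d => Set.Icc (-(1/2) : ℝ) (1/2))),
        ind (∀ i j : Fin (k + 1), ‖y j - y i‖ ≤ δ)) ∧
    (∫ y in (Set.univ.pi fun _ : Fin (k + 1) =>
        (Set.univ.pi fun _ : Fin d => Set.Icc (-(1/2) : ℝ) (1/2))),
      ind (∀ i j : Fin (k + 1), ‖y j - y i‖ ≤ δ)) ≤
      δ ^ (d * k) * ((k : ℝ) + 1) ^ d := by
  obtain ⟨hδ0, hδ1⟩ := hδ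
  set Wfull := (Set.univ.pi fun _ : Fin (k + 1) =>
      (Set.univ.pi fun _ : Fin d => Set.Icc (-(1/2) : ℝ) (1/2))) with hWfull
  set Tfull := {y : Fin (k+1) → Fin d → ℝ | ∀ i j : Fin (k+1), ‖y j - y i‖ ≤ δ} with hTfull
  set A := (univ.pi fun _ : Fin (k+1) => Icc (-(1/2):ℝ) (1/2))
      ∩ {x : Fin (k+1) → ℝ | ∀ i j : Fin (k+1), |x j - x i| ≤ δ} with hA
  have hAm : MeasurableSet A :=
    (MeasurableSet.univ_pi fun _ => measurableSet_Icc).inter (measurableSet_T (k+1) δ)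
  have hTm : MeasurableSet Tfull := by
    have : Tfull = ⋂ i, ⋂ j, {y : Fin (k+1) → Fin d → ℝ | ‖y j - y i‖ ≤ δ} := by
      ext y; simp [hTfull]
    rw [this]
    exact MeasurableSet.iInter fun i => MeasurableSet.iInter fun j =>
      measurableSet_le ((measurable_pi_apply j).sub (measurable_pi_apply i)).norm
        measurable_const
  -- integral equals measure
  have hint : (∫ y in Wfull, ind (∀ i j : Fin (k + 1), ‖y j - y i‖ ≤ δ))
      = (volume (Wfull ∩ Tfull)).toReal := by
    have h1 : ∀ y : Fin (k+1) → Fin d → ℝ,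
        ind (∀ i j : Fin (k+1), ‖y j - y i‖ ≤ δ)
          = Set.indicator Tfull (fun _ => (1:ℝ)) y := by
      intro y
      by_cases h : (∀ i j : Fin (k+1), ‖y j - y i‖ ≤ δ) <;>
        simp [ind, h, Set.indicator_apply, hTfull, Set.mem_setOf_eq]
    simp_rw [h1]
    rw [setIntegral_indicator hTm, setIntegral_const, smul_eq_mul, mul_one]; rfl
  -- swap
  have hpre : (swapE (k+1) d) ⁻¹' (univ.pi fun _ : Fin d => A) = Wfull ∩ Tfull := by
    ext y
    have hnorm : ∀ i j : Fin (k+1), ‖y j - y i‖ ≤ δ ↔ ∀ c, |y j c - y i c| ≤ δ := by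
      intro i j
      rw [pi_norm_le_iff_of_nonneg hδ0.le]
      simp [Real.norm_eq_abs]
    simp only [Set.mem_preimage, Set.mem_univ_pi, hA, Set.mem_inter_iff, Set.mem_setOf_eq,
      swapE_apply, hWfull, hTfull]
    constructor
    · intro h
      exact ⟨fun j c => (h c).1 j, fun i j => (hnorm i j).2 fun c => (h c).2 i j⟩
    · rintro ⟨h1, h2⟩
      exact fun c => ⟨fun j => h1 j c, fun i j => (hnorm i j).1 (h2 i j) c⟩
  have hvol : volume (Wfull ∩ Tfull) = volume A ^ d := by
    rw [← hpre, (swap_mp (k+1) d).measure_preimage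
      (MeasurableSet.univ_pi fun _ => hAm).nullMeasurableSet, volume_pi_pi,
      Finset.prod_const, Finset.card_univ, Fintype.card_fin]
  have hAfin : volume A ≠ ⊤ := by
    have hle : volume A ≤ volume (univ.pi fun _ : Fin (k+1) => Icc (-(1/2):ℝ) (1/2)) :=
      measure_mono Set.inter_subset_left
    refine ne_top_of_le_ne_top ?_ hle
    rw [volume_pi_pi]
    exact (ENNReal.prod_lt_top fun _ _ => by
      rw [Real.volume_Icc]; exact ENNReal.ofReal_lt_top).ne
  -- ENNReal bounds
  have hupE : volume A ≤ ENNReal.ofReal (δ^k * ((k:ℝ)+1)) := by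
    refine le_trans (oneD_upper k hδ0) (le_of_eq ?_)
    rw [← ENNReal.ofReal_pow hδ0.le,
      show ((k+1 : ℕ) : ℝ≥0∞) = ENNReal.ofReal ((k+1 : ℕ) : ℝ) from
        (ENNReal.ofReal_natCast _).symm,
      ← ENNReal.ofReal_mul (by positivity)]
    congr 1
    push_cast
    ring
  have hloE : ENNReal.ofReal ((1 - 2*δ) * δ^k * ((k:ℝ)+1)) ≤ volume A := by
    refine le_trans ?_ (oneD_lower k hδ0 hδ1)
    rw [← ENNReal.ofReal_pow hδ0.le,
      show ((k+1 : ℕ) : ℝ≥0∞) = ENNReal.ofReal ((k+1 : ℕ) : ℝ) from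
        (ENNReal.ofReal_natCast _).symm,
      ← ENNReal.ofReal_mul (by linarith : (0:ℝ) ≤ 1 - δ),
      ← ENNReal.ofReal_mul (by positivity : (0:ℝ) ≤ ((k+1 : ℕ) : ℝ))]
    refine ENNReal.ofReal_le_ofReal ?_
    have h1 : (0:ℝ) ≤ δ^k := by positivity
    have key : (1 - 2*δ) * (δ^k * ((k:ℝ)+1)) ≤ (1-δ) * (δ^k * ((k:ℝ)+1)) :=
      mul_le_mul_of_nonneg_right (by linarith) (by positivity)
    push_cast
    nlinarith [key]
  -- real bounds
  have hJup : (volume A).toReal ≤ δ^k * ((k:ℝ)+1) := by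
    have := ENNReal.toReal_mono ENNReal.ofReal_ne_top hupE
    rwa [ENNReal.toReal_ofReal (by positivity)] at this
  have h12 : (0:ℝ) < 1 - 2*δ := by linarith
  have hJlo : (1 - 2*δ) * δ^k * ((k:ℝ)+1) ≤ (volume A).toReal := by
    have := (ENNReal.toReal_le_toReal ENNReal.ofReal_ne_top hAfin).2 hloE
    rwa [ENNReal.toReal_ofReal (by positivity)] at this
  have hIeq : (∫ y in Wfull, ind (∀ i j : Fin (k + 1), ‖y j - y i‖ ≤ δ))
      = (volume A).toReal ^ d := by
    rw [hint, hvol, ENNReal.toReal_pow]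
  rw [hIeq]
  constructor
  · have heq : (1 - 2 * δ) ^ d * δ ^ (d * k) * ((k : ℝ) + 1) ^ d
        = ((1 - 2*δ) * δ^k * ((k:ℝ)+1)) ^ d := by
      rw [mul_pow, mul_pow, ← pow_mul, Nat.mul_comm k d]
    rw [heq]
    exact pow_le_pow_left₀ (by positivity) hJlo d
  · have heq : δ ^ (d * k) * ((k : ℝ) + 1) ^ d = (δ^k * ((k:ℝ)+1)) ^ d := by
      rw [mul_pow, ← pow_mul, Nat.mul_comm k d]
    rw [heq]
    exact pow_le_pow_left₀ ENNReal.toReal_nonneg hJup d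
end

section
/- For all integers d ≥ 1, k ≥ 1, every integer r with 1 ≤ r ≤ k and every real δ ∈ (0, 1/4), the Lebesgue integral I_r := ∫_{W^{2k+2−r}} h_δ(y_0,…,y_k) · h_δ(y_0,…,y_{r−1}, z_0,…,z_{k−r}) dy_0 ⋯ dy_k dz_0 ⋯ dz_{k−r} satisfies (1 − 2δ)^d · δ^{d(2k+1−r)} · ( 2(k+2)(k+1−r)/(r+1) + r )^d ≤ I_r ≤ δ^{d(2k+1−r)} · ( 2(k+2)(k+1−r)/(r+1) + r )^d. -/
open MeasureTheory

/-- All points of a set `P ⊆ ℝ^d` (with the sup norm) are pairwise within distance `δ`. -/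
def closeP {d : ℕ} (δ : ℝ) (P : Set (Fin d → ℝ)) : Prop :=
  ∀ a ∈ P, ∀ b ∈ P, ‖a - b‖ ≤ δ

open intervalIntegral Set

noncomputable section
namespace Stmt9

/-- auxiliary: integral of a quadratic-plus-power polynomial -/
lemma integral_poly (a b A B K : ℝ) (p : ℕ) :
    ∫ t in a..b, (A + B*t + K*t^p) =
      A*(b-a) + B*((b^2-a^2)/2) + K*((b^(p+1)-a^(p+1))/((p:ℝ)+1)) := by
  have h1 : IntervalIntegrable (fun t : ℝ => A + B*t) volume a b := by
    apply Continuous.intervalIntegrable; fun_prop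
  have h2 : IntervalIntegrable (fun t : ℝ => K*t^p) volume a b := by
    apply Continuous.intervalIntegrable; fun_prop
  rw [intervalIntegral.integral_add h1 h2]
  have h3 : IntervalIntegrable (fun t : ℝ => B*t) volume a b := by
    apply Continuous.intervalIntegrable; fun_prop
  rw [intervalIntegral.integral_add (intervalIntegrable_const) h3,
    intervalIntegral.integral_const, intervalIntegral.integral_const_mul,
    intervalIntegral.integral_const_mul, integral_id, integral_pow]
  simp only [smul_eq_mul]
  push_cast; ring

variable (δ : ℝ)

def phi (n : ℕ) (s : ℝ) : ℝ := ((n:ℝ)+1) * δ^n - (n:ℝ) * s * δ^(n-1)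

lemma phi_cont (n : ℕ) : Continuous (phi δ n) := by unfold phi; fun_prop

lemma phi_nonneg (hδ : 0 ≤ δ) (n : ℕ) {s : ℝ} (h0 : 0 ≤ s) (h1 : s ≤ δ) :
    0 ≤ phi δ n s := by
  cases n with
  | zero => simp [phi]
  | succ i =>
    have hp : (0:ℝ) ≤ δ^i := pow_nonneg hδ i
    have : ((i:ℝ)+1) * s * δ^i ≤ ((i:ℝ)+1) * δ * δ^i := by
      gcongr
    simp only [phi, Nat.add_sub_cancel, Nat.cast_succ]
    nlinarith [pow_nonneg hδ (i+1), pow_succ δ i]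

lemma phi_step (n : ℕ) (s : ℝ) :
    s * phi δ n s + 2 * ∫ t in s..δ, phi δ n t = phi δ (n+1) s := by
  cases n with
  | zero =>
    have h : phi δ 0 = fun t : ℝ => (1:ℝ) + 0*t + 0*t^0 := by
      funext t; simp [phi]
    rw [h, integral_poly]
    simp [phi]
    all_goals ring
  | succ i =>
    have h : phi δ (i+1) = fun t : ℝ =>
        (((i:ℝ)+2) * δ^(i+1) + (-(((i:ℝ)+1) * δ^i))*t + 0*t^0) := by
      funext t; simp [phi]; push_cast; ring
    rw [h, integral_poly]
    simp only [phi, Nat.add_sub_cancel]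
    have e1 : δ^(i+1) = δ^i*δ := by ring
    have e2 : δ^(i+1+1) = δ^i*δ*δ := by ring
    simp only [e1, e2]
    push_cast
    ring

variable (C0 C1 C2 : ℝ)

/-- coefficients of the polynomial `ψ_j` -/
def psiA (j : ℕ) : ℝ :=
  ((j:ℝ)+1)*C0*δ^j - (j:ℝ)*C1*δ^(j+1) + ((j:ℝ)*((j:ℝ)+1)/((j:ℝ)+2))*C2*δ^(j+2)

def psiB (j : ℕ) : ℝ :=
  -((j:ℝ)*C0*δ^(j-1) - ((j:ℝ)-1)*C1*δ^j + ((j:ℝ)*((j:ℝ)-1)/((j:ℝ)+1))*C2*δ^(j+1))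

def psi (j : ℕ) (s : ℝ) : ℝ :=
  psiA δ C0 C1 C2 j + psiB δ C0 C1 C2 j * s
    + (2*C2/(((j:ℝ)+1)*((j:ℝ)+2))) * s^(j+2)

lemma psi_cont (j : ℕ) : Continuous (psi δ C0 C1 C2 j) := by unfold psi; fun_prop

lemma psi_zero_eval (j : ℕ) : psi δ C0 C1 C2 j 0 = psiA δ C0 C1 C2 j := by
  simp [psi, zero_pow (by omega : j+2 ≠ 0)]

lemma psi_step (j : ℕ) (s : ℝ) :
    s * psi δ C0 C1 C2 j s + 2 * ∫ t in s..δ, psi δ C0 C1 C2 j t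
      = psi δ C0 C1 C2 (j+1) s := by
  have h : psi δ C0 C1 C2 j = fun t : ℝ =>
      psiA δ C0 C1 C2 j + psiB δ C0 C1 C2 j * t
        + (2*C2/(((j:ℝ)+1)*((j:ℝ)+2))) * t^(j+2) := rfl
  rw [h, integral_poly]
  cases j with
  | zero =>
    simp only [psi, psiA, psiB]
    norm_num
    ring
  | succ i =>
    simp only [psi, psiA, psiB, Nat.add_sub_cancel]
    push_cast
    have h2 : ((i:ℝ)+2) ≠ 0 := by positivity
    have h3 : ((i:ℝ)+3) ≠ 0 := by positivity
    have h4 : ((i:ℝ)+4) ≠ 0 := by positivity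
    have h5 : ((i:ℝ)+1+1) = (i:ℝ)+2 := by ring
    have e1 : δ^(i+1+1) = δ^i*δ*δ := by ring
    have e2 : δ^(i+1+2) = δ^i*δ*δ*δ := by ring
    have e3 : δ^(i+1+1+1) = δ^i*δ*δ*δ := by ring
    have e4 : δ^(i+1+1+2) = δ^i*δ*δ*δ*δ := by ring
    have e5 : δ^(i+1+2+1) = δ^i*δ*δ*δ*δ := by ring
    have e6 : δ^(i+1) = δ^i*δ := by ring
    have f1 : s^(i+1+2) = s^i*s*s*s := by ring
    have f2 : s^(i+1+1+2) = s^i*s*s*s*s := by ring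
    have f3 : s^(i+1+2+1) = s^i*s*s*s*s := by ring
    simp only [e1, e2, e3, e4, e5, e6, f1, f2, f3]
    field_simp
    ring


def Cz (m : ℕ) : ℝ := ((m:ℝ)+1)^2 * δ^(2*m)
def Co (m : ℕ) : ℝ := 2*(m:ℝ)*((m:ℝ)+1) * δ^(2*m-1)
def Ct (m : ℕ) : ℝ := (m:ℝ)^2 * δ^(2*m-2)

def psim (m j : ℕ) (s : ℝ) : ℝ := psi δ (Cz δ m) (Co δ m) (Ct δ m) j s

lemma psim_zero (m : ℕ) (hm : 1 ≤ m) (s : ℝ) : psim δ m 0 s = (phi δ m s)^2 := by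
  obtain ⟨i, rfl⟩ : ∃ i, m = i + 1 := ⟨m - 1, by omega⟩
  simp only [psim, psi, psiA, psiB, Cz, Co, Ct, phi, Nat.add_sub_cancel,
    show 2*(i+1)-1 = 2*i+1 from by omega, show 2*(i+1)-2 = 2*i from by omega]
  push_cast
  have g1 : δ^(2*(i+1)) = δ^(2*i)*(δ*δ) := by ring
  have g2 : δ^(2*i+1) = δ^(2*i)*δ := by ring
  have g3 : δ^(i+1) = δ^i*δ := by ring
  have g4 : δ^(2*i) = δ^i*δ^i := by ring
  simp only [g1, g2, g3, g4]
  norm_num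
  ring

lemma psiA_value (m j : ℕ) (hm : 1 ≤ m) :
    psiA δ (Cz δ m) (Co δ m) (Ct δ m) j
      = δ^(2*m+j) * (2*(((j:ℝ)+(m:ℝ)+1)+1)*(m:ℝ)/((j:ℝ)+2) + ((j:ℝ)+1)) := by
  obtain ⟨i, rfl⟩ : ∃ i, m = i + 1 := ⟨m - 1, by omega⟩
  simp only [psiA, Cz, Co, Ct, Nat.add_sub_cancel,
    show 2*(i+1)-1 = 2*i+1 from by omega, show 2*(i+1)-2 = 2*i from by omega]
  push_cast
  have g1 : δ^(2*(i+1)) = δ^(2*i)*(δ*δ) := by ring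
  have g2 : δ^(2*i+1) = δ^(2*i)*δ := by ring
  have g3 : δ^(j+1) = δ^j*δ := by ring
  have g4 : δ^(j+2) = δ^j*(δ*δ) := by ring
  have g5 : δ^(2*(i+1)+j) = δ^(2*i)*δ^j*(δ*δ) := by ring
  simp only [g1, g2, g3, g4, g5]
  have h2 : ((j:ℝ)+2) ≠ 0 := by positivity
  field_simp
  ring


/-- all points of the family `c` lie in the window `[y-δ, x+δ]` and are pairwise `δ`-close -/
def Good {ι : Type*} (x y : ℝ) (c : ι → ℝ) : Prop :=
  (∀ i, y - δ ≤ c i ∧ c i ≤ x + δ) ∧ ∀ i i', |c i - c i'| ≤ δ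

/-- running minimum of `x` and the values of `c` -/
def MinA : {j : ℕ} → ℝ → (Fin j → ℝ) → ℝ
  | 0, x, _ => x
  | _+1, x, c => MinA (min x (c 0)) (fun i => c i.succ)

def MaxA : {j : ℕ} → ℝ → (Fin j → ℝ) → ℝ
  | 0, y, _ => y
  | _+1, y, c => MaxA (max y (c 0)) (fun i => c i.succ)

lemma MinA_zero (x : ℝ) (c : Fin 0 → ℝ) : MinA x c = x := rfl
lemma MaxA_zero (y : ℝ) (c : Fin 0 → ℝ) : MaxA y c = y := rfl

lemma MinA_cons {j : ℕ} (x w : ℝ) (c : Fin j → ℝ) :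
    MinA x (Fin.cons w c) = MinA (min x w) c := by
  simp only [MinA, Fin.cons_zero, Fin.cons_succ]

lemma MaxA_cons {j : ℕ} (y w : ℝ) (c : Fin j → ℝ) :
    MaxA y (Fin.cons w c) = MaxA (max y w) c := by
  simp only [MaxA, Fin.cons_zero, Fin.cons_succ]

lemma le_MinA_iff {j : ℕ} (z x : ℝ) (c : Fin j → ℝ) :
    z ≤ MinA x c ↔ z ≤ x ∧ ∀ i, z ≤ c i := by
  induction j generalizing x with
  | zero => simp [MinA_zero]
  | succ n ih =>
    simp only [MinA]
    rw [ih, le_min_iff]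
    constructor
    · rintro ⟨⟨h1, h2⟩, h3⟩
      refine ⟨h1, fun i => ?_⟩
      induction i using Fin.cases with
      | zero => exact h2
      | succ i => exact h3 i
    · rintro ⟨h1, h2⟩
      exact ⟨⟨h1, h2 0⟩, fun i => h2 i.succ⟩

lemma MaxA_le_iff {j : ℕ} (z y : ℝ) (c : Fin j → ℝ) :
    MaxA y c ≤ z ↔ y ≤ z ∧ ∀ i, c i ≤ z := by
  induction j generalizing y with
  | zero => simp [MaxA_zero]
  | succ n ih =>
    simp only [MaxA]
    rw [ih, max_le_iff]
    constructor
    · rintro ⟨⟨h1, h2⟩, h3⟩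
      refine ⟨h1, fun i => ?_⟩
      induction i using Fin.cases with
      | zero => exact h2
      | succ i => exact h3 i
    · rintro ⟨h1, h2⟩
      exact ⟨⟨h1, h2 0⟩, fun i => h2 i.succ⟩

lemma continuous_MinA {j : ℕ} : Continuous (fun q : ℝ × (Fin j → ℝ) => MinA q.1 q.2) := by
  induction j with
  | zero => exact continuous_fst
  | succ n ih =>
    have h : (fun q : ℝ × (Fin (n+1) → ℝ) => MinA q.1 q.2)
        = (fun q : ℝ × (Fin n → ℝ) => MinA q.1 q.2) ∘
          (fun q : ℝ × (Fin (n+1) → ℝ) => (min q.1 (q.2 0), fun i : Fin n => q.2 i.succ)) := rfl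
    rw [h]
    exact ih.comp ((continuous_fst.min ((continuous_apply 0).comp continuous_snd)).prodMk
      (continuous_pi fun i : Fin n => (continuous_apply i.succ).comp continuous_snd))

lemma continuous_MaxA {j : ℕ} : Continuous (fun q : ℝ × (Fin j → ℝ) => MaxA q.1 q.2) := by
  induction j with
  | zero => exact continuous_fst
  | succ n ih =>
    have h : (fun q : ℝ × (Fin (n+1) → ℝ) => MaxA q.1 q.2)
        = (fun q : ℝ × (Fin n → ℝ) => MaxA q.1 q.2) ∘
          (fun q : ℝ × (Fin (n+1) → ℝ) => (max q.1 (q.2 0), fun i : Fin n => q.2 i.succ)) := rfl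
    rw [h]
    exact ih.comp ((continuous_fst.max ((continuous_apply 0).comp continuous_snd)).prodMk
      (continuous_pi fun i : Fin n => (continuous_apply i.succ).comp continuous_snd))

lemma measurableSet_goodJ {j : ℕ} :
    MeasurableSet {q : (ℝ × ℝ) × (Fin j → ℝ) | Good δ q.1.1 q.1.2 q.2} := by
  have h : {q : (ℝ × ℝ) × (Fin j → ℝ) | Good δ q.1.1 q.1.2 q.2} =
      (⋂ i, ({q : (ℝ × ℝ) × (Fin j → ℝ) | q.1.2 - δ ≤ q.2 i} ∩
             {q | q.2 i ≤ q.1.1 + δ})) ∩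
      ⋂ i, ⋂ i', {q : (ℝ × ℝ) × (Fin j → ℝ) | |q.2 i - q.2 i'| ≤ δ} := by
    ext q; simp [Good, forall_and]
  rw [h]
  have hev : ∀ i : Fin j, Measurable (fun q : (ℝ × ℝ) × (Fin j → ℝ) => q.2 i) :=
    fun i => (measurable_pi_apply i).comp measurable_snd
  refine MeasurableSet.inter ?_ ?_
  · refine MeasurableSet.iInter fun i => MeasurableSet.inter ?_ ?_
    · exact measurableSet_le ((measurable_snd.comp measurable_fst).sub measurable_const) (hev i)
    · exact measurableSet_le (hev i) ((measurable_fst.comp measurable_fst).add measurable_const)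
  · refine MeasurableSet.iInter fun i => MeasurableSet.iInter fun i' => ?_
    exact measurableSet_le ((hev i).sub (hev i')).abs measurable_const

lemma window_minmax (x y w z : ℝ) :
    (max y w - δ ≤ z ∧ z ≤ min x w + δ) ↔ ((y - δ ≤ z ∧ z ≤ x + δ) ∧ |z - w| ≤ δ) := by
  have hmin : min x w + δ = min (x+δ) (w+δ) := (min_add_add_right x w δ).symm
  rw [abs_le, sub_le_iff_le_add, max_le_iff, hmin, le_min_iff]
  constructor
  · rintro ⟨⟨h1, h2⟩, h3, h4⟩
    exact ⟨⟨by linarith, by linarith⟩, by linarith, by linarith⟩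
  · rintro ⟨⟨h1, h2⟩, h3, h4⟩
    exact ⟨⟨by linarith, by linarith⟩, by linarith, by linarith⟩

lemma good_cons {j : ℕ} (hδ : 0 ≤ δ) (x y w : ℝ) (c : Fin j → ℝ) :
    Good δ x y (Fin.cons w c) ↔
      ((y - δ ≤ w ∧ w ≤ x + δ) ∧ Good δ (min x w) (max y w) c) := by
  simp only [Good, Fin.forall_fin_succ, Fin.cons_zero, Fin.cons_succ]
  constructor
  · rintro ⟨⟨hw, hc⟩, ⟨⟨_, hwc⟩, hcw⟩⟩
    refine ⟨hw, fun i => (window_minmax δ x y w (c i)).2 ⟨hc i, (hcw i).1⟩,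
      fun i => (hcw i).2⟩
  · rintro ⟨hw, hb, hp⟩
    refine ⟨⟨hw, fun i => ((window_minmax δ x y w (c i)).1 (hb i)).1⟩,
      ⟨⟨by simpa using hδ, fun i' => ?_⟩,
       fun i => ⟨((window_minmax δ x y w (c i)).1 (hb i)).2, fun i' => hp i i'⟩⟩⟩
    rw [abs_sub_comm]
    exact ((window_minmax δ x y w (c i')).1 (hb i')).2

lemma sliceIntegral (hδ : 0 ≤ δ) (g : ℝ → ℝ) (hg : Continuous g)
    (hgpos : ∀ t ∈ Icc 0 δ, 0 ≤ g t) {x y : ℝ} (hxy : x ≤ y) (hyx : y - x ≤ δ) :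
    ∫⁻ w in Icc (y-δ) (x+δ), ENNReal.ofReal (g (max y w - min x w))
      = ENNReal.ofReal ((y-x) * g (y-x) + 2 * ∫ t in (y-x)..δ, g t) := by
  have hyd : y - δ ≤ x := by linarith
  have hxd : y ≤ x + δ := by linarith
  have hcont : Continuous (fun w => g (max y w - min x w)) :=
    hg.comp ((continuous_const.max continuous_id).sub (continuous_const.min continuous_id))
  have hspan : ∀ w, w ∈ Icc (y-δ) (x+δ) → (max y w - min x w) ∈ Icc 0 δ := by
    intro w hw
    rcases hw with ⟨hw1, hw2⟩
    have hminx := min_le_left x w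
    have hmaxy := le_max_left y w
    constructor
    · linarith
    · have h3 : max y w ≤ min x w + δ := by
        have hmin : min x w + δ = min (x+δ) (w+δ) := (min_add_add_right x w δ).symm
        rw [hmin, max_le_iff, le_min_iff, le_min_iff]
        exact ⟨⟨hxd, by linarith⟩, ⟨hw2, by linarith⟩⟩
      linarith
  rw [← MeasureTheory.ofReal_integral_eq_lintegral_ofReal]
  rotate_left
  · exact hcont.integrableOn_Icc
  · filter_upwards [ae_restrict_mem measurableSet_Icc] with w hw
    exact hgpos _ (hspan w hw)
  congr 1
  rw [MeasureTheory.integral_Icc_eq_integral_Ioc,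
    ← intervalIntegral.integral_of_le (by linarith : y - δ ≤ x + δ)]
  have hii : ∀ a b : ℝ, IntervalIntegrable (fun w => g (max y w - min x w)) volume a b :=
    fun a b => hcont.intervalIntegrable a b
  rw [← intervalIntegral.integral_add_adjacent_intervals (hii (y-δ) x) (hii x (x+δ)),
    ← intervalIntegral.integral_add_adjacent_intervals (hii x y) (hii y (x+δ))]
  have e1 : ∫ w in (y-δ)..x, g (max y w - min x w) = ∫ w in (y-δ)..x, g (y - w) := by
    apply intervalIntegral.integral_congr
    intro w hw
    dsimp only
    rw [uIcc_of_le hyd] at hw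
    rw [min_eq_right hw.2, max_eq_left (le_trans hw.2 hxy)]
  have e2 : ∫ w in x..y, g (max y w - min x w) = ∫ w in x..y, g (y - x) := by
    apply intervalIntegral.integral_congr
    intro w hw
    dsimp only
    rw [uIcc_of_le hxy] at hw
    rw [min_eq_left hw.1, max_eq_left hw.2]
  have e3 : ∫ w in y..(x+δ), g (max y w - min x w) = ∫ w in y..(x+δ), g (w - x) := by
    apply intervalIntegral.integral_congr
    intro w hw
    dsimp only
    rw [uIcc_of_le hxd] at hw
    rw [min_eq_left (le_trans hxy hw.1), max_eq_right hw.1]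
  rw [e1, e2, e3]
  rw [intervalIntegral.integral_comp_sub_left (fun t => g t) y,
    intervalIntegral.integral_comp_sub_right (fun t => g t) x,
    intervalIntegral.integral_const]
  have b1 : y - (y - δ) = δ := by ring
  have b2 : x + δ - x = δ := by ring
  rw [b1, b2, smul_eq_mul]
  ring

section GEN

variable {β : Type*} [MeasureSpace β] [SigmaFinite (volume : Measure β)]

def SGen (K : ℝ → ℝ → Set β) (j : ℕ) (x y : ℝ) : Set ((Fin j → ℝ) × β) :=
  {q | Good δ x y q.1 ∧ q.2 ∈ K (MinA x q.1) (MaxA y q.1)}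

lemma measurableSet_SGen (K : ℝ → ℝ → Set β)
    (hK : MeasurableSet {q : (ℝ × ℝ) × β | q.2 ∈ K q.1.1 q.1.2}) (j : ℕ) (x y : ℝ) :
    MeasurableSet (SGen δ K j x y) := by
  have h1 : MeasurableSet {q : (Fin j → ℝ) × β | Good δ x y q.1} := by
    have h : {q : (Fin j → ℝ) × β | Good δ x y q.1}
        = (fun q : (Fin j → ℝ) × β => (((x, y) : ℝ × ℝ), q.1)) ⁻¹'
          {q : (ℝ × ℝ) × (Fin j → ℝ) | Good δ q.1.1 q.1.2 q.2} := rfl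
    rw [h]
    exact (measurable_const.prodMk measurable_fst) (measurableSet_goodJ δ)
  have h2 : MeasurableSet {q : (Fin j → ℝ) × β | q.2 ∈ K (MinA x q.1) (MaxA y q.1)} := by
    have h : {q : (Fin j → ℝ) × β | q.2 ∈ K (MinA x q.1) (MaxA y q.1)}
        = (fun q : (Fin j → ℝ) × β => (((MinA x q.1, MaxA y q.1) : ℝ × ℝ), q.2)) ⁻¹'
          {q : (ℝ × ℝ) × β | q.2 ∈ K q.1.1 q.1.2} := rfl
    rw [h]
    have hmin : Measurable (fun q : (Fin j → ℝ) × β => MinA x q.1) :=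
      continuous_MinA.measurable.comp (measurable_const.prodMk measurable_fst)
    have hmax : Measurable (fun q : (Fin j → ℝ) × β => MaxA y q.1) :=
      continuous_MaxA.measurable.comp (measurable_const.prodMk measurable_fst)
    exact ((hmin.prodMk hmax).prodMk measurable_snd) hK
  exact h1.inter h2

lemma volume_SGen (hδ : 0 ≤ δ) (K : ℝ → ℝ → Set β)
    (hK : MeasurableSet {q : (ℝ × ℝ) × β | q.2 ∈ K q.1.1 q.1.2})
    (G : ℕ → ℝ → ℝ) (hGcont : ∀ j, Continuous (G j))
    (hGpos : ∀ j, ∀ s ∈ Icc 0 δ, 0 ≤ G j s)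
    (hGstep : ∀ j s, s * G j s + 2 * ∫ t in s..δ, G j t = G (j+1) s)
    (hbase : ∀ x y, x ≤ y → y - x ≤ δ → volume (K x y) = ENNReal.ofReal (G 0 (y-x))) :
    ∀ j x y, x ≤ y → y - x ≤ δ →
      volume (SGen δ K j x y) = ENNReal.ofReal (G j (y-x)) := by
  intro j
  induction j with
  | zero =>
    intro x y h1 h2
    have h : SGen δ K 0 x y = (univ : Set (Fin 0 → ℝ)) ×ˢ K x y := by
      ext q
      simp only [SGen, mem_setOf_eq, mem_prod, mem_univ, true_and]
      have hg : Good δ x y q.1 := ⟨fun i => i.elim0, fun i => i.elim0⟩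
      rw [MinA_zero, MaxA_zero]
      tauto
    rw [h, Measure.volume_eq_prod, Measure.prod_prod, hbase x y h1 h2]
    have : volume (univ : Set (Fin 0 → ℝ)) = 1 := by
      rw [show (univ : Set (Fin 0 → ℝ)) = Set.univ.pi (fun _ => univ) from (by simp),
        volume_pi_pi]
      simp
    rw [this, one_mul]
  | succ n ih =>
    intro x y h1 h2
    set F : ℝ × ((Fin n → ℝ) × β) → (Fin (n+1) → ℝ) × β :=
      fun q => (Fin.cons q.1 q.2.1, q.2.2) with hF
    set e := MeasurableEquiv.piFinSuccAbove (fun _ : Fin (n+1) => ℝ) 0 with he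
    have hcons : ∀ (w : ℝ) (u : Fin n → ℝ), e.symm (w, u) = Fin.cons w u := by
      intro w u
      funext i
      refine Fin.cases ?_ (fun i => ?_) i
      · simp [he, MeasurableEquiv.piFinSuccAbove, Fin.insertNth_apply_same]
      · rw [show i.succ = (0 : Fin (n+1)).succAbove i from (Fin.zero_succAbove i).symm]
        simp [he, MeasurableEquiv.piFinSuccAbove, Fin.insertNth_apply_succAbove]
    have mp1 : MeasurePreserving e.symm volume volume :=
      (volume_preserving_piFinSuccAbove (fun _ : Fin (n+1) => ℝ) 0).symm e
    have mp2 : MeasurePreserving (Prod.map (⇑e.symm) (id : β → β)) volume volume :=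
      mp1.prod (MeasurePreserving.id _)
    have mp3 : MeasurePreserving
        (⇑(MeasurableEquiv.prodAssoc.symm : ℝ × ((Fin n → ℝ) × β) ≃ᵐ (ℝ × (Fin n → ℝ)) × β))
        volume volume :=
      (volume_preserving_prodAssoc).symm MeasurableEquiv.prodAssoc
    have mpF : MeasurePreserving F volume volume := by
      have h : F = (Prod.map (⇑e.symm) (id : β → β)) ∘
          (⇑(MeasurableEquiv.prodAssoc.symm : ℝ × ((Fin n → ℝ) × β) ≃ᵐ (ℝ × (Fin n → ℝ)) × β)) := by
        funext q
        obtain ⟨w, u, p⟩ := q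
        show (Fin.cons w u, p) = (e.symm (w, u), id p)
        rw [hcons]
        rfl
      rw [h]
      exact mp2.comp mp3
    have hSmeas := measurableSet_SGen δ K hK (n+1) x y
    rw [← mpF.measure_preimage hSmeas.nullMeasurableSet]
    have hpre : F ⁻¹' (SGen δ K (n+1) x y) =
        {q : ℝ × ((Fin n → ℝ) × β) | (y - δ ≤ q.1 ∧ q.1 ≤ x + δ) ∧
          q.2 ∈ SGen δ K n (min x q.1) (max y q.1)} := by
      ext ⟨w, u, p⟩
      simp only [hF, SGen, mem_preimage, mem_setOf_eq]
      rw [good_cons δ hδ, MinA_cons, MaxA_cons, and_assoc]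
    rw [hpre, Measure.volume_eq_prod, Measure.prod_apply]
    swap
    · have hm1 : MeasurableSet {q : ℝ × ((Fin n → ℝ) × β) | y - δ ≤ q.1 ∧ q.1 ≤ x + δ} := by
        refine (measurableSet_le measurable_const measurable_fst).inter
          (measurableSet_le measurable_fst measurable_const)
      have hm2 : MeasurableSet {q : ℝ × ((Fin n → ℝ) × β) |
          q.2 ∈ SGen δ K n (min x q.1) (max y q.1)} := by
        have hsplit : {q : ℝ × ((Fin n → ℝ) × β) | q.2 ∈ SGen δ K n (min x q.1) (max y q.1)}
            = {q : ℝ × ((Fin n → ℝ) × β) | Good δ (min x q.1) (max y q.1) q.2.1} ∩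
              {q : ℝ × ((Fin n → ℝ) × β) |
                q.2.2 ∈ K (MinA (min x q.1) q.2.1) (MaxA (max y q.1) q.2.1)} := by
          ext q; simp [SGen]
        rw [hsplit]
        have hmx : Measurable (fun q : ℝ × ((Fin n → ℝ) × β) => min x q.1) :=
          (measurable_const.min measurable_fst)
        have hmy : Measurable (fun q : ℝ × ((Fin n → ℝ) × β) => max y q.1) :=
          (measurable_const.max measurable_fst)
        have hu : Measurable (fun q : ℝ × ((Fin n → ℝ) × β) => q.2.1) :=
          measurable_fst.comp measurable_snd
        have hp : Measurable (fun q : ℝ × ((Fin n → ℝ) × β) => q.2.2) :=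
          measurable_snd.comp measurable_snd
        refine MeasurableSet.inter ?_ ?_
        · have h : {q : ℝ × ((Fin n → ℝ) × β) | Good δ (min x q.1) (max y q.1) q.2.1}
              = (fun q : ℝ × ((Fin n → ℝ) × β) => ((min x q.1, max y q.1), q.2.1)) ⁻¹'
                {q : (ℝ × ℝ) × (Fin n → ℝ) | Good δ q.1.1 q.1.2 q.2} := rfl
          rw [h]
          exact ((hmx.prodMk hmy).prodMk hu) (measurableSet_goodJ δ)
        · have h : {q : ℝ × ((Fin n → ℝ) × β) |
              q.2.2 ∈ K (MinA (min x q.1) q.2.1) (MaxA (max y q.1) q.2.1)}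
              = (fun q : ℝ × ((Fin n → ℝ) × β) =>
                  (((MinA (min x q.1) q.2.1, MaxA (max y q.1) q.2.1) : ℝ × ℝ), q.2.2)) ⁻¹'
                {q : (ℝ × ℝ) × β | q.2 ∈ K q.1.1 q.1.2} := rfl
          rw [h]
          have hmin : Measurable (fun q : ℝ × ((Fin n → ℝ) × β) => MinA (min x q.1) q.2.1) :=
            continuous_MinA.measurable.comp (hmx.prodMk hu)
          have hmax : Measurable (fun q : ℝ × ((Fin n → ℝ) × β) => MaxA (max y q.1) q.2.1) :=
            continuous_MaxA.measurable.comp (hmy.prodMk hu)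
          exact ((hmin.prodMk hmax).prodMk hp) hK
      exact hm1.inter hm2
    have hpt : ∀ w : ℝ, volume (Prod.mk w ⁻¹'
        {q : ℝ × ((Fin n → ℝ) × β) | (y - δ ≤ q.1 ∧ q.1 ≤ x + δ) ∧
          q.2 ∈ SGen δ K n (min x q.1) (max y q.1)}) =
        (Icc (y-δ) (x+δ)).indicator
          (fun w => ENNReal.ofReal (G n (max y w - min x w))) w := by
      intro w
      by_cases hw : w ∈ Icc (y-δ) (x+δ)
      · have hpre2 : Prod.mk w ⁻¹'
            {q : ℝ × ((Fin n → ℝ) × β) | (y - δ ≤ q.1 ∧ q.1 ≤ x + δ) ∧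
              q.2 ∈ SGen δ K n (min x q.1) (max y q.1)}
            = SGen δ K n (min x w) (max y w) := by
          ext p
          simp only [mem_preimage, mem_setOf_eq]
          rcases hw with ⟨hw1, hw2⟩
          tauto
        rw [hpre2, indicator_of_mem hw]
        have hle : min x w ≤ max y w :=
          le_trans (min_le_left x w) (le_trans h1 (le_max_left y w))
        have hsp : max y w - min x w ≤ δ := by
          rcases hw with ⟨hw1, hw2⟩
          have hmin : min x w + δ = min (x+δ) (w+δ) := (min_add_add_right x w δ).symm
          have h3 : max y w ≤ min x w + δ := by
            rw [hmin, max_le_iff, le_min_iff, le_min_iff]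
            exact ⟨⟨by linarith, by linarith⟩, ⟨hw2, by linarith⟩⟩
          linarith
        exact ih (min x w) (max y w) hle hsp
      · have hpre2 : Prod.mk w ⁻¹'
            {q : ℝ × ((Fin n → ℝ) × β) | (y - δ ≤ q.1 ∧ q.1 ≤ x + δ) ∧
              q.2 ∈ SGen δ K n (min x q.1) (max y q.1)} = ∅ := by
          ext p
          simp only [mem_preimage, mem_setOf_eq, mem_empty_iff_false, iff_false]
          rw [mem_Icc] at hw
          tauto
        rw [hpre2, indicator_of_notMem hw]
        simp
    rw [lintegral_congr hpt, lintegral_indicator measurableSet_Icc,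
      sliceIntegral δ hδ (G n) (hGcont n) (hGpos n) h1 h2, hGstep n (y-x)]

end GEN

lemma volume_univ_fin0 : volume (univ : Set (Fin 0 → ℝ)) = 1 := by
  rw [show (univ : Set (Fin 0 → ℝ)) = Set.univ.pi (fun _ => univ) from (by simp),
    volume_pi_pi]
  simp

lemma psim_nonneg (hδ : 0 ≤ δ) (m : ℕ) (hm : 1 ≤ m) :
    ∀ j, ∀ s ∈ Icc (0:ℝ) δ, 0 ≤ psim δ m j s := by
  intro j
  induction j with
  | zero =>
    intro s hs
    rw [psim_zero δ m hm]
    positivity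
  | succ n ih =>
    intro s hs
    have h := psi_step δ (Cz δ m) (Co δ m) (Ct δ m) n s
    rw [psim, ← h]
    have h1 : 0 ≤ s * psi δ (Cz δ m) (Co δ m) (Ct δ m) n s :=
      mul_nonneg hs.1 (ih s hs)
    have h2 : 0 ≤ ∫ t in s..δ, psi δ (Cz δ m) (Co δ m) (Ct δ m) n t := by
      apply intervalIntegral.integral_nonneg hs.2
      intro t ht
      exact ih t ⟨le_trans hs.1 ht.1, ht.2⟩
    linarith

lemma volume_good (hδ : 0 ≤ δ) (n : ℕ) (x y : ℝ) (h1 : x ≤ y) (h2 : y - x ≤ δ) :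
    volume {c : Fin n → ℝ | Good δ x y c} = ENNReal.ofReal (phi δ n (y-x)) := by
  have hK : MeasurableSet {q : (ℝ × ℝ) × (Fin 0 → ℝ) | q.2 ∈ (univ : Set (Fin 0 → ℝ))} := by
    simp
  have hbase : ∀ x y : ℝ, x ≤ y → y - x ≤ δ →
      volume (univ : Set (Fin 0 → ℝ)) = ENNReal.ofReal (phi δ 0 (y-x)) := by
    intro x y _ _
    rw [volume_univ_fin0]
    simp [phi]
  have hmain := volume_SGen δ hδ (fun _ _ => (univ : Set (Fin 0 → ℝ))) hK (phi δ) (phi_cont δ)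
      (fun j s hs => phi_nonneg δ hδ j hs.1 hs.2) (phi_step δ) hbase n x y h1 h2
  have hS : SGen δ (fun _ _ => (univ : Set (Fin 0 → ℝ))) n x y
      = {c : Fin n → ℝ | Good δ x y c} ×ˢ (univ : Set (Fin 0 → ℝ)) := by
    ext q; simp [SGen]
  rw [hS, Measure.volume_eq_prod, Measure.prod_prod, volume_univ_fin0, mul_one] at hmain
  exact hmain

/-- the two-block constraint set -/
def K2 (m : ℕ) (x y : ℝ) : Set ((Fin m → ℝ) × (Fin m → ℝ)) :=
  {p | Good δ x y p.1 ∧ Good δ x y p.2}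

lemma measurableSet_K2J (m : ℕ) :
    MeasurableSet {q : (ℝ × ℝ) × ((Fin m → ℝ) × (Fin m → ℝ)) | q.2 ∈ K2 δ m q.1.1 q.1.2} := by
  have h : {q : (ℝ × ℝ) × ((Fin m → ℝ) × (Fin m → ℝ)) | q.2 ∈ K2 δ m q.1.1 q.1.2}
      = ((fun q : (ℝ × ℝ) × ((Fin m → ℝ) × (Fin m → ℝ)) => (q.1, q.2.1)) ⁻¹'
          {q : (ℝ × ℝ) × (Fin m → ℝ) | Good δ q.1.1 q.1.2 q.2}) ∩
        ((fun q : (ℝ × ℝ) × ((Fin m → ℝ) × (Fin m → ℝ)) => (q.1, q.2.2)) ⁻¹'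
          {q : (ℝ × ℝ) × (Fin m → ℝ) | Good δ q.1.1 q.1.2 q.2}) := rfl
  rw [h]
  exact ((measurable_fst.prodMk (measurable_fst.comp measurable_snd))
      (measurableSet_goodJ δ)).inter
    ((measurable_fst.prodMk (measurable_snd.comp measurable_snd)) (measurableSet_goodJ δ))

lemma volume_SGen_K2 (hδ : 0 ≤ δ) (m : ℕ) (hm : 1 ≤ m) (j : ℕ) (x y : ℝ)
    (h1 : x ≤ y) (h2 : y - x ≤ δ) :
    volume (SGen δ (K2 δ m) j x y) = ENNReal.ofReal (psim δ m j (y-x)) := by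
  apply volume_SGen δ hδ (K2 δ m) (measurableSet_K2J δ m) (psim δ m)
      (fun j => psi_cont δ _ _ _ j) (psim_nonneg δ hδ m hm)
      (fun j s => psi_step δ _ _ _ j s) ?_ j x y h1 h2
  intro x y hx hy
  have hsp0 : (0:ℝ) ≤ y - x := by linarith
  have hKeq : K2 δ m x y
      = {c : Fin m → ℝ | Good δ x y c} ×ˢ {c : Fin m → ℝ | Good δ x y c} := rfl
  rw [hKeq, Measure.volume_eq_prod, Measure.prod_prod, volume_good δ hδ m x y hx hy,
    ← ENNReal.ofReal_mul (phi_nonneg δ hδ m hsp0 hy), psim_zero δ m hm]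
  congr 1
  ring

lemma forall_fin_add {j m : ℕ} (P : Fin (j+m) → Prop) :
    (∀ i, P i) ↔ (∀ t : Fin j, P (Fin.castAdd m t)) ∧ (∀ t : Fin m, P (Fin.natAdd j t)) := by
  constructor
  · intro h; exact ⟨fun t => h _, fun t => h _⟩
  · rintro ⟨ha, hb⟩ i
    obtain ⟨s, rfl⟩ := finSumFinEquiv.surjective i
    cases s with
    | inl t => rw [finSumFinEquiv_apply_left]; exact ha t
    | inr t => rw [finSumFinEquiv_apply_right]; exact hb t

def combE (j m : ℕ) : ((Fin j → ℝ) × (Fin m → ℝ)) ≃ᵐ (Fin (j+m) → ℝ) :=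
  (MeasurableEquiv.sumPiEquivProdPi (fun _ : Fin j ⊕ Fin m => ℝ)).symm.trans
    (MeasurableEquiv.arrowCongr' (finSumFinEquiv : Fin j ⊕ Fin m ≃ Fin (j+m))
      (MeasurableEquiv.refl ℝ))

lemma combE_mp (j m : ℕ) : MeasurePreserving (⇑(combE j m)) volume volume := by
  have h1 := volume_measurePreserving_sumPiEquivProdPi_symm (fun _ : Fin j ⊕ Fin m => ℝ)
  have h2 := volume_preserving_arrowCongr' (finSumFinEquiv : Fin j ⊕ Fin m ≃ Fin (j+m))
      (MeasurableEquiv.refl ℝ) (MeasurePreserving.id volume)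
  have h : ⇑(combE j m) = ⇑(MeasurableEquiv.arrowCongr'
      (finSumFinEquiv : Fin j ⊕ Fin m ≃ Fin (j+m)) (MeasurableEquiv.refl ℝ)) ∘
      ⇑(MeasurableEquiv.sumPiEquivProdPi (fun _ : Fin j ⊕ Fin m => ℝ)).symm := rfl
  rw [h]
  exact h2.comp h1

lemma combE_castAdd {j m : ℕ} (a : Fin j → ℝ) (b : Fin m → ℝ) (t : Fin j) :
    combE j m (a, b) (Fin.castAdd m t) = a t := by
  show (MeasurableEquiv.arrowCongr' (finSumFinEquiv : Fin j ⊕ Fin m ≃ Fin (j+m))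
      (MeasurableEquiv.refl ℝ))
      ((MeasurableEquiv.sumPiEquivProdPi (fun _ : Fin j ⊕ Fin m => ℝ)).symm (a, b))
      (Fin.castAdd m t) = a t
  simp [MeasurableEquiv.arrowCongr', Equiv.arrowCongr', Equiv.arrowCongr,
    MeasurableEquiv.coe_sumPiEquivProdPi_symm, finSumFinEquiv_symm_apply_castAdd]

lemma combE_natAdd {j m : ℕ} (a : Fin j → ℝ) (b : Fin m → ℝ) (t : Fin m) :
    combE j m (a, b) (Fin.natAdd j t) = b t := by
  show (MeasurableEquiv.arrowCongr' (finSumFinEquiv : Fin j ⊕ Fin m ≃ Fin (j+m))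
      (MeasurableEquiv.refl ℝ))
      ((MeasurableEquiv.sumPiEquivProdPi (fun _ : Fin j ⊕ Fin m => ℝ)).symm (a, b))
      (Fin.natAdd j t) = b t
  simp [MeasurableEquiv.arrowCongr', Equiv.arrowCongr', Equiv.arrowCongr,
    MeasurableEquiv.coe_sumPiEquivProdPi_symm, finSumFinEquiv_symm_apply_natAdd]

lemma good_minmax_iff (x y : ℝ) {j m : ℕ} (a : Fin j → ℝ) (c : Fin m → ℝ) :
    Good δ (MinA x a) (MaxA y a) c ↔
      (∀ t, (y - δ ≤ c t ∧ c t ≤ x + δ) ∧ ∀ i, |c t - a i| ≤ δ) ∧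
        (∀ t t', |c t - c t'| ≤ δ) := by
  unfold Good
  constructor
  · rintro ⟨hb, hp⟩
    refine ⟨fun t => ?_, hp⟩
    have h1 := hb t
    have h2 : MaxA y a ≤ c t + δ := by linarith [h1.1]
    rw [MaxA_le_iff] at h2
    have h3 : c t - δ ≤ MinA x a := by linarith [h1.2]
    rw [le_MinA_iff] at h3
    exact ⟨⟨by linarith [h2.1], by linarith [h3.1]⟩,
      fun i => abs_le.2 ⟨by linarith [h2.2 i], by linarith [h3.2 i]⟩⟩
  · rintro ⟨hb, hp⟩
    refine ⟨fun t => ⟨?_, ?_⟩, hp⟩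
    · rw [sub_le_iff_le_add, MaxA_le_iff]
      refine ⟨by linarith [(hb t).1.1], fun i => ?_⟩
      have := (abs_le.1 ((hb t).2 i)).1
      linarith
    · rw [← sub_le_iff_le_add, le_MinA_iff]
      refine ⟨by linarith [(hb t).1.2], fun i => ?_⟩
      have := (abs_le.1 ((hb t).2 i)).2
      linarith

/-- the relative region for the 1-d problem -/
def R0 (j m : ℕ) : Set ((Fin (j+m) → ℝ) × (Fin m → ℝ)) :=
  {p | (∀ i, |p.1 i| ≤ δ) ∧ (∀ i i', |p.1 i - p.1 i'| ≤ δ) ∧ (∀ t, |p.2 t| ≤ δ) ∧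
       (∀ (i : Fin (j+m)) (t : Fin m), (i:ℕ) < j → |p.1 i - p.2 t| ≤ δ) ∧
       (∀ t t', |p.2 t - p.2 t'| ≤ δ)}

lemma measurableSet_R0 (j m : ℕ) : MeasurableSet (R0 δ j m) := by
  have hu : ∀ i : Fin (j+m), Measurable (fun p : (Fin (j+m) → ℝ) × (Fin m → ℝ) => p.1 i) :=
    fun i => (measurable_pi_apply i).comp measurable_fst
  have hv : ∀ t : Fin m, Measurable (fun p : (Fin (j+m) → ℝ) × (Fin m → ℝ) => p.2 t) :=
    fun t => (measurable_pi_apply t).comp measurable_snd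
  have h : R0 δ j m =
      (⋂ i, {p : (Fin (j+m) → ℝ) × (Fin m → ℝ) | |p.1 i| ≤ δ}) ∩
      ((⋂ i, ⋂ i', {p : (Fin (j+m) → ℝ) × (Fin m → ℝ) | |p.1 i - p.1 i'| ≤ δ}) ∩
       ((⋂ t, {p : (Fin (j+m) → ℝ) × (Fin m → ℝ) | |p.2 t| ≤ δ}) ∩
        ((⋂ i : Fin (j+m), ⋂ t : Fin m, {p : (Fin (j+m) → ℝ) × (Fin m → ℝ) | (i:ℕ) < j → |p.1 i - p.2 t| ≤ δ}) ∩
         (⋂ t, ⋂ t', {p : (Fin (j+m) → ℝ) × (Fin m → ℝ) | |p.2 t - p.2 t'| ≤ δ})))) := by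
    ext p; simp [R0, forall_and]
  rw [h]
  refine (MeasurableSet.iInter fun i =>
      measurableSet_le (hu i).abs measurable_const).inter
    ((MeasurableSet.iInter fun i => MeasurableSet.iInter fun i' =>
      measurableSet_le ((hu i).sub (hu i')).abs measurable_const).inter
    ((MeasurableSet.iInter fun t =>
      measurableSet_le (hv t).abs measurable_const).inter
    ((MeasurableSet.iInter fun i => MeasurableSet.iInter fun t => ?_).inter
    (MeasurableSet.iInter fun t => MeasurableSet.iInter fun t' =>
      measurableSet_le ((hv t).sub (hv t')).abs measurable_const))))
  by_cases hij : (i:ℕ) < j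
  · simp only [hij, true_implies]
    exact measurableSet_le ((hu i).sub (hv t)).abs measurable_const
  · simp only [hij, false_implies, setOf_true]
    exact MeasurableSet.univ

lemma volume_R0 (hδ : 0 ≤ δ) (j m : ℕ) (hm : 1 ≤ m) :
    volume (R0 δ j m) = ENNReal.ofReal (psim δ m j 0) := by
  set Φ : (Fin j → ℝ) × ((Fin m → ℝ) × (Fin m → ℝ)) → (Fin (j+m) → ℝ) × (Fin m → ℝ) :=
    fun q => (combE j m (q.1, q.2.1), q.2.2) with hΦ
  have mpΦ : MeasurePreserving Φ volume volume := by
    have h : Φ = (Prod.map (⇑(combE j m)) (id : (Fin m → ℝ) → (Fin m → ℝ))) ∘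
        (⇑(MeasurableEquiv.prodAssoc.symm :
          (Fin j → ℝ) × ((Fin m → ℝ) × (Fin m → ℝ)) ≃ᵐ
            ((Fin j → ℝ) × (Fin m → ℝ)) × (Fin m → ℝ))) := rfl
    rw [h]
    exact ((combE_mp j m).prod (MeasurePreserving.id _)).comp
      ((volume_preserving_prodAssoc).symm MeasurableEquiv.prodAssoc)
  rw [← mpΦ.measure_preimage (measurableSet_R0 δ j m).nullMeasurableSet]
  have hpre : Φ ⁻¹' (R0 δ j m) = SGen δ (K2 δ m) j 0 0 := by
    ext ⟨a, b, v⟩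
    simp only [hΦ, R0, SGen, K2, mem_preimage, mem_setOf_eq]
    rw [forall_fin_add (P := fun i => |combE j m (a, b) i| ≤ δ)]
    rw [forall_fin_add (P := fun i => ∀ i', |combE j m (a, b) i - combE j m (a, b) i'| ≤ δ)]
    rw [forall_fin_add (P := fun i : Fin (j+m) => ∀ t : Fin m, (i:ℕ) < j → |combE j m (a, b) i - v t| ≤ δ)]
    simp only [combE_castAdd, combE_natAdd]
    have hsplit2 : ∀ z : ℝ, (∀ i', |z - combE j m (a, b) i'| ≤ δ) ↔
        ((∀ t : Fin j, |z - a t| ≤ δ) ∧ (∀ t : Fin m, |z - b t| ≤ δ)) := by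
      intro z
      rw [forall_fin_add (P := fun i' => |z - combE j m (a, b) i'| ≤ δ)]
      simp only [combE_castAdd, combE_natAdd]
    simp only [hsplit2]
    have hlt : ∀ t : Fin j, ((Fin.castAdd m t : Fin (j+m)) : ℕ) < j := fun t => t.isLt
    have hnlt : ∀ t : Fin m, ¬ (((Fin.natAdd j t : Fin (j+m)) : ℕ) < j) := by
      intro t
      simp [Fin.natAdd]
    constructor
    · rintro ⟨⟨ha1, hb1⟩, ⟨hpa, hpb⟩, hv1, ⟨hav, _⟩, hvv⟩
      refine ⟨⟨fun i => ?_, fun i i' => (hpa i).1 i'⟩, ?_, ?_⟩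
      · have := abs_le.1 (ha1 i); exact ⟨by linarith [this.1], by linarith [this.2]⟩
      · rw [good_minmax_iff]
        refine ⟨fun t => ⟨?_, fun i => ?_⟩, fun t t' => (hpb t).2 t'⟩
        · have := abs_le.1 (hb1 t); exact ⟨by linarith [this.1], by linarith [this.2]⟩
        · rw [abs_sub_comm]; exact (hpa i).2 t
      · rw [good_minmax_iff]
        refine ⟨fun t => ⟨?_, fun i => ?_⟩, fun t t' => hvv t t'⟩
        · have := abs_le.1 (hv1 t); exact ⟨by linarith [this.1], by linarith [this.2]⟩
        · rw [abs_sub_comm]; exact hav i t (hlt i)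
    · rintro ⟨⟨ha1, hpa⟩, hgb, hgv⟩
      rw [good_minmax_iff] at hgb hgv
      obtain ⟨hb1, hpb⟩ := hgb
      obtain ⟨hv1, hpv⟩ := hgv
      refine ⟨⟨fun t => abs_le.2 ⟨by linarith [(ha1 t).1], by linarith [(ha1 t).2]⟩,
          fun t => abs_le.2 ⟨by linarith [(hb1 t).1.1], by linarith [(hb1 t).1.2]⟩⟩,
        ⟨fun i => ⟨fun t => hpa i t, fun t => ?_⟩,
         fun t => ⟨fun i => (hb1 t).2 i, fun t' => hpb t t'⟩⟩,
        fun t => abs_le.2 ⟨by linarith [(hv1 t).1.1], by linarith [(hv1 t).1.2]⟩,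
        ⟨fun t s _ => ?_, fun t s h => absurd h (hnlt t)⟩,
        fun t t' => hpv t t'⟩
      · rw [abs_sub_comm]; exact (hb1 t).2 i
      · rw [abs_sub_comm]; exact (hv1 s).2 t
  rw [hpre]
  have := volume_SGen_K2 δ hδ m hm j 0 0 le_rfl (by simpa using hδ)
  simpa using this

/-- the boxed region for the 1-d problem -/
def R1 (n rr m : ℕ) : Set ((Fin (n+1) → ℝ) × (Fin m → ℝ)) :=
  {p | (∀ i, -(1/2:ℝ) ≤ p.1 i ∧ p.1 i ≤ 1/2) ∧ (∀ t, -(1/2:ℝ) ≤ p.2 t ∧ p.2 t ≤ 1/2) ∧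
       (∀ i i', |p.1 i - p.1 i'| ≤ δ) ∧
       (∀ (i : Fin (n+1)) (t : Fin m), (i:ℕ) < rr → |p.1 i - p.2 t| ≤ δ) ∧
       (∀ t t', |p.2 t - p.2 t'| ≤ δ)}

lemma measurableSet_R1 (n rr m : ℕ) : MeasurableSet (R1 δ n rr m) := by
  have hu : ∀ i : Fin (n+1), Measurable (fun p : (Fin (n+1) → ℝ) × (Fin m → ℝ) => p.1 i) :=
    fun i => (measurable_pi_apply i).comp measurable_fst
  have hv : ∀ t : Fin m, Measurable (fun p : (Fin (n+1) → ℝ) × (Fin m → ℝ) => p.2 t) :=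
    fun t => (measurable_pi_apply t).comp measurable_snd
  have h : R1 δ n rr m =
      (⋂ i, ({p : (Fin (n+1) → ℝ) × (Fin m → ℝ) | -(1/2:ℝ) ≤ p.1 i} ∩
             {p | p.1 i ≤ 1/2})) ∩
      ((⋂ t, ({p : (Fin (n+1) → ℝ) × (Fin m → ℝ) | -(1/2:ℝ) ≤ p.2 t} ∩
             {p | p.2 t ≤ 1/2})) ∩
       ((⋂ i, ⋂ i', {p : (Fin (n+1) → ℝ) × (Fin m → ℝ) | |p.1 i - p.1 i'| ≤ δ}) ∩
        ((⋂ i : Fin (n+1), ⋂ t : Fin m,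
            {p : (Fin (n+1) → ℝ) × (Fin m → ℝ) | (i:ℕ) < rr → |p.1 i - p.2 t| ≤ δ}) ∩
         (⋂ t, ⋂ t', {p : (Fin (n+1) → ℝ) × (Fin m → ℝ) | |p.2 t - p.2 t'| ≤ δ})))) := by
    ext p; simp [R1, forall_and]
  rw [h]
  refine (MeasurableSet.iInter fun i => (measurableSet_le measurable_const (hu i)).inter
      (measurableSet_le (hu i) measurable_const)).inter
    ((MeasurableSet.iInter fun t => (measurableSet_le measurable_const (hv t)).inter
      (measurableSet_le (hv t) measurable_const)).inter
    ((MeasurableSet.iInter fun i => MeasurableSet.iInter fun i' =>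
      measurableSet_le ((hu i).sub (hu i')).abs measurable_const).inter
    ((MeasurableSet.iInter fun i => MeasurableSet.iInter fun t => ?_).inter
    (MeasurableSet.iInter fun t => MeasurableSet.iInter fun t' =>
      measurableSet_le ((hv t).sub (hv t')).abs measurable_const))))
  by_cases hij : (i:ℕ) < rr
  · simp only [hij, true_implies]
    exact measurableSet_le ((hu i).sub (hv t)).abs measurable_const
  · simp only [hij, false_implies, setOf_true]
    exact MeasurableSet.univ

lemma R1_bounds (hδ0 : 0 < δ) (hδ1 : δ < 1/4) (j m : ℕ) (hm : 1 ≤ m) (n rr : ℕ)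
    (hn : n = j + m) (hrr : rr = j + 1) :
    ENNReal.ofReal (1-2*δ) * ENNReal.ofReal (psim δ m j 0) ≤ volume (R1 δ n rr m) ∧
      volume (R1 δ n rr m) ≤ ENNReal.ofReal (psim δ m j 0) := by
  subst hn
  subst hrr
  have hδ : (0:ℝ) ≤ δ := le_of_lt hδ0
  classical
  -- peeling map
  set F : ℝ × ((Fin (j+m) → ℝ) × (Fin m → ℝ)) → (Fin (j+m+1) → ℝ) × (Fin m → ℝ) :=
    fun q => (Fin.cons q.1 q.2.1, q.2.2) with hF
  set e := MeasurableEquiv.piFinSuccAbove (fun _ : Fin (j+m+1) => ℝ) 0 with he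
  have hcons : ∀ (w : ℝ) (u : Fin (j+m) → ℝ), e.symm (w, u) = Fin.cons w u := by
    intro w u
    funext i
    refine Fin.cases ?_ (fun i => ?_) i
    · simp [he, MeasurableEquiv.piFinSuccAbove, Fin.insertNth_apply_same]
    · rw [show i.succ = (0 : Fin (j+m+1)).succAbove i from (Fin.zero_succAbove i).symm]
      simp [he, MeasurableEquiv.piFinSuccAbove, Fin.insertNth_apply_succAbove]
  have mp1 : MeasurePreserving (⇑e.symm) volume volume :=
    (volume_preserving_piFinSuccAbove (fun _ : Fin (j+m+1) => ℝ) 0).symm e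
  have mpF : MeasurePreserving F volume volume := by
    have h : F = (Prod.map (⇑e.symm) (id : (Fin m → ℝ) → (Fin m → ℝ))) ∘
        (⇑(MeasurableEquiv.prodAssoc.symm :
          ℝ × ((Fin (j+m) → ℝ) × (Fin m → ℝ)) ≃ᵐ (ℝ × (Fin (j+m) → ℝ)) × (Fin m → ℝ))) := by
      funext q
      obtain ⟨w, u, p⟩ := q
      show (Fin.cons w u, p) = (e.symm (w, u), id p)
      rw [hcons]
      rfl
    rw [h]
    exact (mp1.prod (MeasurePreserving.id _)).comp
      ((volume_preserving_prodAssoc).symm MeasurableEquiv.prodAssoc)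
  have hvol : volume (R1 δ (j+m) (j+1) m) =
      ∫⁻ w, volume (Prod.mk w ⁻¹' (F ⁻¹' (R1 δ (j+m) (j+1) m))) := by
    rw [← mpF.measure_preimage (measurableSet_R1 δ (j+m) (j+1) m).nullMeasurableSet,
      Measure.volume_eq_prod, Measure.prod_apply (mpF.measurable (measurableSet_R1 δ (j+m) (j+1) m))]
  -- pointwise slice analysis
  have hmem : ∀ (w : ℝ) (p : (Fin (j+m) → ℝ) × (Fin m → ℝ)),
      (w, p) ∈ F ⁻¹' (R1 δ (j+m) (j+1) m) ↔
        ((-(1/2:ℝ) ≤ w ∧ w ≤ 1/2) ∧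
         (∀ i, -(1/2:ℝ) ≤ p.1 i ∧ p.1 i ≤ 1/2) ∧
         (∀ t, -(1/2:ℝ) ≤ p.2 t ∧ p.2 t ≤ 1/2) ∧
         (∀ i, |p.1 i - w| ≤ δ) ∧
         (∀ i i', |p.1 i - p.1 i'| ≤ δ) ∧
         (∀ (i : Fin (j+m)) (t : Fin m), (i:ℕ) < j → |p.1 i - p.2 t| ≤ δ) ∧
         (∀ t, |w - p.2 t| ≤ δ) ∧
         (∀ t t', |p.2 t - p.2 t'| ≤ δ)) := by
    intro w p
    obtain ⟨u, v⟩ := p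
    simp only [hF, R1, mem_preimage, mem_setOf_eq, Fin.forall_fin_succ, Fin.cons_zero,
      Fin.cons_succ, Fin.val_zero, Fin.val_succ]
    constructor
    · rintro ⟨⟨hw, hu⟩, hv, ⟨⟨-, hwu⟩, huu⟩, ⟨hwv, huv⟩, hvv⟩
      refine ⟨hw, hu, hv, fun i => (huu i).1, fun i i' => (huu i).2 i',
        fun i t hij => huv i t (by omega), fun t => hwv t (by omega), hvv⟩
    · rintro ⟨hw, hu, hv, huw, huu, huv, hwv, hvv⟩
      refine ⟨⟨hw, hu⟩, hv, ⟨⟨?_, fun i => by rw [abs_sub_comm]; exact huw i⟩,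
        fun i => ⟨huw i, fun i' => huu i i'⟩⟩,
        ⟨fun t _ => hwv t, fun i t hij => huv i t (by omega)⟩, hvv⟩
      simpa using hδ
  -- translation
  have hshift : ∀ w : ℝ, MeasurePreserving
      (fun p : (Fin (j+m) → ℝ) × (Fin m → ℝ) => (p.1 + (fun _ => w), p.2 + (fun _ => w)))
      volume volume :=
    fun w => (measurePreserving_add_right volume _).prod (measurePreserving_add_right volume _)
  have hslice_eq : ∀ w : ℝ,
      (fun p : (Fin (j+m) → ℝ) × (Fin m → ℝ) => (p.1 + (fun _ => w), p.2 + (fun _ => w))) ⁻¹'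
        (Prod.mk w ⁻¹' (F ⁻¹' (R1 δ (j+m) (j+1) m))) =
      {p : (Fin (j+m) → ℝ) × (Fin m → ℝ) | ((-(1/2:ℝ) ≤ w ∧ w ≤ 1/2) ∧
         (∀ i, -(1/2:ℝ) ≤ p.1 i + w ∧ p.1 i + w ≤ 1/2) ∧
         (∀ t, -(1/2:ℝ) ≤ p.2 t + w ∧ p.2 t + w ≤ 1/2)) ∧ p ∈ R0 δ j m} := by
    intro w
    ext ⟨u, v⟩
    rw [mem_preimage, mem_preimage, hmem]
    simp only [R0, mem_setOf_eq, Pi.add_apply, add_sub_cancel_right]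
    constructor
    · rintro ⟨hw, hu, hv, huw, huu, huv, hwv, hvv⟩
      have e1 : ∀ i i', (u i + w) - (u i' + w) = u i - u i' := by intro i i'; ring
      have e2 : ∀ i t, (u i + w) - (v t + w) = u i - v t := by intro i t; ring
      have e3 : ∀ t t', (v t + w) - (v t' + w) = v t - v t' := by intro t t'; ring
      refine ⟨⟨hw, hu, hv⟩, fun i => huw i, fun i i' => by rw [← e1]; exact huu i i',
        fun t => ?_, fun i t hij => by rw [← e2]; exact huv i t hij,
        fun t t' => by rw [← e3]; exact hvv t t'⟩
      · have := hwv t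
        rw [show w - (v t + w) = -(v t) from by ring] at this
        rwa [abs_neg] at this
    · rintro ⟨⟨hw, hu, hv⟩, hu1, huu, hv1, huv, hvv⟩
      have e1 : ∀ i i', (u i + w) - (u i' + w) = u i - u i' := by intro i i'; ring
      have e2 : ∀ i t, (u i + w) - (v t + w) = u i - v t := by intro i t; ring
      have e3 : ∀ t t', (v t + w) - (v t' + w) = v t - v t' := by intro t t'; ring
      refine ⟨hw, hu, hv, fun i => hu1 i, fun i i' => by rw [e1]; exact huu i i',
        fun i t hij => by rw [e2]; exact huv i t hij,
        fun t => ?_, fun t t' => by rw [e3]; exact hvv t t'⟩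
      · rw [show w - (v t + w) = -(v t) from by ring, abs_neg]
        exact hv1 t
  have hub : ∀ w : ℝ, volume (Prod.mk w ⁻¹' (F ⁻¹' (R1 δ (j+m) (j+1) m)))
      ≤ ENNReal.ofReal (psim δ m j 0) := by
    intro w
    rw [← (hshift w).measure_preimage
      ((measurable_prodMk_left ((mpF.measurable (measurableSet_R1 δ (j+m) (j+1) m)))).nullMeasurableSet),
      hslice_eq w, ← volume_R0 δ hδ j m hm]
    apply measure_mono
    intro p hp
    exact hp.2
  have hlb : ∀ w : ℝ, w ∈ Icc (-(1/2-δ)) (1/2-δ) →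
      volume (Prod.mk w ⁻¹' (F ⁻¹' (R1 δ (j+m) (j+1) m))) = ENNReal.ofReal (psim δ m j 0) := by
    intro w hwin
    rw [← (hshift w).measure_preimage
      ((measurable_prodMk_left ((mpF.measurable (measurableSet_R1 δ (j+m) (j+1) m)))).nullMeasurableSet),
      hslice_eq w, ← volume_R0 δ hδ j m hm]
    congr 1
    ext ⟨u, v⟩
    simp only [mem_setOf_eq]
    constructor
    · rintro ⟨-, hp⟩; exact hp
    · intro hp
      have hp2 := hp
      simp only [R0, mem_setOf_eq] at hp2
      obtain ⟨hu1, -, hv1, -, -⟩ := hp2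
      rcases hwin with ⟨hw1, hw2⟩
      refine ⟨⟨⟨by linarith, by linarith⟩, fun i => ?_, fun t => ?_⟩, hp⟩
      · have := abs_le.1 (hu1 i)
        constructor <;> linarith [this.1, this.2]
      · have := abs_le.1 (hv1 t)
        constructor <;> linarith [this.1, this.2]
  constructor
  · -- lower bound
    rw [hvol]
    have hmono : (Icc (-(1/2-δ)) (1/2-δ)).indicator
        (fun _ => ENNReal.ofReal (psim δ m j 0)) ≤
        fun w => volume (Prod.mk w ⁻¹' (F ⁻¹' (R1 δ (j+m) (j+1) m))) := by
      intro w
      dsimp only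
      by_cases hw : w ∈ Icc (-(1/2-δ)) (1/2-δ)
      · rw [indicator_of_mem hw, hlb w hw]
      · rw [indicator_of_notMem hw]
        exact zero_le
    calc ENNReal.ofReal (1-2*δ) * ENNReal.ofReal (psim δ m j 0)
        = ∫⁻ w, (Icc (-(1/2-δ)) (1/2-δ)).indicator
            (fun _ => ENNReal.ofReal (psim δ m j 0)) w := by
          rw [lintegral_indicator measurableSet_Icc, setLIntegral_const,
            Real.volume_Icc, show (1/2-δ) - (-(1/2-δ)) = 1-2*δ from by ring, mul_comm]
      _ ≤ _ := lintegral_mono hmono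
  · -- upper bound
    rw [hvol]
    have hmono : (fun w => volume (Prod.mk w ⁻¹' (F ⁻¹' (R1 δ (j+m) (j+1) m)))) ≤
        (Icc (-(1/2:ℝ)) (1/2)).indicator (fun _ => ENNReal.ofReal (psim δ m j 0)) := by
      intro w
      dsimp only
      by_cases hw : w ∈ Icc (-(1/2:ℝ)) (1/2)
      · rw [indicator_of_mem hw]
        exact hub w
      · rw [indicator_of_notMem hw]
        have : Prod.mk w ⁻¹' (F ⁻¹' (R1 δ (j+m) (j+1) m)) = ∅ := by
          ext p
          rw [mem_preimage, hmem]
          simp only [mem_empty_iff_false, iff_false]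
          rw [mem_Icc] at hw
          tauto
        rw [this]
        simp
    calc ∫⁻ w, volume (Prod.mk w ⁻¹' (F ⁻¹' (R1 δ (j+m) (j+1) m)))
        ≤ ∫⁻ w, (Icc (-(1/2:ℝ)) (1/2)).indicator
            (fun _ => ENNReal.ofReal (psim δ m j 0)) w := lintegral_mono hmono
      _ = ENNReal.ofReal (psim δ m j 0) := by
          rw [lintegral_indicator measurableSet_Icc, setLIntegral_const,
            Real.volume_Icc, show (1/2:ℝ) - (-(1/2)) = 1 from by ring]
          simp

section Transpose

variable (ι κ : Type*) [Fintype ι] [Fintype κ]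

/-- uncurrying as a measurable equiv -/
def mUncurry : (ι → κ → ℝ) ≃ᵐ ((ι × κ) → ℝ) where
  toEquiv := (Equiv.curry ι κ ℝ).symm
  measurable_toFun := by
    apply measurable_pi_iff.2
    intro p
    exact (measurable_pi_apply p.2).comp (measurable_pi_apply p.1)
  measurable_invFun := by
    apply measurable_pi_iff.2
    intro i
    apply measurable_pi_iff.2
    intro jc
    exact measurable_pi_apply (i, jc)

lemma mUncurry_mp : MeasurePreserving (⇑(mUncurry ι κ)) volume volume := by
  refine ⟨(mUncurry ι κ).measurable, ?_⟩
  have h : Measure.map (⇑(mUncurry ι κ)) volume = Measure.pi (fun _ : ι × κ => volume) := by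
    refine (Measure.pi_eq fun s hs => ?_).symm
    rw [MeasurableEquiv.map_apply]
    have hpre : ⇑(mUncurry ι κ) ⁻¹' (Set.univ.pi s)
        = Set.univ.pi (fun i => Set.univ.pi (fun jc => s (i, jc))) := by
      ext f
      simp only [mUncurry, MeasurableEquiv.coe_mk, Equiv.curry, Equiv.coe_fn_symm_mk,
        Set.mem_pi, mem_univ, true_implies, Prod.forall, Function.uncurry, mem_preimage]
    rw [hpre, volume_pi_pi (fun i : ι => Set.univ.pi fun jc : κ => s (i, jc))]
    have : ∀ i, volume (Set.univ.pi (fun jc => s (i, jc))) = ∏ jc, volume (s (i, jc)) :=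
      fun i => volume_pi_pi (fun jc : κ => s (i, jc))
    rw [Finset.prod_congr rfl (fun i _ => this i)]
    exact (Fintype.prod_prod_type (fun p : ι × κ => volume (s p))).symm
  exact h

/-- transposition as a measurable equiv -/
def transposeE : (ι → κ → ℝ) ≃ᵐ (κ → ι → ℝ) :=
  (mUncurry ι κ).trans ((MeasurableEquiv.arrowCongr' (Equiv.prodComm ι κ)
    (MeasurableEquiv.refl ℝ)).trans (mUncurry κ ι).symm)

lemma transposeE_apply (f : ι → κ → ℝ) (jc : κ) (i : ι) :
    transposeE ι κ f jc i = f i jc := rfl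

lemma transposeE_mp : MeasurePreserving (⇑(transposeE ι κ)) volume volume := by
  have h1 := mUncurry_mp ι κ
  have h2 := volume_preserving_arrowCongr' (Equiv.prodComm ι κ)
      (MeasurableEquiv.refl ℝ) (MeasurePreserving.id volume)
  have h3 := (mUncurry_mp κ ι).symm (mUncurry κ ι)
  have h : ⇑(transposeE ι κ) = ⇑(mUncurry κ ι).symm ∘
      (⇑(MeasurableEquiv.arrowCongr' (Equiv.prodComm ι κ) (MeasurableEquiv.refl ℝ)) ∘
        ⇑(mUncurry ι κ)) := rfl
  rw [h]
  exact h3.comp (h2.comp h1)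

end Transpose

/-- the big rearrangement map -/
def Wmap (n1 n2 d : ℕ) :
    (Fin d → ((Fin n1 → ℝ) × (Fin n2 → ℝ))) →
      ((Fin n1 → Fin d → ℝ) × (Fin n2 → Fin d → ℝ)) :=
  fun g => (fun i jc => (g jc).1 i, fun t jc => (g jc).2 t)

lemma Wmap_mp (n1 n2 d : ℕ) : MeasurePreserving (Wmap n1 n2 d) volume volume := by
  have h : Wmap n1 n2 d = (Prod.map (⇑(transposeE (Fin d) (Fin n1)))
      (⇑(transposeE (Fin d) (Fin n2)))) ∘
      ⇑(MeasurableEquiv.arrowProdEquivProdArrow (Fin n1 → ℝ) (Fin n2 → ℝ) (Fin d)) := rfl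
  rw [h]
  exact ((transposeE_mp (Fin d) (Fin n1)).prod (transposeE_mp (Fin d) (Fin n2))).comp
    (volume_measurePreserving_arrowProdEquivProdArrow _ _ _)

lemma psim_final (hm : 1 ≤ m) (j : ℕ) :
    psim δ m j 0 = δ^(2*m+j) * (2*(((j:ℝ)+(m:ℝ)+1)+1)*(m:ℝ)/((j:ℝ)+2) + ((j:ℝ)+1)) := by
  rw [psim, psi_zero_eval, psiA_value δ m j hm]

lemma closeP_range_iff {n d : ℕ} (hδ : 0 ≤ δ) (y : Fin n → Fin d → ℝ) :
    closeP δ (Set.range y) ↔ ∀ (i i' : Fin n) (jc : Fin d), |y i jc - y i' jc| ≤ δ := by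
  constructor
  · intro h i i' jc
    have h2 := h (y i) ⟨i, rfl⟩ (y i') ⟨i', rfl⟩
    rw [pi_norm_le_iff_of_nonneg hδ] at h2
    have h3 := h2 jc
    rwa [Pi.sub_apply, Real.norm_eq_abs] at h3
  · rintro h a ⟨i, rfl⟩ b ⟨i', rfl⟩
    rw [pi_norm_le_iff_of_nonneg hδ]
    intro jc
    rw [Pi.sub_apply, Real.norm_eq_abs]
    exact h i i' jc

lemma closeP_union_iff {n nz d : ℕ} (hδ : 0 ≤ δ) (r : ℕ) (y : Fin n → Fin d → ℝ)
    (z : Fin nz → Fin d → ℝ) :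
    closeP δ ((y '' {i : Fin n | (i:ℕ) < r}) ∪ Set.range z) ↔
      ((∀ i i' : Fin n, (i:ℕ) < r → (i':ℕ) < r → ∀ jc, |y i jc - y i' jc| ≤ δ) ∧
       (∀ (i : Fin n) (t : Fin nz), (i:ℕ) < r → ∀ jc, |y i jc - z t jc| ≤ δ) ∧
       (∀ t t' : Fin nz, ∀ jc, |z t jc - z t' jc| ≤ δ)) := by
  have habs : ∀ (a b : Fin d → ℝ), ‖a - b‖ ≤ δ ↔ ∀ jc, |a jc - b jc| ≤ δ := by
    intro a b
    rw [pi_norm_le_iff_of_nonneg hδ]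
    constructor
    · intro h jc; have := h jc; rwa [Pi.sub_apply, Real.norm_eq_abs] at this
    · intro h jc; rw [Pi.sub_apply, Real.norm_eq_abs]; exact h jc
  constructor
  · intro h
    refine ⟨fun i i' hi hi' jc => ?_, fun i t hi jc => ?_, fun t t' jc => ?_⟩
    · exact (habs _ _).1 (h (y i) (Or.inl ⟨i, hi, rfl⟩) (y i') (Or.inl ⟨i', hi', rfl⟩)) jc
    · exact (habs _ _).1 (h (y i) (Or.inl ⟨i, hi, rfl⟩) (z t) (Or.inr ⟨t, rfl⟩)) jc
    · exact (habs _ _).1 (h (z t) (Or.inr ⟨t, rfl⟩) (z t') (Or.inr ⟨t', rfl⟩)) jc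
  · rintro ⟨hyy, hyz, hzz⟩ a ha b hb
    rcases ha with ⟨i, hi, rfl⟩ | ⟨t, rfl⟩ <;> rcases hb with ⟨i', hi', rfl⟩ | ⟨t', rfl⟩
    · exact (habs _ _).2 (hyy i i' hi hi')
    · exact (habs _ _).2 (hyz i t' hi)
    · refine (habs _ _).2 (fun jc => ?_)
      rw [abs_sub_comm]
      exact hyz i' t hi' jc
    · exact (habs _ _).2 (hzz t t')

end Stmt9


open Stmt9

/-- For all integers `d ≥ 1`, `k ≥ 1`, `1 ≤ r ≤ k` and every
`δ ∈ (0, 1/4)`, the integral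
`I_r := ∫_{W^{2k+2−r}} h_δ(y_0,…,y_k) · h_δ(y_0,…,y_{r−1},z_0,…,z_{k−r}) dy dz`
over `W = [−1/2,1/2]^d ⊂ ℝ^d` satisfies
`(1−2δ)^d · δ^{d(2k+1−r)} · (2(k+2)(k+1−r)/(r+1) + r)^d ≤ I_r
  ≤ δ^{d(2k+1−r)} · (2(k+2)(k+1−r)/(r+1) + r)^d`. -/
theorem stmt9 (d k r : ℕ) (hd : 1 ≤ d) (hk : 1 ≤ k) (hr : 1 ≤ r) (hrk : r ≤ k)
    (δ : ℝ) (hδ : δ ∈ Set.Ioo (0 : ℝ) (1/4)) :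
    (1 - 2 * δ) ^ d * δ ^ (d * (2 * k + 1 - r)) *
        (2 * ((k : ℝ) + 2) * ((k : ℝ) + 1 - (r : ℝ)) / ((r : ℝ) + 1) + (r : ℝ)) ^ d ≤
      (∫ p in ((Set.univ.pi fun _ : Fin (k + 1) =>
                  (Set.univ.pi fun _ : Fin d => Set.Icc (-(1/2) : ℝ) (1/2))) ×ˢ
               (Set.univ.pi fun _ : Fin (k + 1 - r) =>
                  (Set.univ.pi fun _ : Fin d => Set.Icc (-(1/2) : ℝ) (1/2)))),
        ind (closeP δ (Set.range p.1)) *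
        ind (closeP δ ((p.1 '' {i : Fin (k + 1) | (i : ℕ) < r}) ∪ Set.range p.2))) ∧
    (∫ p in ((Set.univ.pi fun _ : Fin (k + 1) =>
                (Set.univ.pi fun _ : Fin d => Set.Icc (-(1/2) : ℝ) (1/2))) ×ˢ
             (Set.univ.pi fun _ : Fin (k + 1 - r) =>
                (Set.univ.pi fun _ : Fin d => Set.Icc (-(1/2) : ℝ) (1/2)))),
      ind (closeP δ (Set.range p.1)) *
      ind (closeP δ ((p.1 '' {i : Fin (k + 1) | (i : ℕ) < r}) ∪ Set.range p.2))) ≤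
      δ ^ (d * (2 * k + 1 - r)) *
        (2 * ((k : ℝ) + 2) * ((k : ℝ) + 1 - (r : ℝ)) / ((r : ℝ) + 1) + (r : ℝ)) ^ d := by
  obtain ⟨hδ0, hδ1⟩ := hδ
  have hδge : (0:ℝ) ≤ δ := le_of_lt hδ0
  set m := k + 1 - r with hmdef
  set j := r - 1 with hjdef
  have hm1 : 1 ≤ m := by omega
  have hn : k = j + m := by omega
  have hrr : r = j + 1 := by omega
  simp only [show (2 * k + 1 - r : ℕ) = 2*m + j from by omega]
  set BB := ((Set.univ.pi fun _ : Fin (k + 1) =>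
      (Set.univ.pi fun _ : Fin d => Set.Icc (-(1/2) : ℝ) (1/2))) ×ˢ
    (Set.univ.pi fun _ : Fin m =>
      (Set.univ.pi fun _ : Fin d => Set.Icc (-(1/2) : ℝ) (1/2)))) with hBB
  set SS := {p : (Fin (k+1) → Fin d → ℝ) × (Fin m → Fin d → ℝ) |
    closeP δ (Set.range p.1) ∧
      closeP δ ((p.1 '' {i : Fin (k+1) | (i : ℕ) < r}) ∪ Set.range p.2)} with hSSdef
  -- measurability
  have hev1 : ∀ (i : Fin (k+1)) (jc : Fin d),
      Measurable (fun p : (Fin (k+1) → Fin d → ℝ) × (Fin m → Fin d → ℝ) => p.1 i jc) :=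
    fun i jc => (measurable_pi_apply jc).comp ((measurable_pi_apply i).comp measurable_fst)
  have hev2 : ∀ (t : Fin m) (jc : Fin d),
      Measurable (fun p : (Fin (k+1) → Fin d → ℝ) × (Fin m → Fin d → ℝ) => p.2 t jc) :=
    fun t jc => (measurable_pi_apply jc).comp ((measurable_pi_apply t).comp measurable_snd)
  have hSSeq : SS = (⋂ (i : Fin (k+1)), ⋂ (i' : Fin (k+1)), ⋂ (jc : Fin d),
        {p : (Fin (k+1) → Fin d → ℝ) × (Fin m → Fin d → ℝ) | |p.1 i jc - p.1 i' jc| ≤ δ}) ∩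
      ((⋂ (i : Fin (k+1)), ⋂ (t : Fin m), ⋂ (jc : Fin d),
        {p : (Fin (k+1) → Fin d → ℝ) × (Fin m → Fin d → ℝ) |
          (i:ℕ) < r → |p.1 i jc - p.2 t jc| ≤ δ}) ∩
       (⋂ (t : Fin m), ⋂ (t' : Fin m), ⋂ (jc : Fin d),
        {p : (Fin (k+1) → Fin d → ℝ) × (Fin m → Fin d → ℝ) | |p.2 t jc - p.2 t' jc| ≤ δ})) := by
    ext p
    simp only [hSSdef, mem_setOf_eq, mem_inter_iff, mem_iInter]
    rw [closeP_range_iff δ hδge, closeP_union_iff δ hδge]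
    constructor
    · rintro ⟨h1, _, h3, h4⟩
      exact ⟨fun i i' jc => h1 i i' jc,
        ⟨fun i t jc hi => h3 i t hi jc, fun t t' jc => h4 t t' jc⟩⟩
    · rintro ⟨h1, h2, h3⟩
      exact ⟨fun i i' jc => h1 i i' jc,
        ⟨fun i i' hi hi' jc => h1 i i' jc, fun i t hi jc => h2 i t jc hi,
          fun t t' jc => h3 t t' jc⟩⟩
  have hSmeas : MeasurableSet SS := by
    rw [hSSeq]
    refine (MeasurableSet.iInter fun i => MeasurableSet.iInter fun i' =>
        MeasurableSet.iInter fun jc =>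
        measurableSet_le ((hev1 i jc).sub (hev1 i' jc)).abs measurable_const).inter
      ((MeasurableSet.iInter fun i => MeasurableSet.iInter fun t =>
        MeasurableSet.iInter fun jc => ?_).inter
      (MeasurableSet.iInter fun t => MeasurableSet.iInter fun t' =>
        MeasurableSet.iInter fun jc =>
        measurableSet_le ((hev2 t jc).sub (hev2 t' jc)).abs measurable_const))
    by_cases hi : (i:ℕ) < r
    · simp only [hi, true_implies]
      exact measurableSet_le ((hev1 i jc).sub (hev2 t jc)).abs measurable_const
    · simp only [hi, false_implies, setOf_true]
      exact MeasurableSet.univ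
  have hBmeas : MeasurableSet BB :=
    (MeasurableSet.univ_pi fun _ => MeasurableSet.univ_pi fun _ => measurableSet_Icc).prod
      (MeasurableSet.univ_pi fun _ => MeasurableSet.univ_pi fun _ => measurableSet_Icc)
  -- the key integral identity
  have hkey : (∫ p in BB, ind (closeP δ (Set.range p.1)) *
      ind (closeP δ ((p.1 '' {i : Fin (k+1) | (i : ℕ) < r}) ∪ Set.range p.2)))
      = (volume (SS ∩ BB)).toReal := by
    have hint : ∀ p : (Fin (k+1) → Fin d → ℝ) × (Fin m → Fin d → ℝ),
        ind (closeP δ (Set.range p.1)) *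
          ind (closeP δ ((p.1 '' {i : Fin (k+1) | (i : ℕ) < r}) ∪ Set.range p.2))
          = SS.indicator (fun _ => (1:ℝ)) p := by
      intro p
      by_cases h1 : closeP δ (Set.range p.1) <;>
        by_cases h2 : closeP δ ((p.1 '' {i : Fin (k+1) | (i : ℕ) < r}) ∪ Set.range p.2) <;>
        simp [ind, h1, h2, hSSdef, Set.indicator_apply, mem_setOf_eq]
    calc (∫ p in BB, ind (closeP δ (Set.range p.1)) *
        ind (closeP δ ((p.1 '' {i : Fin (k+1) | (i : ℕ) < r}) ∪ Set.range p.2)))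
        = ∫ p in BB, SS.indicator (fun _ => (1:ℝ)) p :=
          setIntegral_congr_fun hBmeas (fun p _ => hint p)
      _ = ∫ p in SS, (1:ℝ) ∂(volume.restrict BB) := integral_indicator hSmeas
      _ = ((volume.restrict BB) SS).toReal • (1:ℝ) := setIntegral_const 1
      _ = (volume (SS ∩ BB)).toReal := by
          rw [Measure.restrict_apply hSmeas, smul_eq_mul, mul_one]
  -- identify with a product of copies of R1
  have hWpre : Wmap (k+1) m d ⁻¹' (SS ∩ BB)
      = Set.univ.pi (fun _ : Fin d => R1 δ k r m) := by
    ext g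
    simp only [Wmap, mem_preimage, mem_inter_iff, hSSdef, mem_setOf_eq, hBB, Set.mem_prod,
      Set.mem_univ_pi, Set.mem_Icc, R1]
    rw [closeP_range_iff δ hδge, closeP_union_iff δ hδge]
    constructor
    · rintro ⟨⟨hP, hQ⟩, hB1, hB2⟩ jc
      exact ⟨fun i => hB1 i jc, fun t => hB2 t jc, fun i i' => hP i i' jc,
        fun i t hi => hQ.2.1 i t hi jc, fun t t' => hQ.2.2 t t' jc⟩
    · intro h
      exact ⟨⟨fun i i' jc => (h jc).2.2.1 i i',
        ⟨fun i i' hi hi' jc => (h jc).2.2.1 i i',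
         fun i t hi jc => (h jc).2.2.2.1 i t hi,
         fun t t' jc => (h jc).2.2.2.2 t t'⟩⟩,
        fun i jc => (h jc).1 i, fun t jc => (h jc).2.1 t⟩
  have hSB : volume (SS ∩ BB) = volume (R1 δ k r m) ^ d := by
    rw [← (Wmap_mp (k+1) m d).measure_preimage (hSmeas.inter hBmeas).nullMeasurableSet, hWpre,
      volume_pi_pi]
    simp
  obtain ⟨hlow, hup⟩ := R1_bounds δ hδ0 hδ1 j m hm1 k r hn hrr
  have hψpos : 0 ≤ psim δ m j 0 := psim_nonneg δ hδge m hm1 j 0 ⟨le_rfl, hδge⟩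
  have h2δ : (0:ℝ) ≤ 1 - 2*δ := by linarith
  have hupv : volume (SS ∩ BB) ≤ ENNReal.ofReal ((psim δ m j 0)^d) := by
    rw [hSB, ENNReal.ofReal_pow hψpos]
    exact pow_le_pow_left' hup d
  have hlowv : ENNReal.ofReal (((1-2*δ) * psim δ m j 0)^d) ≤ volume (SS ∩ BB) := by
    rw [hSB, ENNReal.ofReal_pow (by positivity), ENNReal.ofReal_mul h2δ]
    exact pow_le_pow_left' hlow d
  have hne : volume (SS ∩ BB) ≠ ⊤ := (lt_of_le_of_lt hupv ENNReal.ofReal_lt_top).ne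
  have hIub : (volume (SS ∩ BB)).toReal ≤ (psim δ m j 0)^d :=
    ENNReal.toReal_le_of_le_ofReal (by positivity) hupv
  have hIlb : ((1-2*δ) * psim δ m j 0)^d ≤ (volume (SS ∩ BB)).toReal := by
    have h := ENNReal.toReal_mono hne hlowv
    rwa [ENNReal.toReal_ofReal (by positivity)] at h
  -- cast identities
  have hjr : ((j:ℕ):ℝ) = (r:ℝ) - 1 := by
    rw [hjdef, Nat.cast_sub hr]
    norm_num
  have hmr : ((m:ℕ):ℝ) = (k:ℝ) + 1 - (r:ℝ) := by
    rw [hmdef, Nat.cast_sub (by omega : r ≤ k + 1)]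
    push_cast
    ring
  have hkr : (k:ℝ) = (j:ℝ) + (m:ℝ) := by
    have := congrArg (Nat.cast : ℕ → ℝ) hn
    push_cast at this
    exact this
  have hψval : psim δ m j 0
      = δ^(2*m+j) * (2 * ((k : ℝ) + 2) * ((k : ℝ) + 1 - (r : ℝ)) / ((r : ℝ) + 1) + (r : ℝ)) := by
    rw [psim_final δ hm1 j]
    congr 1
    rw [hjr, hmr]
    have hden : (r:ℝ) - 1 + 2 ≠ 0 := by
      have h1r : (1:ℝ) ≤ (r:ℝ) := by exact_mod_cast hr
      nlinarith
    have hden2 : (r:ℝ) + 1 ≠ 0 := by positivity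
    field_simp
    ring
  constructor
  · rw [hkey]
    refine le_trans (le_of_eq ?_) hIlb
    rw [hψval, show δ^(d*(2*m+j)) = (δ^(2*m+j))^d from pow_mul' δ d (2*m+j), mul_pow, mul_pow]
    ring
  · rw [hkey]
    refine le_trans hIub (le_of_eq ?_)
    rw [hψval, show δ^(d*(2*m+j)) = (δ^(2*m+j))^d from pow_mul' δ d (2*m+j), mul_pow]
end
end

section
/- For all integers d ≥ 1, k ≥ 1 and r with 0 ≤ r ≤ k, ∫_{(B)^{2k−r}} h_1(y_0,…,y_{k−1}) · h_1(y_0,…,y_{r−1}, z_0,…,z_{k−r−1}) dy dz ≤ ( (k+1)(k−r+1) )^d, where B := [−1,1]^d ⊂ ℝ^d. -/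
open MeasureTheory

namespace S10
open Set

lemma ind_nonneg (p : Prop) : 0 ≤ ind p := by unfold ind; split <;> norm_num

lemma ind_le_one (p : Prop) : ind p ≤ 1 := by unfold ind; split <;> norm_num

lemma ind_true {p : Prop} (h : p) : ind p = 1 := by simp [ind, h]

lemma ind_false {p : Prop} (h : ¬ p) : ind p = 0 := by simp [ind, h]

lemma ind_mono {p q : Prop} (h : p → q) : ind p ≤ ind q := by
  unfold ind
  split
  · rw [if_pos (h (by assumption))]
  · split <;> norm_num

lemma ind_eq_indicator {α : Type*} (P : α → Prop) :
    (fun x => ind (P x)) = Set.indicator {x | P x} (fun _ => (1:ℝ)) := by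
  funext x
  by_cases h : P x <;> simp [ind, h, Set.indicator]

lemma measurable_ind {α : Type*} [MeasurableSpace α] {P : α → Prop}
    (h : MeasurableSet {x | P x}) : Measurable fun x => ind (P x) := by
  rw [ind_eq_indicator]
  exact measurable_const.indicator h

lemma ind_forall {ι : Type*} [Fintype ι] (P : ι → Prop) :
    ind (∀ i, P i) = ∏ i, ind (P i) := by
  by_cases h : ∀ i, P i
  · rw [ind_true h, Finset.prod_eq_one fun i _ => ind_true (h i)]
  · push_neg at h
    obtain ⟨i, hi⟩ := h
    rw [ind_false (by push_neg; exact ⟨i, hi⟩),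
      Finset.prod_eq_zero (Finset.mem_univ i) (ind_false hi)]


/-- one-dimensional pair kernel -/
noncomputable def ψ (s t : ℝ) : ℝ := ind (t ∈ Icc s (s+1) ∩ Icc (-1:ℝ) 1)

noncomputable def c (s : ℝ) : ℝ := (volume (Icc s (s+1) ∩ Icc (-1:ℝ) 1)).toReal

lemma measurable_psi : Measurable fun p : ℝ × ℝ => ψ p.1 p.2 := by
  apply measurable_ind
  have : {p : ℝ × ℝ | p.2 ∈ Icc p.1 (p.1+1) ∩ Icc (-1:ℝ) 1}
      = {p : ℝ × ℝ | p.1 ≤ p.2} ∩ {p | p.2 ≤ p.1 + 1} ∩ ({p | -1 ≤ p.2} ∩ {p | p.2 ≤ 1}) := by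
    ext p; simp [Set.mem_Icc, and_assoc]
  rw [this]
  exact (((measurableSet_le measurable_fst measurable_snd).inter
      (measurableSet_le measurable_snd (measurable_fst.add_const 1))).inter
    ((measurableSet_le measurable_const measurable_snd).inter
      (measurableSet_le measurable_snd measurable_const)))

lemma int_psi (s : ℝ) : ∫ t, ψ s t = c s := by
  have h : (fun t => ψ s t) = Set.indicator (Icc s (s+1) ∩ Icc (-1:ℝ) 1) (fun _ => (1:ℝ)) :=
    ind_eq_indicator _
  rw [h, integral_indicator_const (1:ℝ) (measurableSet_Icc.inter measurableSet_Icc)]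
  simp [c]
  rfl

lemma c_nonneg (s : ℝ) : 0 ≤ c s := ENNReal.toReal_nonneg

lemma c_le_one (s : ℝ) : c s ≤ 1 := by
  apply ENNReal.toReal_le_of_le_ofReal zero_le_one
  calc volume (Icc s (s+1) ∩ Icc (-1:ℝ) 1) ≤ volume (Icc s (s+1)) :=
        measure_mono Set.inter_subset_left
    _ = ENNReal.ofReal 1 := by rw [Real.volume_Icc]; norm_num

lemma c_le' (s : ℝ) : c s ≤ max (1 - s) 0 := by
  apply ENNReal.toReal_le_of_le_ofReal (le_max_right _ _)
  calc volume (Icc s (s+1) ∩ Icc (-1:ℝ) 1) ≤ volume (Icc s 1) := by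
        apply measure_mono
        rintro t ⟨⟨h1, _⟩, ⟨_, h4⟩⟩
        exact ⟨h1, h4⟩
    _ ≤ ENNReal.ofReal (max (1 - s) 0) := by
        rw [Real.volume_Icc]
        exact ENNReal.ofReal_le_ofReal (le_max_left _ _)

lemma psi_le_box (s t : ℝ) : ψ s t ≤ ind (t ∈ Icc (-1:ℝ) 1) := ind_mono fun h => h.2


lemma psi_nonneg (s t : ℝ) : 0 ≤ ψ s t := ind_nonneg _
lemma psi_le_one (s t : ℝ) : ψ s t ≤ 1 := ind_le_one _

/-- generic integrability helper -/
lemma integrable_of_le_indicator {α : Type*} [MeasureSpace α] {f : α → ℝ} {S : Set α}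
    (hm : AEStronglyMeasurable f volume) (hS : MeasurableSet S) (hvol : volume S ≠ ⊤)
    (h0 : ∀ x, 0 ≤ f x) (h1 : ∀ x, f x ≤ S.indicator (fun _ => 1) x) :
    Integrable f := by
  have hg : Integrable (S.indicator fun _ => (1:ℝ)) := by
    rw [integrable_indicator_iff hS]
    exact integrableOn_const hvol
  exact hg.mono' hm (ae_of_all _ fun x => by
    rw [Real.norm_eq_abs, abs_of_nonneg (h0 x)]; exact h1 x)

lemma volume_box_ne_top (n : ℕ) :
    volume (Set.pi (univ : Set (Fin n)) (fun _ => Icc (-1:ℝ) 1)) ≠ ⊤ := by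
  rw [volume_pi_pi]
  exact (ENNReal.prod_lt_top (fun i _ => by rw [Real.volume_Icc]; exact ENNReal.ofReal_lt_top)).ne

lemma measurable_G (m : ℕ) (i : Fin (m+1)) :
    Measurable fun x : Fin (m+1) → ℝ => ∏ j, ψ (x i) (x j) :=
  Finset.measurable_prod _ fun j _ => by
    have := measurable_psi.comp ((measurable_pi_apply i).prodMk (measurable_pi_apply j) :
      Measurable fun x : Fin (m+1) → ℝ => (x i, x j))
    simpa [Function.comp_def] using this

lemma integrable_G (m : ℕ) (i : Fin (m+1)) :
    Integrable fun x : Fin (m+1) → ℝ => ∏ j, ψ (x i) (x j) := by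
  refine integrable_of_le_indicator ((measurable_G m i).aestronglyMeasurable)
    (MeasurableSet.univ_pi fun _ => measurableSet_Icc) (volume_box_ne_top (m+1))
    (fun x => Finset.prod_nonneg fun j _ => psi_nonneg _ _) (fun x => ?_)
  by_cases hx : x ∈ Set.pi (univ : Set (Fin (m+1))) (fun _ => Icc (-1:ℝ) 1)
  · rw [Set.indicator_of_mem hx]
    exact Finset.prod_le_one (fun j _ => psi_nonneg _ _) (fun j _ => psi_le_one _ _)
  · rw [Set.indicator_of_notMem hx]
    rw [Set.mem_pi] at hx
    push_neg at hx
    obtain ⟨j, -, hj⟩ := hx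
    refine le_of_eq (Finset.prod_eq_zero (Finset.mem_univ j) (ind_false ?_))
    exact fun hmem => hj hmem.2

lemma pointwise_bound (m : ℕ) (x : Fin (m+1) → ℝ) :
    (∏ i, ind (x i ∈ Icc (-1:ℝ) 1)) * ind (∀ i j, |x i - x j| ≤ 1)
      ≤ ∑ i, ∏ j, ψ (x i) (x j) := by
  by_cases h : (∀ i, x i ∈ Icc (-1:ℝ) 1) ∧ (∀ i j, |x i - x j| ≤ 1)
  · obtain ⟨i₀, -, hmin⟩ := Finset.exists_min_image Finset.univ x Finset.univ_nonempty
    have h1 : ∏ j, ψ (x i₀) (x j) = 1 := Finset.prod_eq_one fun j _ => ind_true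
      ⟨⟨hmin j (Finset.mem_univ j), by
          have := abs_le.1 (h.2 i₀ j); linarith [this.1]⟩, h.1 j⟩
    calc (∏ i, ind (x i ∈ Icc (-1:ℝ) 1)) * ind (∀ i j, |x i - x j| ≤ 1) ≤ 1 :=
          mul_le_one₀ (Finset.prod_le_one (fun i _ => ind_nonneg _) (fun i _ => ind_le_one _))
            (ind_nonneg _) (ind_le_one _)
      _ ≤ ∑ i, ∏ j, ψ (x i) (x j) := by
          rw [← h1]
          exact Finset.single_le_sum (f := fun i => ∏ j, ψ (x i) (x j))
            (fun i _ => Finset.prod_nonneg fun j _ => psi_nonneg _ _) (Finset.mem_univ i₀)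
  · have h0 : (∏ i, ind (x i ∈ Icc (-1:ℝ) 1)) * ind (∀ i j, |x i - x j| ≤ 1) = 0 := by
      rw [not_and_or] at h
      rcases h with h | h
      · push_neg at h
        obtain ⟨i, hi⟩ := h
        rw [Finset.prod_eq_zero (Finset.mem_univ i) (ind_false hi), zero_mul]
      · rw [ind_false h, mul_zero]
    rw [h0]
    exact Finset.sum_nonneg fun i _ => Finset.prod_nonneg fun j _ => psi_nonneg _ _

lemma int_G (m : ℕ) (i : Fin (m+1)) :
    (∫ x : Fin (m+1) → ℝ, ∏ j, ψ (x i) (x j)) = ∫ s : ℝ, ψ s s * (c s)^m := by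
  have hmp := (volume_preserving_piFinSuccAbove (fun _ : Fin (m+1) => ℝ) i).symm
  rw [← hmp.integral_comp']
  have heq : ∀ z : ℝ × (Fin m → ℝ),
      (∏ j, ψ (((MeasurableEquiv.piFinSuccAbove (fun _ : Fin (m+1) => ℝ) i).symm z) i)
        (((MeasurableEquiv.piFinSuccAbove (fun _ : Fin (m+1) => ℝ) i).symm z) j))
      = ψ z.1 z.1 * ∏ j : Fin m, ψ z.1 (z.2 j) := by
    intro z
    rw [MeasurableEquiv.piFinSuccAbove_symm_apply]
    rw [Fin.prod_univ_succAbove _ i]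
    simp [Fin.insertNth_apply_same, Fin.insertNth_apply_succAbove]
  simp_rw [heq]
  have hint : Integrable (fun z : ℝ × (Fin m → ℝ) => ψ z.1 z.1 * ∏ j, ψ z.1 (z.2 j))
      (volume : Measure (ℝ × (Fin m → ℝ))) := by
    refine integrable_of_le_indicator
      (S := (Icc (-1:ℝ) 1) ×ˢ (Set.pi univ fun _ : Fin m => Icc (-1:ℝ) 1)) ?_
      (measurableSet_Icc.prod (MeasurableSet.univ_pi fun _ => measurableSet_Icc))
      ?_ (fun z => mul_nonneg (psi_nonneg _ _)
        (Finset.prod_nonneg fun j _ => psi_nonneg _ _)) (fun z => ?_)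
    · exact ((measurable_psi.comp (measurable_fst.prodMk measurable_fst)).mul
        (Finset.measurable_prod _ fun j _ => measurable_psi.comp
          (measurable_fst.prodMk ((measurable_pi_apply j).comp measurable_snd)))).aestronglyMeasurable
    · rw [Measure.volume_eq_prod, Measure.prod_prod]
      exact (ENNReal.mul_lt_top (by rw [Real.volume_Icc]; exact ENNReal.ofReal_lt_top)
        ((volume_box_ne_top m).lt_top)).ne
    · by_cases hz : z ∈ (Icc (-1:ℝ) 1) ×ˢ (Set.pi univ fun _ : Fin m => Icc (-1:ℝ) 1)
      · rw [Set.indicator_of_mem hz]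
        exact mul_le_one₀ (psi_le_one _ _)
          (Finset.prod_nonneg fun j _ => psi_nonneg _ _)
          (Finset.prod_le_one (fun j _ => psi_nonneg _ _) (fun j _ => psi_le_one _ _))
      · rw [Set.indicator_of_notMem hz]
        rw [Set.mem_prod] at hz
        push_neg at hz
        by_cases hz1 : z.1 ∈ Icc (-1:ℝ) 1
        · obtain ⟨j, -, hj⟩ := by
            have := hz hz1
            rw [Set.mem_pi] at this
            push_neg at this
            exact this
          refine le_of_eq ?_
          rw [Finset.prod_eq_zero (Finset.mem_univ j) (ind_false fun hmem => hj hmem.2),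
            mul_zero]
        · refine le_of_eq ?_
          rw [show ψ z.1 z.1 = 0 from ind_false fun hmem => hz1 hmem.2, zero_mul]
  rw [Measure.volume_eq_prod] at hint ⊢
  rw [integral_prod _ hint]
  congr 1
  funext s
  show (∫ y : Fin m → ℝ, ψ s s * ∏ j, ψ s (y j)) = ψ s s * c s ^ m
  rw [integral_const_mul]
  congr 1
  rw [volume_pi, MeasureTheory.integral_fintype_prod_eq_prod (f := fun (_ : Fin m) t => ψ s t)]
  simp [int_psi]

lemma int_sQ (m : ℕ) : (∫ s : ℝ, ψ s s * (c s)^m) ≤ 1 + 1/(m+1) := by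
  set h : ℝ → ℝ := fun s => (min 1 (max (1-s) 0)) ^ m with hh
  have hcont : Continuous h :=
    (continuous_const.min ((continuous_const.sub continuous_id).max continuous_const)).pow m
  have hind : (fun s => ind (s ∈ Icc (-1:ℝ) 1) * h s) = (Icc (-1:ℝ) 1).indicator h := by
    funext s
    by_cases hs : s ∈ Icc (-1:ℝ) 1
    · rw [ind_true hs, Set.indicator_of_mem hs, one_mul]
    · rw [ind_false hs, Set.indicator_of_notMem hs, zero_mul]
  have hint : Integrable ((Icc (-1:ℝ) 1).indicator h) := by
    rw [integrable_indicator_iff measurableSet_Icc]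
    exact hcont.integrableOn_Icc
  have step1 : (∫ s : ℝ, ψ s s * (c s)^m) ≤ ∫ s : ℝ, ind (s ∈ Icc (-1:ℝ) 1) * h s := by
    refine integral_mono_of_nonneg (ae_of_all _ fun s =>
      mul_nonneg (psi_nonneg _ _) (pow_nonneg (c_nonneg _) _)) (by rw [hind]; exact hint)
      (ae_of_all _ fun s => ?_)
    exact mul_le_mul (ind_mono fun hm => hm.2)
      (pow_le_pow_left₀ (c_nonneg s) (le_min (c_le_one s) (c_le' s)) m)
      (pow_nonneg (c_nonneg s) m) (ind_nonneg _)
  have step2 : (∫ s : ℝ, ind (s ∈ Icc (-1:ℝ) 1) * h s) = 1 + 1/(m+1) := by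
    rw [hind, integral_indicator measurableSet_Icc, MeasureTheory.integral_Icc_eq_integral_Ioc,
      ← intervalIntegral.integral_of_le (by norm_num : (-1:ℝ) ≤ 1)]
    rw [← intervalIntegral.integral_add_adjacent_intervals
      (hcont.intervalIntegrable (-1) 0) (hcont.intervalIntegrable 0 1)]
    have e1 : (∫ s in (-1:ℝ)..0, h s) = ∫ s in (-1:ℝ)..0, (1:ℝ) := by
      apply intervalIntegral.integral_congr
      intro s hs
      rw [Set.uIcc_of_le (by norm_num : (-1:ℝ) ≤ 0)] at hs
      have hs0 : s ≤ 0 := hs.2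
      have : max (1-s) 0 = 1 - s := max_eq_left (by linarith)
      rw [hh]
      simp only
      rw [this, min_eq_left (by linarith), one_pow]
    have e2 : (∫ s in (0:ℝ)..1, h s) = ∫ s in (0:ℝ)..1, (1-s)^m := by
      apply intervalIntegral.integral_congr
      intro s hs
      rw [Set.uIcc_of_le (by norm_num : (0:ℝ) ≤ 1)] at hs
      have : max (1-s) 0 = 1 - s := max_eq_left (by linarith [hs.2])
      rw [hh]
      simp only
      rw [this, min_eq_right (by linarith [hs.1])]
    have e3 : (∫ s in (0:ℝ)..1, (1-s)^m) = 1/(m+1) := by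
      have := intervalIntegral.integral_comp_sub_left (a := 0) (b := 1) (fun u => u^m) 1
      rw [this]
      norm_num [integral_pow]
    rw [e1, e2, e3, intervalIntegral.integral_const]
    norm_num
  linarith

lemma key1_raw (n : ℕ) :
    (∫ x : Fin n → ℝ, (∏ i, ind (x i ∈ Icc (-1:ℝ) 1)) * ind (∀ i j, |x i - x j| ≤ 1))
      ≤ n + 1 := by
  cases n with
  | zero =>
      have : ∀ x : Fin 0 → ℝ,
          (∏ i, ind (x i ∈ Icc (-1:ℝ) 1)) * ind (∀ i j : Fin 0, |x i - x j| ≤ 1) = 1 := by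
        intro x
        rw [Finset.univ_eq_empty, Finset.prod_empty, one_mul, ind_true (fun i => i.elim0)]
      simp_rw [this]
      rw [integral_const]
      simp [volume_pi, Measure.pi_univ, Measure.real]
  | succ m =>
      have step1 : (∫ x : Fin (m+1) → ℝ,
          (∏ i, ind (x i ∈ Icc (-1:ℝ) 1)) * ind (∀ i j, |x i - x j| ≤ 1))
          ≤ ∫ x : Fin (m+1) → ℝ, ∑ i, ∏ j, ψ (x i) (x j) := by
        refine integral_mono_of_nonneg (ae_of_all _ fun x =>
          mul_nonneg (Finset.prod_nonneg fun i _ => ind_nonneg _) (ind_nonneg _))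
          (integrable_finset_sum _ fun i _ => integrable_G m i)
          (ae_of_all _ fun x => pointwise_bound m x)
      have step2 : (∫ x : Fin (m+1) → ℝ, ∑ i, ∏ j, ψ (x i) (x j))
          = ∑ i : Fin (m+1), ∫ x : Fin (m+1) → ℝ, ∏ j, ψ (x i) (x j) :=
        integral_finset_sum _ fun i _ => integrable_G m i
      have step3 : (∑ i : Fin (m+1), ∫ x : Fin (m+1) → ℝ, ∏ j, ψ (x i) (x j))
          ≤ ((m:ℝ)+1) * (1 + 1/((m:ℝ)+1)) := by
        calc (∑ i : Fin (m+1), ∫ x : Fin (m+1) → ℝ, ∏ j, ψ (x i) (x j))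
            = ∑ _i : Fin (m+1), ∫ s : ℝ, ψ s s * (c s)^m :=
              Finset.sum_congr rfl fun i _ => int_G m i
          _ = ((m:ℝ)+1) * ∫ s : ℝ, ψ s s * (c s)^m := by
              rw [Finset.sum_const, Finset.card_univ, Fintype.card_fin, nsmul_eq_mul]
              push_cast
              ring
          _ ≤ ((m:ℝ)+1) * (1 + 1/((m:ℝ)+1)) := by
              apply mul_le_mul_of_nonneg_left ?_ (by positivity)
              have := int_sQ m
              push_cast at this ⊢
              exact this
      have harith : ((m:ℝ)+1) * (1 + 1/((m:ℝ)+1)) = ((m+1 : ℕ) : ℝ) + 1 := by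
        have hne : ((m:ℝ)+1) ≠ 0 := by positivity
        push_cast
        field_simp
      calc (∫ x : Fin (m+1) → ℝ,
            (∏ i, ind (x i ∈ Icc (-1:ℝ) 1)) * ind (∀ i j, |x i - x j| ≤ 1))
          ≤ ∫ x : Fin (m+1) → ℝ, ∑ i, ∏ j, ψ (x i) (x j) := step1
        _ = ∑ i : Fin (m+1), ∫ x : Fin (m+1) → ℝ, ∏ j, ψ (x i) (x j) := step2
        _ ≤ ((m:ℝ)+1) * (1 + 1/((m:ℝ)+1)) := step3
        _ = ((m+1 : ℕ) : ℝ) + 1 := harith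


lemma ind_congr {p q : Prop} (h : p ↔ q) : ind p = ind q := by
  by_cases hp : p
  · rw [ind_true hp, ind_true (h.1 hp)]
  · rw [ind_false hp, ind_false (fun hq => hp (h.2 hq))]

lemma ind_and (p q : Prop) : ind (p ∧ q) = ind p * ind q := by
  by_cases hp : p <;> by_cases hq : q <;>
    simp [ind_true, ind_false, hp, hq, ind_true (And.intro hp hq)]

noncomputable def f1 (n : ℕ) (x : Fin n → ℝ) : ℝ :=
  (∏ i, ind (x i ∈ Icc (-1:ℝ) 1)) * ind (∀ i j, |x i - x j| ≤ 1)

noncomputable def fd (d n : ℕ) (x : Fin n → Fin d → ℝ) : ℝ :=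
  (∏ i, ind (∀ c, x i c ∈ Icc (-1:ℝ) 1)) * ind (∀ i j, ∀ c, |x i c - x j c| ≤ 1)

lemma key1 (n : ℕ) : (∫ x : Fin n → ℝ, f1 n x) ≤ n + 1 := by
  unfold f1
  exact key1_raw n

lemma fd_nonneg (d n : ℕ) (x : Fin n → Fin d → ℝ) : 0 ≤ fd d n x :=
  mul_nonneg (Finset.prod_nonneg fun i _ => ind_nonneg _) (ind_nonneg _)

lemma measurePreserving_piCongrRight {ι : Type*} [Fintype ι] {α β : ι → Type*}
    [∀ i, MeasurableSpace (α i)] [∀ i, MeasurableSpace (β i)]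
    (e : ∀ i, α i ≃ᵐ β i) {μ : ∀ i, Measure (α i)} {ν : ∀ i, Measure (β i)}
    [∀ i, SigmaFinite (μ i)] [∀ i, SigmaFinite (ν i)]
    (h : ∀ i, MeasurePreserving (e i) (μ i) (ν i)) :
    MeasurePreserving (MeasurableEquiv.piCongrRight e) (Measure.pi μ) (Measure.pi ν) := by
  refine ⟨(MeasurableEquiv.piCongrRight e).measurable, ?_⟩
  symm
  apply Measure.pi_eq
  intro s hs
  rw [MeasurableEquiv.map_apply]
  have hpre : (MeasurableEquiv.piCongrRight e) ⁻¹' (Set.pi univ s)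
      = Set.pi univ (fun i => (e i) ⁻¹' (s i)) := by
    ext x
    simp [MeasurableEquiv.piCongrRight, Equiv.piCongrRight, Set.mem_pi]
  rw [hpre, Measure.pi_pi]
  exact Finset.prod_congr rfl fun i _ => (h i).measure_preimage (hs i).nullMeasurableSet

lemma fd_zero (n : ℕ) (x : Fin n → Fin 0 → ℝ) : fd 0 n x = 1 := by
  unfold fd
  rw [ind_true (fun i j c => c.elim0), mul_one]
  exact Finset.prod_eq_one fun i _ => ind_true (fun c => c.elim0)

lemma fd_split (d n : ℕ) (a : Fin n → ℝ) (y : Fin n → Fin d → ℝ) :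
    fd (d+1) n (fun i => (Fin.cons (a i) (y i) : Fin (d+1) → ℝ)) = f1 n a * fd d n y := by
  unfold fd f1
  have h1 : ∀ i : Fin n,
      ind (∀ c : Fin (d+1), (Fin.cons (a i) (y i) : Fin (d+1) → ℝ) c ∈ Icc (-1:ℝ) 1)
        = ind (a i ∈ Icc (-1:ℝ) 1) * ind (∀ c : Fin d, y i c ∈ Icc (-1:ℝ) 1) := by
    intro i
    rw [← ind_and]
    apply ind_congr
    rw [Fin.forall_fin_succ]
    simp [Fin.cons_zero, Fin.cons_succ]
  have h2 : ind (∀ i j : Fin n, ∀ c : Fin (d+1),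
        |(Fin.cons (a i) (y i) : Fin (d+1) → ℝ) c - (Fin.cons (a j) (y j) : Fin (d+1) → ℝ) c| ≤ 1)
      = ind (∀ i j : Fin n, |a i - a j| ≤ 1)
        * ind (∀ i j : Fin n, ∀ c : Fin d, |y i c - y j c| ≤ 1) := by
    rw [← ind_and]
    apply ind_congr
    constructor
    · intro h
      exact ⟨fun i j => by simpa using h i j 0,
        fun i j c => by simpa [Fin.cons_succ] using h i j c.succ⟩
    · rintro ⟨hA, hB⟩ i j c
      refine Fin.cases ?_ ?_ c
      · simpa using hA i j
      · intro c'
        simpa [Fin.cons_succ] using hB i j c'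
  simp_rw [h1]
  rw [Finset.prod_mul_distrib, h2]
  ring

lemma keyd (d n : ℕ) : (∫ x : Fin n → Fin d → ℝ, fd d n x) ≤ ((n:ℝ)+1)^d := by
  induction d with
  | zero =>
      simp_rw [fd_zero]
      rw [integral_const]
      simp [volume_pi, Measure.pi_univ, Measure.real]
  | succ d ih =>
      set E1 : (Fin (d+1) → ℝ) ≃ᵐ ℝ × (Fin d → ℝ) :=
        MeasurableEquiv.piFinSuccAbove (fun _ : Fin (d+1) => ℝ) 0 with hE1def
      have hE1 : MeasurePreserving E1 volume volume :=
        volume_preserving_piFinSuccAbove (fun _ : Fin (d+1) => ℝ) 0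
      set E2 : (Fin n → Fin (d+1) → ℝ) ≃ᵐ (Fin n → ℝ × (Fin d → ℝ)) :=
        MeasurableEquiv.piCongrRight (fun _ => E1) with hE2def
      have hE2 : MeasurePreserving E2 volume volume := by
        rw [(volume_pi : (volume : Measure (Fin n → Fin (d+1) → ℝ)) = _),
          (volume_pi : (volume : Measure (Fin n → ℝ × (Fin d → ℝ))) = _)]
        exact measurePreserving_piCongrRight (fun _ => E1) (fun _ => hE1)
      set E3 : (Fin n → ℝ × (Fin d → ℝ)) ≃ᵐ (Fin n → ℝ) × (Fin n → Fin d → ℝ) :=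
        MeasurableEquiv.arrowProdEquivProdArrow ℝ (Fin d → ℝ) (Fin n) with hE3def
      have hE3 : MeasurePreserving E3 volume volume :=
        volume_measurePreserving_arrowProdEquivProdArrow ℝ (Fin d → ℝ) (Fin n)
      set E : (Fin n → Fin (d+1) → ℝ) ≃ᵐ (Fin n → ℝ) × (Fin n → Fin d → ℝ) :=
        E2.trans E3 with hEdef
      have hE : MeasurePreserving E volume volume := by
        have := hE3.comp hE2
        rwa [show (E3 : _ → _) ∘ (E2 : _ → _) = (E : _ → _) from rfl] at this
      have hsymm : ∀ z : (Fin n → ℝ) × (Fin n → Fin d → ℝ),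
          E.symm z = fun i => Fin.cons (z.1 i) (z.2 i) := by
        intro z
        funext i
        show E2.symm (E3.symm z) i = Fin.cons (z.1 i) (z.2 i)
        have h3 : E3.symm z = fun i => (z.1 i, z.2 i) := by
          funext i
          simp [hE3def, MeasurableEquiv.arrowProdEquivProdArrow,
            Equiv.arrowProdEquivProdArrow]
        rw [h3]
        have h2 : ∀ v : Fin n → ℝ × (Fin d → ℝ), E2.symm v i = E1.symm (v i) := by
          intro v
          simp [hE2def, MeasurableEquiv.piCongrRight, Equiv.piCongrRight]
        rw [h2]
        show E1.symm (z.1 i, z.2 i) = Fin.cons (z.1 i) (z.2 i)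
        rw [hE1def]
        rw [MeasurableEquiv.piFinSuccAbove_symm_apply]
        exact Fin.insertNth_zero' _ _
      have trans : (∫ x : Fin n → Fin (d+1) → ℝ, fd (d+1) n x)
          = ∫ z : (Fin n → ℝ) × (Fin n → Fin d → ℝ), f1 n z.1 * fd d n z.2 := by
        rw [← (MeasurePreserving.symm E hE).integral_comp']
        congr 1
        funext z
        rw [hsymm z, fd_split]
      rw [trans, Measure.volume_eq_prod, integral_prod_mul]
      have h1 := key1 n
      have h2 := ih
      have hnn1 : (0:ℝ) ≤ ∫ x : Fin n → ℝ, f1 n x :=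
        integral_nonneg fun x => mul_nonneg (Finset.prod_nonneg fun i _ => ind_nonneg _)
          (ind_nonneg _)
      calc (∫ x : Fin n → ℝ, f1 n x) * ∫ y : Fin n → Fin d → ℝ, fd d n y
          ≤ ((n:ℝ)+1) * ((n:ℝ)+1)^d := by
            apply mul_le_mul h1 h2 (integral_nonneg (fd_nonneg d n)) (by positivity)
        _ = ((n:ℝ)+1)^(d+1) := by ring


lemma fd_eq_ind (d n : ℕ) (x : Fin n → Fin d → ℝ) :
    fd d n x = ind ((∀ i c, x i c ∈ Icc (-1:ℝ) 1) ∧ (∀ i j c, |x i c - x j c| ≤ 1)) := by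
  unfold fd
  rw [ind_and]
  congr 1
  exact (ind_forall _).symm

lemma meas_app {n d : ℕ} (i : Fin n) (c : Fin d) :
    Measurable fun x : Fin n → Fin d → ℝ => x i c :=
  (measurable_pi_apply i).eval

lemma measurable_fd (d n : ℕ) : Measurable (fd d n) := by
  have : fd d n = fun x => ind ((∀ i c, x i c ∈ Icc (-1:ℝ) 1)
      ∧ (∀ i j c, |x i c - x j c| ≤ 1)) := funext (fd_eq_ind d n)
  rw [this]
  apply measurable_ind
  rw [Set.setOf_and]
  apply MeasurableSet.inter
  · rw [Set.setOf_forall]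
    refine MeasurableSet.iInter fun i => ?_
    rw [Set.setOf_forall]
    refine MeasurableSet.iInter fun c => ?_
    have : {x : Fin n → Fin d → ℝ | x i c ∈ Icc (-1:ℝ) 1}
        = (fun x : Fin n → Fin d → ℝ => x i c) ⁻¹' (Icc (-1:ℝ) 1) := rfl
    rw [this]
    exact (meas_app i c) measurableSet_Icc
  · rw [Set.setOf_forall]
    refine MeasurableSet.iInter fun i => ?_
    rw [Set.setOf_forall]
    refine MeasurableSet.iInter fun j => ?_
    rw [Set.setOf_forall]
    refine MeasurableSet.iInter fun c => ?_
    exact measurableSet_le (((meas_app i c).sub (meas_app j c)).abs) measurable_const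

lemma volume_bigbox_ne_top (d n : ℕ) :
    volume (Set.pi (univ : Set (Fin n))
      (fun _ => Set.pi (univ : Set (Fin d)) (fun _ => Icc (-1:ℝ) 1))) ≠ ⊤ := by
  rw [volume_pi_pi]
  exact (ENNReal.prod_lt_top fun i _ => (volume_box_ne_top d).lt_top).ne

lemma integrable_fd (d n : ℕ) : Integrable (fd d n) := by
  refine integrable_of_le_indicator (S := Set.pi (univ : Set (Fin n))
      (fun _ => Set.pi (univ : Set (Fin d)) (fun _ => Icc (-1:ℝ) 1)))
    (measurable_fd d n).aestronglyMeasurable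
    (MeasurableSet.univ_pi fun _ => MeasurableSet.univ_pi fun _ => measurableSet_Icc)
    (volume_bigbox_ne_top d n) (fd_nonneg d n) (fun x => ?_)
  by_cases hx : x ∈ Set.pi (univ : Set (Fin n))
      (fun _ => Set.pi (univ : Set (Fin d)) (fun _ => Icc (-1:ℝ) 1))
  · rw [Set.indicator_of_mem hx]
    exact mul_le_one₀
      (Finset.prod_le_one (fun i _ => ind_nonneg _) (fun i _ => ind_le_one _))
      (ind_nonneg _) (ind_le_one _)
  · rw [Set.indicator_of_notMem hx]
    rw [Set.mem_pi] at hx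
    push_neg at hx
    obtain ⟨i, -, hi⟩ := hx
    refine le_of_eq ?_
    unfold fd
    have h0 : ind (∀ c, x i c ∈ Icc (-1:ℝ) 1) = 0 :=
      ind_false (fun hall => hi fun c _ => hall c)
    rw [Finset.prod_eq_zero (Finset.mem_univ i) h0, zero_mul]


end S10

open S10 Set in
/-- For all integers `d ≥ 1`, `k ≥ 1` and `0 ≤ r ≤ k`,
`∫_{(B)^{2k−r}} h_1(y_0,…,y_{k−1}) · h_1(y_0,…,y_{r−1},z_0,…,z_{k−r−1}) dy dz
  ≤ ((k+1)(k−r+1))^d`, where `B = [−1,1]^d ⊂ ℝ^d` with the `ℓ^∞` norm. -/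
theorem stmt10 (d k r : ℕ) (hd : 1 ≤ d) (hk : 1 ≤ k) (hr : r ≤ k) :
    (∫ p in ((Set.univ.pi fun _ : Fin k =>
                (Set.univ.pi fun _ : Fin d => Set.Icc (-1 : ℝ) 1)) ×ˢ
             (Set.univ.pi fun _ : Fin (k - r) =>
                (Set.univ.pi fun _ : Fin d => Set.Icc (-1 : ℝ) 1))),
      ind (closeP 1 (Set.range p.1)) *
      ind (closeP 1 ((p.1 '' {i : Fin k | (i : ℕ) < r}) ∪ Set.range p.2)))
      ≤ (((k : ℝ) + 1) * ((k : ℝ) - (r : ℝ) + 1)) ^ d := by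
  set A : Set (Fin k → Fin d → ℝ) :=
    Set.univ.pi fun _ => Set.univ.pi fun _ => Icc (-1:ℝ) 1 with hAdef
  set B : Set (Fin (k-r) → Fin d → ℝ) :=
    Set.univ.pi fun _ => Set.univ.pi fun _ => Icc (-1:ℝ) 1 with hBdef
  have hA : MeasurableSet A :=
    MeasurableSet.univ_pi fun _ => MeasurableSet.univ_pi fun _ => measurableSet_Icc
  have hB : MeasurableSet B :=
    MeasurableSet.univ_pi fun _ => MeasurableSet.univ_pi fun _ => measurableSet_Icc
  rw [← integral_indicator (hA.prod hB)]
  have hle : ∀ p : (Fin k → Fin d → ℝ) × (Fin (k-r) → Fin d → ℝ),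
      (A ×ˢ B).indicator (fun p => ind (closeP 1 (Set.range p.1)) *
        ind (closeP 1 ((p.1 '' {i : Fin k | (i : ℕ) < r}) ∪ Set.range p.2))) p
      ≤ fd d k p.1 * fd d (k-r) p.2 := by
    intro p
    by_cases hp : p ∈ A ×ˢ B
    · rw [Set.indicator_of_mem hp]
      obtain ⟨hp1, hp2⟩ := hp
      have coord : ∀ (m : ℕ) (x : Fin m → Fin d → ℝ) (i j : Fin m), ‖x i - x j‖ ≤ 1 →
          ∀ c, |x i c - x j c| ≤ 1 := by
        intro m x i j hn c
        have := norm_le_pi_norm (x i - x j) c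
        rw [Real.norm_eq_abs] at this
        calc |x i c - x j c| = |(x i - x j) c| := by rw [Pi.sub_apply]
          _ ≤ ‖x i - x j‖ := this
          _ ≤ 1 := hn
      have b1 : ind (closeP 1 (Set.range p.1)) ≤ ind (∀ i j, ∀ c, |p.1 i c - p.1 j c| ≤ 1) :=
        ind_mono fun h i j => coord k p.1 i j (h (p.1 i) ⟨i, rfl⟩ (p.1 j) ⟨j, rfl⟩)
      have b2 : ind (closeP 1 ((p.1 '' {i : Fin k | (i : ℕ) < r}) ∪ Set.range p.2))
          ≤ ind (∀ i j, ∀ c, |p.2 i c - p.2 j c| ≤ 1) :=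
        ind_mono fun h i j => coord (k-r) p.2 i j
          (h (p.2 i) (Or.inr ⟨i, rfl⟩) (p.2 j) (Or.inr ⟨j, rfl⟩))
      have e1 : fd d k p.1 = ind (∀ i j, ∀ c, |p.1 i c - p.1 j c| ≤ 1) := by
        unfold fd
        rw [Finset.prod_eq_one (fun i _ => ind_true fun c =>
          (hp1 i (Set.mem_univ i)) c (Set.mem_univ c)), one_mul]
      have e2 : fd d (k-r) p.2 = ind (∀ i j, ∀ c, |p.2 i c - p.2 j c| ≤ 1) := by
        unfold fd
        rw [Finset.prod_eq_one (fun i _ => ind_true fun c =>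
          (hp2 i (Set.mem_univ i)) c (Set.mem_univ c)), one_mul]
      rw [e1, e2]
      exact mul_le_mul b1 b2 (ind_nonneg _) (ind_nonneg _)
    · rw [Set.indicator_of_notMem hp]
      exact mul_nonneg (fd_nonneg d k p.1) (fd_nonneg d (k-r) p.2)
  have hint : Integrable (fun p : (Fin k → Fin d → ℝ) × (Fin (k-r) → Fin d → ℝ) =>
      fd d k p.1 * fd d (k-r) p.2) := by
    rw [Measure.volume_eq_prod]
    exact (integrable_fd d k).mul_prod (integrable_fd d (k-r))
  have step1 := integral_mono_of_nonneg (ae_of_all _ fun p => Set.indicator_nonneg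
    (fun q _ => mul_nonneg (ind_nonneg _) (ind_nonneg _)) p) hint (ae_of_all _ hle)
  have step2 : (∫ p : (Fin k → Fin d → ℝ) × (Fin (k-r) → Fin d → ℝ),
      fd d k p.1 * fd d (k-r) p.2)
      = (∫ x : Fin k → Fin d → ℝ, fd d k x) * ∫ y : Fin (k-r) → Fin d → ℝ, fd d (k-r) y := by
    rw [Measure.volume_eq_prod, integral_prod_mul]
  have step3 : (∫ x : Fin k → Fin d → ℝ, fd d k x) * (∫ y : Fin (k-r) → Fin d → ℝ, fd d (k-r) y)
      ≤ ((k:ℝ)+1)^d * (((k-r : ℕ):ℝ)+1)^d := by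
    apply mul_le_mul (keyd d k) (keyd d (k-r))
      (integral_nonneg (fd_nonneg d (k-r))) (by positivity)
  have rhs : (((k : ℝ) + 1) * ((k : ℝ) - (r : ℝ) + 1)) ^ d
      = ((k:ℝ)+1)^d * (((k-r : ℕ):ℝ)+1)^d := by
    rw [mul_pow, Nat.cast_sub hr]
  rw [rhs]
  calc (∫ p : (Fin k → Fin d → ℝ) × (Fin (k-r) → Fin d → ℝ),
        (A ×ˢ B).indicator (fun p => ind (closeP 1 (Set.range p.1)) *
          ind (closeP 1 ((p.1 '' {i : Fin k | (i : ℕ) < r}) ∪ Set.range p.2))) p)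
      ≤ ∫ p : (Fin k → Fin d → ℝ) × (Fin (k-r) → Fin d → ℝ), fd d k p.1 * fd d (k-r) p.2 :=
        step1
    _ = _ := step2
    _ ≤ _ := step3
end
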